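/- arXiv:1109.5061 — 5 statements merged into one kernel-verified Lean document; each statement's English description precedes it below -/
import Mathlib

section
/- Let x = (x_0, w) be a possibly maximal μ-admissible pair, let σ be its associated permutation of {1,…,g}, let F = {i ∈ {1,…,g} : w(i) = i} and d = #F. Then, as an identity of integers, ℓ(x) = g(g+1)/2 + d − #{i ∈ {1,…,g} : σ(i) = i} − ℓ(σ) + 2·( A_σ + A_{σ⁻¹} + #{(i,f) ∈ {1,…,g} × F : i < f < σ(i)} ). -/
/-- A μ-admissible pair for `GSp_{2g}`: a permutation `w` of `{1,…,2g}`
(encoded as a permutation of `ℕ` fixing everything outside `[1, 2g]`)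
satisfying `w(2g+1−i) = 2g+1−w(i)`, together with a vector
`x_0 ∈ {0,1}^{2g}` (encoded as a function `ℕ → ℤ`, zero outside `[1, 2g]`)
with `x_0(i) + x_0(2g+1−i) = 1`, `x_0(i) = 0` when `w⁻¹(i) > i`
and `x_0(i) = 1` when `w⁻¹(i) < i`. -/
structure AdmPair (g : ℕ) where
  w : Equiv.Perm ℕ
  x0 : ℕ → ℤ
  w_fix : ∀ i : ℕ, i ∉ Finset.Icc 1 (2*g) → w i = i
  w_symm : ∀ i ∈ Finset.Icc 1 (2*g), w (2*g+1-i) = 2*g+1 - w i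
  x0_mem : ∀ i ∈ Finset.Icc 1 (2*g), x0 i = 0 ∨ x0 i = 1
  x0_out : ∀ i : ℕ, i ∉ Finset.Icc 1 (2*g) → x0 i = 0
  x0_sum : ∀ i ∈ Finset.Icc 1 (2*g), x0 i + x0 (2*g+1-i) = 1
  x0_gt : ∀ i ∈ Finset.Icc 1 (2*g), i < w.symm i → x0 i = 0
  x0_lt : ∀ i ∈ Finset.Icc 1 (2*g), w.symm i < i → x0 i = 1

namespace AdmPair

variable {g : ℕ}

/-- The length of a μ-admissible pair, by the Iwahori–Matsumoto formula. -/
def len (x : AdmPair g) : ℤ :=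
  (∑ i ∈ Finset.Icc 1 g, ∑ j ∈ Finset.Icc 1 g,
      if i < j then
        (if x.w.symm i < x.w.symm j then |x.x0 i - x.x0 j|
         else |x.x0 i - x.x0 j + 1|)
      else 0)
  + (∑ i ∈ Finset.Icc 1 g, ∑ j ∈ Finset.Icc 1 g,
      if i < j then
        (if x.w.symm i < x.w.symm (2*g+1-j) then |x.x0 i + x.x0 j - 1|
         else |x.x0 i + x.x0 j|)
      else 0)
  + (∑ i ∈ Finset.Icc 1 g,
      if x.w.symm i < x.w.symm (2*g+1-i) then |2 * x.x0 i - 1|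
      else |2 * x.x0 i|)

/-- The p-rank of a μ-admissible pair: the number of fixed points of `w`
in `{1,…,g}`. -/
def prank (x : AdmPair g) : ℕ :=
  ((Finset.Icc 1 g).filter (fun i => x.w i = i)).card

/-- `x` is possibly maximal if `w(i) = 2g+1−i` whenever `i ∈ {1,…,g}` and
`w(i) > g`. -/
def PossiblyMaximal (x : AdmPair g) : Prop :=
  ∀ i ∈ Finset.Icc 1 g, g < x.w i → x.w i = 2*g+1-i

end AdmPair

/-- `IsAssocPerm g x σ` : `σ` is the associated permutation of `{1,…,g}`
of the μ-admissible pair `x`, encoded as a permutation of `ℕ` fixing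
everything outside `[1, g]` and given on `[1, g]` by
`σ(i) = w(i)` if `w(i) ≤ g` and `σ(i) = 2g+1−w(i)` otherwise. -/
def IsAssocPerm (g : ℕ) (x : AdmPair g) (σ : Equiv.Perm ℕ) : Prop :=
  (∀ i : ℕ, i ∉ Finset.Icc 1 g → σ i = i) ∧
  (∀ i ∈ Finset.Icc 1 g, σ i = if x.w i ≤ g then x.w i else 2*g+1 - x.w i)

/-- `A_σ = #{(i,j) ∈ {1,…,g}² : i < j < σ(j) < σ(i)}`. -/
def permA (g : ℕ) (σ : Equiv.Perm ℕ) : ℕ :=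
  (((Finset.Icc 1 g) ×ˢ (Finset.Icc 1 g)).filter
    (fun p => p.1 < p.2 ∧ p.2 < σ p.2 ∧ σ p.2 < σ p.1)).card

/-- `B_σ = #{(i,j) ∈ {1,…,g}² : i < j = σ(j) < σ(i)}`. -/
def permB (g : ℕ) (σ : Equiv.Perm ℕ) : ℕ :=
  (((Finset.Icc 1 g) ×ˢ (Finset.Icc 1 g)).filter
    (fun p => p.1 < p.2 ∧ σ p.2 = p.2 ∧ p.2 < σ p.1)).card

/-- `C_σ = #{(i,j) ∈ {1,…,g}² : i < j < σ(i) < σ(j)}`. -/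
def permC (g : ℕ) (σ : Equiv.Perm ℕ) : ℕ :=
  (((Finset.Icc 1 g) ×ˢ (Finset.Icc 1 g)).filter
    (fun p => p.1 < p.2 ∧ p.2 < σ p.1 ∧ σ p.1 < σ p.2)).card

/-- The number of inversions of `σ` on `{1,…,g}` (its Coxeter length). -/
def permLen (g : ℕ) (σ : Equiv.Perm ℕ) : ℕ :=
  (((Finset.Icc 1 g) ×ˢ (Finset.Icc 1 g)).filter
    (fun p => p.1 < p.2 ∧ σ p.2 < σ p.1)).card

/-- The number of fixed points of `σ` in `{1,…,g}`. -/
def permFix (g : ℕ) (σ : Equiv.Perm ℕ) : ℕ :=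
  ((Finset.Icc 1 g).filter (fun i => σ i = i)).card

namespace LFA
open Finset

variable {g : ℕ}

lemma sum_comp_perm (σ : Equiv.Perm ℕ) (hfix : ∀ i : ℕ, i ∉ Finset.Icc 1 g → σ i = i)
    (F : ℕ → ℤ) : ∑ i ∈ Finset.Icc 1 g, F (σ i) = ∑ i ∈ Finset.Icc 1 g, F i := by
  apply Equiv.Perm.sum_comp
  intro a ha
  by_contra h
  exact ha (hfix a h)

lemma cross (σ : Equiv.Perm ℕ) (hfix : ∀ i : ℕ, i ∉ Finset.Icc 1 g → σ i = i)
    (f : ℕ) (hf : σ f = f) :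
    (∑ i ∈ Finset.Icc 1 g, if i < f ∧ f < σ i then (1:ℤ) else 0)
      = ∑ i ∈ Finset.Icc 1 g, if f < i ∧ σ i < f then (1:ℤ) else 0 := by
  have key : (∑ i ∈ Finset.Icc 1 g, if f < σ i then (1:ℤ) else 0)
      = ∑ i ∈ Finset.Icc 1 g, if f < i then (1:ℤ) else 0 :=
    sum_comp_perm σ hfix (fun k => if f < k then 1 else 0)
  have h1 : ∀ i ∈ Finset.Icc 1 g,
      (if i < f ∧ f < σ i then (1:ℤ) else 0)
        = (if f < σ i then (1:ℤ) else 0) - (if f < i ∧ f < σ i then 1 else 0) := by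
    intro i _
    rcases eq_or_ne i f with rfl | hne
    · simp [hf]
    · have hσ : σ i ≠ f := fun h => hne (σ.injective (by rw [h, hf]))
      split_ifs <;> omega
  have h2 : ∀ i ∈ Finset.Icc 1 g,
      (if f < i ∧ σ i < f then (1:ℤ) else 0)
        = (if f < i then (1:ℤ) else 0) - (if f < i ∧ f < σ i then 1 else 0) := by
    intro i _
    rcases eq_or_ne i f with rfl | hne
    · simp
    · have hσ : σ i ≠ f := fun h => hne (σ.injective (by rw [h, hf]))
      split_ifs <;> omega
  rw [Finset.sum_congr rfl h1, Finset.sum_congr rfl h2,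
      Finset.sum_sub_distrib, Finset.sum_sub_distrib, key]

lemma crossA (σ : Equiv.Perm ℕ) (hfix : ∀ i : ℕ, i ∉ Finset.Icc 1 g → σ i = i)
    (f : ℕ) (hf : σ f = f) :
    (∑ i ∈ Finset.Icc 1 g, if i < f ∧ f < σ.symm i then (1:ℤ) else 0)
      = ∑ i ∈ Finset.Icc 1 g, if i < f ∧ f < σ i then (1:ℤ) else 0 := by
  have h := sum_comp_perm σ hfix (fun k => if k < f ∧ f < σ.symm k then (1:ℤ) else 0)
  simp only [Equiv.symm_apply_apply] at h
  rw [← h, cross σ hfix f hf]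
  exact Finset.sum_congr rfl fun i _ => if_congr and_comm rfl rfl

lemma crossB (σ : Equiv.Perm ℕ) (hfix : ∀ i : ℕ, i ∉ Finset.Icc 1 g → σ i = i)
    (f : ℕ) (hf : σ f = f) :
    (∑ j ∈ Finset.Icc 1 g, if f < j ∧ σ.symm j < f then (1:ℤ) else 0)
      = ∑ j ∈ Finset.Icc 1 g, if f < j ∧ σ j < f then (1:ℤ) else 0 := by
  have h := sum_comp_perm σ hfix (fun k => if f < k ∧ σ.symm k < f then (1:ℤ) else 0)
  simp only [Equiv.symm_apply_apply] at h
  rw [← h, ← cross σ hfix f hf]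
  exact Finset.sum_congr rfl fun i _ => if_congr and_comm rfl rfl

lemma w_mem_Icc (x : AdmPair g) {i : ℕ} (hi : i ∈ Finset.Icc 1 (2*g)) :
    x.w i ∈ Finset.Icc 1 (2*g) := by
  by_contra h
  have h2 := x.w_fix _ h
  have h3 : x.w i = i := x.w.injective h2
  rw [h3] at h; exact h hi

lemma ws_mem_Icc (x : AdmPair g) {i : ℕ} (hi : i ∈ Finset.Icc 1 (2*g)) :
    x.w.symm i ∈ Finset.Icc 1 (2*g) := by
  by_contra h
  have h2 := x.w_fix _ h
  rw [Equiv.apply_symm_apply] at h2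
  exact h (h2 ▸ hi)

lemma ws_mirror (x : AdmPair g) {i : ℕ} (hi : i ∈ Finset.Icc 1 (2*g)) :
    x.w.symm (2*g+1-i) = 2*g+1 - x.w.symm i := by
  have hk := ws_mem_Icc x hi
  have h := x.w_symm _ hk
  rw [Equiv.apply_symm_apply] at h
  have h2 := congrArg x.w.symm h
  rw [Equiv.symm_apply_apply] at h2
  exact h2.symm

lemma dicho (x : AdmPair g) (hx : x.PossiblyMaximal) (σ : Equiv.Perm ℕ)
    (hσ : IsAssocPerm g x σ) {i : ℕ} (hi : i ∈ Finset.Icc 1 g) :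
    (x.w i ∈ Finset.Icc 1 g ∧ x.w.symm i ∈ Finset.Icc 1 g ∧ σ i = x.w i ∧ σ.symm i = x.w.symm i)
    ∨ (x.w i = 2*g+1-i ∧ x.w.symm i = 2*g+1-i ∧ σ i = i ∧ σ.symm i = i) := by
  have hi1 := Finset.mem_Icc.mp hi
  have hi2 : i ∈ Finset.Icc 1 (2*g) := Finset.mem_Icc.mpr (by omega)
  have hw := Finset.mem_Icc.mp (w_mem_Icc x hi2)
  have hws := Finset.mem_Icc.mp (ws_mem_Icc x hi2)
  have hσi := hσ.2 i hi
  by_cases hgt : g < x.w i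
  · right
    have hwi : x.w i = 2*g+1-i := hx i hi hgt
    have hsym := x.w_symm i hi2
    rw [hwi] at hsym
    have h1 : 2*g+1-(2*g+1-i) = i := by omega
    rw [h1] at hsym
    have hwsi : x.w.symm i = 2*g+1-i := by
      have h2 := congrArg x.w.symm hsym
      rw [Equiv.symm_apply_apply] at h2
      exact h2.symm
    have hσival : σ i = i := by
      rw [hσi, if_neg (by omega), hwi, h1]
    refine ⟨hwi, hwsi, hσival, ?_⟩
    have h2 := congrArg σ.symm hσival
    rw [Equiv.symm_apply_apply] at h2
    exact h2.symm
  · left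
    push_neg at hgt
    have hσival : σ i = x.w i := by rw [hσi, if_pos hgt]
    have hwsle : x.w.symm i ≤ g := by
      by_contra hk
      push_neg at hk
      set k := x.w.symm i with hkdef
      have hwk : x.w k = i := x.w.apply_symm_apply i
      have hk2 : k ∈ Finset.Icc 1 (2*g) := ws_mem_Icc x hi2
      have hkb := Finset.mem_Icc.mp hk2
      have hi' : (2*g+1-k) ∈ Finset.Icc 1 g := Finset.mem_Icc.mpr (by omega)
      have hwi' : x.w (2*g+1-k) = 2*g+1-i := by
        have := x.w_symm k hk2
        rw [hwk] at this; exact this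
      have hgt' : g < x.w (2*g+1-k) := by rw [hwi']; omega
      have hmax := hx _ hi' hgt'
      rw [hwi'] at hmax
      -- 2g+1-i = 2g+1-(2g+1-k)  = k
      have hik : i = 2*g+1-k := by omega
      -- so x.w (2g+1-i) = ... use w_symm at i

      have hws2 := x.w_symm i hi2
      -- x.w (2*g+1-i) = 2*g+1 - x.w i
      have : x.w (2*g+1-i) = i := by
        have h5 : 2*g+1-i = k := by omega
        rw [h5, hwk]
      rw [this] at hws2
      omega
    refine ⟨Finset.mem_Icc.mpr ⟨hw.1, hgt⟩, Finset.mem_Icc.mpr ⟨hws.1, hwsle⟩, hσival, ?_⟩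
    have hwsi : x.w.symm i ∈ Finset.Icc 1 g := Finset.mem_Icc.mpr ⟨hws.1, hwsle⟩
    have h6 := hσ.2 _ hwsi
    rw [Equiv.apply_symm_apply] at h6
    rw [if_pos hi1.2] at h6
    have h7 := congrArg σ.symm h6
    rw [Equiv.symm_apply_apply] at h7
    exact h7.symm

lemma sigma_mem (x : AdmPair g) (hx : x.PossiblyMaximal) (σ : Equiv.Perm ℕ)
    (hσ : IsAssocPerm g x σ) {i : ℕ} (hi : i ∈ Finset.Icc 1 g) : σ i ∈ Finset.Icc 1 g := by
  rcases dicho x hx σ hσ hi with ⟨h1, _, h3, _⟩ | ⟨_, _, h3, _⟩ <;> rw [h3]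
  · exact h1
  · exact hi

lemma sigma_symm_mem (x : AdmPair g) (hx : x.PossiblyMaximal) (σ : Equiv.Perm ℕ)
    (hσ : IsAssocPerm g x σ) {i : ℕ} (hi : i ∈ Finset.Icc 1 g) : σ.symm i ∈ Finset.Icc 1 g := by
  rcases dicho x hx σ hσ hi with ⟨_, h2, _, h4⟩ | ⟨_, _, _, h4⟩ <;> rw [h4]
  · exact h2
  · exact hi

end LFA
namespace LFA
open Finset

variable {g : ℕ}

lemma single_eq (hg : 1 ≤ g) (x : AdmPair g) (hx : x.PossiblyMaximal) (σ : Equiv.Perm ℕ)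
    (hσ : IsAssocPerm g x σ) {i : ℕ} (hi : i ∈ Finset.Icc 1 g) :
    (if x.w.symm i < x.w.symm (2*g+1-i) then |2 * x.x0 i - 1| else |2 * x.x0 i|)
      = if x.w i ≤ g then (1:ℤ) else 0 := by
  have hi1 := Finset.mem_Icc.mp hi
  have hi2 : i ∈ Finset.Icc 1 (2*g) := Finset.mem_Icc.mpr (by omega)
  rw [ws_mirror x hi2]
  have hwsB := Finset.mem_Icc.mp (ws_mem_Icc x hi2)
  rcases dicho x hx σ hσ hi with ⟨ha1, ha2, _, _⟩ | ⟨hb1, hb2, _, _⟩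
  · have ha1' := Finset.mem_Icc.mp ha1
    have ha2' := Finset.mem_Icc.mp ha2
    rcases x.x0_mem i hi2 with h | h <;> rw [h] <;> norm_num <;> split_ifs <;> omega
  · have h0 : x.x0 i = 0 := x.x0_gt i hi2 (by omega)
    rw [h0]
    norm_num
    split_ifs <;> omega

set_option maxHeartbeats 2000000 in
lemma pair_eq (hg : 1 ≤ g) (x : AdmPair g) (hx : x.PossiblyMaximal) (σ : Equiv.Perm ℕ)
    (hσ : IsAssocPerm g x σ) {i j : ℕ} (hi : i ∈ Finset.Icc 1 g) (hj : j ∈ Finset.Icc 1 g) :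
    ((if i < j then
        (if x.w.symm i < x.w.symm j then |x.x0 i - x.x0 j| else |x.x0 i - x.x0 j + 1|)
      else 0)
     + (if i < j then
        (if x.w.symm i < x.w.symm (2*g+1-j) then |x.x0 i + x.x0 j - 1| else |x.x0 i + x.x0 j|)
      else 0))
    = (if i < j then (1:ℤ) else 0)
      + (if i < j ∧ x.w i ≤ g ∧ x.w j ≤ g ∧ x.w.symm j < x.w.symm i then (1:ℤ) else 0)
      - 2 * (if i < j ∧ x.w i ≤ g ∧ x.w j ≤ g ∧ x.w.symm j < x.w.symm i
              ∧ x.x0 i = 0 ∧ x.x0 j = 1 then (1:ℤ) else 0)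
      - (if i < j ∧ x.w i ≤ g ∧ ¬ x.w j ≤ g ∧ j < x.w.symm i then (1:ℤ) else 0)
      - (if i < j ∧ ¬ x.w i ≤ g ∧ x.w j ≤ g ∧ x.w.symm j < i then (1:ℤ) else 0) := by
  by_cases hij : i < j
  · have hi1 := Finset.mem_Icc.mp hi
    have hj1 := Finset.mem_Icc.mp hj
    have hi2 : i ∈ Finset.Icc 1 (2*g) := Finset.mem_Icc.mpr (by omega)
    have hj2 : j ∈ Finset.Icc 1 (2*g) := Finset.mem_Icc.mpr (by omega)
    rw [ws_mirror x hj2]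
    have hwsiB := Finset.mem_Icc.mp (ws_mem_Icc x hi2)
    have hwsjB := Finset.mem_Icc.mp (ws_mem_Icc x hj2)
    have hlt_i : x.w.symm i < i → x.x0 i = 1 := x.x0_lt i hi2
    have hgt_i : i < x.w.symm i → x.x0 i = 0 := x.x0_gt i hi2
    have hlt_j : x.w.symm j < j → x.x0 j = 1 := x.x0_lt j hj2
    have hgt_j : j < x.w.symm j → x.x0 j = 0 := x.x0_gt j hj2
    rcases dicho x hx σ hσ hi with ⟨ha1, ha2, _, _⟩ | ⟨hb1, hb2, _, _⟩ <;>
      rcases dicho x hx σ hσ hj with ⟨hc1, hc2, _, _⟩ | ⟨hd1, hd2, _, _⟩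
    · -- both T
      have ha1' := Finset.mem_Icc.mp ha1
      have ha2' := Finset.mem_Icc.mp ha2
      have hc1' := Finset.mem_Icc.mp hc1
      have hc2' := Finset.mem_Icc.mp hc2
      have hne : x.w.symm i ≠ x.w.symm j := fun h => absurd (x.w.symm.injective h) (by omega)
      rcases x.x0_mem i hi2 with h | h <;> rcases x.x0_mem j hj2 with h' | h' <;>
        rw [h, h'] <;> norm_num <;> split_ifs <;> omega
    · -- i T, j M
      have ha1' := Finset.mem_Icc.mp ha1
      have ha2' := Finset.mem_Icc.mp ha2
      have hb0 : x.x0 j = 0 := x.x0_gt j hj2 (by omega)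
      have hne2 : x.w.symm i ≠ j := by
        intro h
        have hji : x.w j = i := by rw [← h]; exact x.w.apply_symm_apply i
        omega
      rcases x.x0_mem i hi2 with h | h <;>
        rw [h, hb0] <;> norm_num <;> split_ifs <;> omega
    · -- i M, j T
      have hc1' := Finset.mem_Icc.mp hc1
      have hc2' := Finset.mem_Icc.mp hc2
      have ha0 : x.x0 i = 0 := x.x0_gt i hi2 (by omega)
      have hne2 : x.w.symm j ≠ i := by
        intro h
        have hji : x.w i = j := by rw [← h]; exact x.w.apply_symm_apply j
        omega
      rcases x.x0_mem j hj2 with h' | h' <;>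
        rw [ha0, h'] <;> norm_num <;> split_ifs <;> omega
    · -- both M
      have ha0 : x.x0 i = 0 := x.x0_gt i hi2 (by omega)
      have hb0 : x.x0 j = 0 := x.x0_gt j hj2 (by omega)
      rw [ha0, hb0]
      norm_num
      split_ifs <;> omega
  · simp [hij]

end LFA
namespace LFA
open Finset

variable {g : ℕ}

lemma factsAll (x : AdmPair g) (hx : x.PossiblyMaximal) (σ : Equiv.Perm ℕ)
    (hσ : IsAssocPerm g x σ) {i : ℕ} (hi : i ∈ Finset.Icc 1 g) :
    1 ≤ i ∧ i ≤ g ∧ 1 ≤ x.w i ∧ x.w i ≤ 2*g ∧ 1 ≤ x.w.symm i ∧ x.w.symm i ≤ 2*g ∧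
    (x.x0 i = 0 ∨ x.x0 i = 1) ∧ (x.w.symm i < i → x.x0 i = 1) ∧ (i < x.w.symm i → x.x0 i = 0) ∧
    (x.w i = i → x.w.symm i = i) ∧ (x.w.symm i = i → x.w i = i) ∧
    ((x.w i ≤ g ∧ x.w.symm i ≤ g ∧ σ i = x.w i ∧ σ.symm i = x.w.symm i) ∨
     (x.w i = 2*g+1-i ∧ x.w.symm i = 2*g+1-i ∧ σ i = i ∧ σ.symm i = i)) := by
  have hi1 := Finset.mem_Icc.mp hi
  have hi2 : i ∈ Finset.Icc 1 (2*g) := Finset.mem_Icc.mpr (by omega)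
  have hw := Finset.mem_Icc.mp (w_mem_Icc x hi2)
  have hws := Finset.mem_Icc.mp (ws_mem_Icc x hi2)
  refine ⟨hi1.1, hi1.2, hw.1, hw.2, hws.1, hws.2, x.x0_mem i hi2, x.x0_lt i hi2,
    x.x0_gt i hi2, ?_, ?_, ?_⟩
  · intro h
    rw [Equiv.symm_apply_eq]
    exact h.symm
  · intro h
    calc x.w i = x.w (x.w.symm i) := by rw [h]
    _ = i := x.w.apply_symm_apply i
  · rcases dicho x hx σ hσ hi with ⟨h1, h2, h3, h4⟩ | h
    · exact Or.inl ⟨(Finset.mem_Icc.mp h1).2, (Finset.mem_Icc.mp h2).2, h3, h4⟩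
    · exact Or.inr h

end LFA
namespace LFA
open Finset

variable {g : ℕ}

lemma cardPair_eq (P : ℕ × ℕ → Prop) [DecidablePred P] :
    ((((Finset.Icc 1 g) ×ˢ (Finset.Icc 1 g)).filter P).card : ℤ)
      = ∑ i ∈ Finset.Icc 1 g, ∑ j ∈ Finset.Icc 1 g, if P (i, j) then (1:ℤ) else 0 := by
  rw [Finset.card_filter]
  push_cast
  rw [Finset.sum_product]

lemma cardSingle_eq (P : ℕ → Prop) [DecidablePred P] :
    (((Finset.Icc 1 g).filter P).card : ℤ)
      = ∑ i ∈ Finset.Icc 1 g, if P i then (1:ℤ) else 0 := by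
  rw [Finset.card_filter]
  push_cast
  rfl

lemma cardPairF_eq (Q : ℕ → Prop) (P : ℕ × ℕ → Prop) [DecidablePred P] [DecidablePred Q] :
    ((((Finset.Icc 1 g) ×ˢ ((Finset.Icc 1 g).filter Q)).filter P).card : ℤ)
      = ∑ i ∈ Finset.Icc 1 g, ∑ j ∈ Finset.Icc 1 g, if Q j ∧ P (i, j) then (1:ℤ) else 0 := by
  rw [Finset.card_filter]
  push_cast
  rw [Finset.sum_product]
  refine Finset.sum_congr rfl fun i _ => ?_
  rw [Finset.sum_filter]
  refine Finset.sum_congr rfl fun j _ => ?_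
  by_cases hq : Q j <;> by_cases hp : P (i, j) <;> simp [hq, hp]

lemma sum_one_eq : (∑ _i ∈ Finset.Icc 1 g, (1:ℤ)) = (g:ℤ) := by
  rw [Finset.sum_const, Nat.card_Icc, nsmul_eq_mul, mul_one]
  push_cast
  omega

end LFA

set_option maxHeartbeats 4000000

/-- The length formula for a possibly maximal μ-admissible
pair `x` with associated permutation `σ` and set `F` of fixed points of `w`
in `{1,…,g}`, `d = #F`. -/
theorem len_formula (g : ℕ) (hg : 1 ≤ g) (x : AdmPair g)
    (hx : x.PossiblyMaximal)
    (σ : Equiv.Perm ℕ) (hσ : IsAssocPerm g x σ) :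
    x.len = ((g : ℤ) * (g + 1)) / 2 + (x.prank : ℤ)
      - (permFix g σ : ℤ) - (permLen g σ : ℤ)
      + 2 * ((permA g σ : ℤ) + (permA g σ.symm : ℤ)
          + ((((Finset.Icc 1 g) ×ˢ
                ((Finset.Icc 1 g).filter (fun i => x.w i = i))).filter
              (fun p => p.1 < p.2 ∧ p.2 < σ p.1)).card : ℤ)) := by
  classical
  -- card conversions
  have hLenC : (permLen g σ : ℤ) = ∑ i ∈ Finset.Icc 1 g, ∑ j ∈ Finset.Icc 1 g,
      if i < j ∧ σ j < σ i then (1:ℤ) else 0 := by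
    unfold permLen; exact LFA.cardPair_eq _
  have hAC : (permA g σ : ℤ) = ∑ i ∈ Finset.Icc 1 g, ∑ j ∈ Finset.Icc 1 g,
      if i < j ∧ j < σ j ∧ σ j < σ i then (1:ℤ) else 0 := by
    unfold permA; exact LFA.cardPair_eq _
  have hA'C : (permA g σ.symm : ℤ) = ∑ i ∈ Finset.Icc 1 g, ∑ j ∈ Finset.Icc 1 g,
      if i < j ∧ j < σ.symm j ∧ σ.symm j < σ.symm i then (1:ℤ) else 0 := by
    unfold permA; exact LFA.cardPair_eq _
  have hFixC : (permFix g σ : ℤ) = ∑ i ∈ Finset.Icc 1 g,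
      if σ i = i then (1:ℤ) else 0 := by
    unfold permFix; exact LFA.cardSingle_eq _
  have hPrankC : (x.prank : ℤ) = ∑ i ∈ Finset.Icc 1 g,
      if x.w i = i then (1:ℤ) else 0 := by
    unfold AdmPair.prank; exact LFA.cardSingle_eq _
  have hEC : ((((Finset.Icc 1 g) ×ˢ
                ((Finset.Icc 1 g).filter (fun i => x.w i = i))).filter
              (fun p => p.1 < p.2 ∧ p.2 < σ p.1)).card : ℤ)
      = ∑ i ∈ Finset.Icc 1 g, ∑ j ∈ Finset.Icc 1 g,
          if x.w j = j ∧ (i < j ∧ j < σ i) then (1:ℤ) else 0 :=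
    LFA.cardPairF_eq _ _
  -- LHS reduction
  have e12 : (∑ i ∈ Finset.Icc 1 g, ∑ j ∈ Finset.Icc 1 g,
      if i < j then
        (if x.w.symm i < x.w.symm j then |x.x0 i - x.x0 j|
         else |x.x0 i - x.x0 j + 1|)
      else 0)
    + (∑ i ∈ Finset.Icc 1 g, ∑ j ∈ Finset.Icc 1 g,
      if i < j then
        (if x.w.symm i < x.w.symm (2*g+1-j) then |x.x0 i + x.x0 j - 1|
         else |x.x0 i + x.x0 j|)
      else 0)
    = (∑ i ∈ Finset.Icc 1 g, ∑ j ∈ Finset.Icc 1 g, if i < j then (1:ℤ) else 0)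
      + (∑ i ∈ Finset.Icc 1 g, ∑ j ∈ Finset.Icc 1 g,
          if i < j ∧ x.w i ≤ g ∧ x.w j ≤ g ∧ x.w.symm j < x.w.symm i then (1:ℤ) else 0)
      - 2 * (∑ i ∈ Finset.Icc 1 g, ∑ j ∈ Finset.Icc 1 g,
          if i < j ∧ x.w i ≤ g ∧ x.w j ≤ g ∧ x.w.symm j < x.w.symm i
              ∧ x.x0 i = 0 ∧ x.x0 j = 1 then (1:ℤ) else 0)
      - (∑ i ∈ Finset.Icc 1 g, ∑ j ∈ Finset.Icc 1 g,
          if i < j ∧ x.w i ≤ g ∧ ¬ x.w j ≤ g ∧ j < x.w.symm i then (1:ℤ) else 0)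
      - (∑ i ∈ Finset.Icc 1 g, ∑ j ∈ Finset.Icc 1 g,
          if i < j ∧ ¬ x.w i ≤ g ∧ x.w j ≤ g ∧ x.w.symm j < i then (1:ℤ) else 0) := by
    calc (∑ i ∈ Finset.Icc 1 g, ∑ j ∈ Finset.Icc 1 g,
      if i < j then
        (if x.w.symm i < x.w.symm j then |x.x0 i - x.x0 j|
         else |x.x0 i - x.x0 j + 1|)
      else 0)
    + (∑ i ∈ Finset.Icc 1 g, ∑ j ∈ Finset.Icc 1 g,
      if i < j then
        (if x.w.symm i < x.w.symm (2*g+1-j) then |x.x0 i + x.x0 j - 1|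
         else |x.x0 i + x.x0 j|)
      else 0)
        = ∑ i ∈ Finset.Icc 1 g, ∑ j ∈ Finset.Icc 1 g,
            ((if i < j then (1:ℤ) else 0)
              + (if i < j ∧ x.w i ≤ g ∧ x.w j ≤ g ∧ x.w.symm j < x.w.symm i then (1:ℤ) else 0)
              - 2 * (if i < j ∧ x.w i ≤ g ∧ x.w j ≤ g ∧ x.w.symm j < x.w.symm i
                      ∧ x.x0 i = 0 ∧ x.x0 j = 1 then (1:ℤ) else 0)
              - (if i < j ∧ x.w i ≤ g ∧ ¬ x.w j ≤ g ∧ j < x.w.symm i then (1:ℤ) else 0)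
              - (if i < j ∧ ¬ x.w i ≤ g ∧ x.w j ≤ g ∧ x.w.symm j < i then (1:ℤ) else 0)) := by
          rw [← Finset.sum_add_distrib]
          refine Finset.sum_congr rfl fun i hi => ?_
          rw [← Finset.sum_add_distrib]
          exact Finset.sum_congr rfl fun j hj => LFA.pair_eq hg x hx σ hσ hi hj
      _ = _ := by
          simp only [Finset.sum_add_distrib, Finset.sum_sub_distrib, ← Finset.mul_sum]
  have e3 : (∑ i ∈ Finset.Icc 1 g,
      if x.w.symm i < x.w.symm (2*g+1-i) then |2 * x.x0 i - 1|
      else |2 * x.x0 i|)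
      = ∑ i ∈ Finset.Icc 1 g, if x.w i ≤ g then (1:ℤ) else 0 :=
    Finset.sum_congr rfl fun i hi => LFA.single_eq hg x hx σ hσ hi
  -- Gauss
  have H11 : ((g : ℤ) * ((g:ℤ) + 1)) / 2
      = (∑ i ∈ Finset.Icc 1 g, ∑ j ∈ Finset.Icc 1 g, if i < j then (1:ℤ) else 0) + (g:ℤ) := by
    have hP0sym : (∑ i ∈ Finset.Icc 1 g, ∑ j ∈ Finset.Icc 1 g, if i < j then (1:ℤ) else 0)
        = ∑ i ∈ Finset.Icc 1 g, ∑ j ∈ Finset.Icc 1 g, if j < i then (1:ℤ) else 0 :=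
      Finset.sum_comm
    have hdiag : (∑ i ∈ Finset.Icc 1 g, ∑ j ∈ Finset.Icc 1 g, if i = j then (1:ℤ) else 0)
        = (g:ℤ) := by
      have : ∀ i ∈ Finset.Icc 1 g,
          (∑ j ∈ Finset.Icc 1 g, if i = j then (1:ℤ) else 0) = 1 := by
        intro i hi
        rw [Finset.sum_ite_eq, if_pos hi]
      rw [Finset.sum_congr rfl this, LFA.sum_one_eq]
    have htot : (∑ i ∈ Finset.Icc 1 g, ∑ j ∈ Finset.Icc 1 g,
          ((if i < j then (1:ℤ) else 0) + (if j < i then (1:ℤ) else 0)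
            + (if i = j then (1:ℤ) else 0)))
        = (g:ℤ) * (g:ℤ) := by
      have h1 : ∀ i ∈ Finset.Icc 1 g, ∀ j ∈ Finset.Icc 1 g,
          ((if i < j then (1:ℤ) else 0) + (if j < i then (1:ℤ) else 0)
            + (if i = j then (1:ℤ) else 0)) = 1 := by
        intro i _ j _
        split_ifs <;> omega
      calc (∑ i ∈ Finset.Icc 1 g, ∑ j ∈ Finset.Icc 1 g,
          ((if i < j then (1:ℤ) else 0) + (if j < i then (1:ℤ) else 0)
            + (if i = j then (1:ℤ) else 0)))
          = ∑ i ∈ Finset.Icc 1 g, ∑ j ∈ Finset.Icc 1 g, (1:ℤ) :=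
            Finset.sum_congr rfl fun i hi => Finset.sum_congr rfl (h1 i hi)
        _ = ∑ i ∈ Finset.Icc 1 g, (g:ℤ) :=
            Finset.sum_congr rfl fun i _ => LFA.sum_one_eq
        _ = (g:ℤ) * (g:ℤ) := by
            rw [Finset.sum_const, Nat.card_Icc, Nat.add_sub_cancel, nsmul_eq_mul]
    simp only [Finset.sum_add_distrib] at htot
    rw [← hP0sym] at htot
    have key : (g:ℤ) * ((g:ℤ) + 1)
        = 2 * ((∑ i ∈ Finset.Icc 1 g, ∑ j ∈ Finset.Icc 1 g, if i < j then (1:ℤ) else 0) + (g:ℤ)) := by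
      linear_combination hdiag - htot
    rw [key, Int.mul_ediv_cancel_left _ (by norm_num)]
  -- permFix split
  have H3 : (∑ i ∈ Finset.Icc 1 g, if σ i = i then (1:ℤ) else 0)
      = (∑ i ∈ Finset.Icc 1 g, if x.w i = i then (1:ℤ) else 0) + (g:ℤ)
        - (∑ i ∈ Finset.Icc 1 g, if x.w i ≤ g then (1:ℤ) else 0) := by
    have h : ∀ i ∈ Finset.Icc 1 g, (if σ i = i then (1:ℤ) else 0)
        = (if x.w i = i then (1:ℤ) else 0) + 1 - (if x.w i ≤ g then (1:ℤ) else 0) := by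
      intro i hi
      have Fi := LFA.factsAll x hx σ hσ hi
      split_ifs <;> omega
    rw [Finset.sum_congr rfl h, Finset.sum_sub_distrib, Finset.sum_add_distrib, LFA.sum_one_eq]
  -- inversion split
  have H2 : (∑ i ∈ Finset.Icc 1 g, ∑ j ∈ Finset.Icc 1 g,
        if i < j ∧ σ j < σ i then (1:ℤ) else 0)
      = (∑ i ∈ Finset.Icc 1 g, ∑ j ∈ Finset.Icc 1 g,
          if i < j ∧ x.w i ≤ g ∧ x.w j ≤ g ∧ σ j < σ i then (1:ℤ) else 0)
        + (∑ i ∈ Finset.Icc 1 g, ∑ j ∈ Finset.Icc 1 g,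
          if i < j ∧ x.w i ≤ g ∧ ¬ x.w j ≤ g ∧ j < σ i then (1:ℤ) else 0)
        + (∑ i ∈ Finset.Icc 1 g, ∑ j ∈ Finset.Icc 1 g,
          if i < j ∧ ¬ x.w i ≤ g ∧ x.w j ≤ g ∧ σ j < i then (1:ℤ) else 0) := by
    have h : ∀ i ∈ Finset.Icc 1 g, ∀ j ∈ Finset.Icc 1 g,
        (if i < j ∧ σ j < σ i then (1:ℤ) else 0)
        = (if i < j ∧ x.w i ≤ g ∧ x.w j ≤ g ∧ σ j < σ i then (1:ℤ) else 0)
          + (if i < j ∧ x.w i ≤ g ∧ ¬ x.w j ≤ g ∧ j < σ i then (1:ℤ) else 0)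
          + (if i < j ∧ ¬ x.w i ≤ g ∧ x.w j ≤ g ∧ σ j < i then (1:ℤ) else 0) := by
      intro i hi j hj
      have Fi := LFA.factsAll x hx σ hσ hi
      have Fj := LFA.factsAll x hx σ hσ hj
      split_ifs <;> omega
    calc (∑ i ∈ Finset.Icc 1 g, ∑ j ∈ Finset.Icc 1 g,
        if i < j ∧ σ j < σ i then (1:ℤ) else 0)
        = ∑ i ∈ Finset.Icc 1 g, ∑ j ∈ Finset.Icc 1 g,
            ((if i < j ∧ x.w i ≤ g ∧ x.w j ≤ g ∧ σ j < σ i then (1:ℤ) else 0)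
              + (if i < j ∧ x.w i ≤ g ∧ ¬ x.w j ≤ g ∧ j < σ i then (1:ℤ) else 0)
              + (if i < j ∧ ¬ x.w i ≤ g ∧ x.w j ≤ g ∧ σ j < i then (1:ℤ) else 0)) :=
          Finset.sum_congr rfl fun i hi => Finset.sum_congr rfl (h i hi)
      _ = _ := by simp only [Finset.sum_add_distrib]
  -- reindexed inversion
  have H4 : (∑ i ∈ Finset.Icc 1 g, ∑ j ∈ Finset.Icc 1 g,
        if i < j ∧ x.w i ≤ g ∧ x.w j ≤ g ∧ x.w.symm j < x.w.symm i then (1:ℤ) else 0)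
      = ∑ i ∈ Finset.Icc 1 g, ∑ j ∈ Finset.Icc 1 g,
          if i < j ∧ x.w i ≤ g ∧ x.w j ≤ g ∧ σ j < σ i then (1:ℤ) else 0 := by
    rw [← Finset.sum_product', ← Finset.sum_product']
    refine Finset.sum_nbij' (fun p => (σ.symm p.2, σ.symm p.1)) (fun p => (σ p.2, σ p.1))
      ?_ ?_ ?_ ?_ ?_
    · intro p hp
      obtain ⟨h1, h2⟩ := Finset.mem_product.mp hp
      exact Finset.mem_product.mpr ⟨LFA.sigma_symm_mem x hx σ hσ h2, LFA.sigma_symm_mem x hx σ hσ h1⟩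
    · intro p hp
      obtain ⟨h1, h2⟩ := Finset.mem_product.mp hp
      exact Finset.mem_product.mpr ⟨LFA.sigma_mem x hx σ hσ h2, LFA.sigma_mem x hx σ hσ h1⟩
    · intro p _; simp
    · intro p _; simp
    · intro p hp
      obtain ⟨h1, h2⟩ := Finset.mem_product.mp hp
      simp only [Equiv.apply_symm_apply]
      have hwi : x.w (x.w.symm p.1) = p.1 := x.w.apply_symm_apply p.1
      have hwj : x.w (x.w.symm p.2) = p.2 := x.w.apply_symm_apply p.2
      obtain ⟨i1, i2, i3, i4, i5, i6, i7, i8, i9, i10, i11, Di⟩ := LFA.factsAll x hx σ hσ h1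
      obtain ⟨j1, j2, j3, j4, j5, j6, j7, j8, j9, j10, j11, Dj⟩ := LFA.factsAll x hx σ hσ h2
      obtain ⟨a1, a2, a3, a4⟩ | ⟨a1, a2, a3, a4⟩ := Di <;>
        obtain ⟨c1, c2, c3, c4⟩ | ⟨c1, c2, c3, c4⟩ := Dj <;>
        rw [a4, c4] <;> split_ifs <;> omega
  have H5 : (∑ i ∈ Finset.Icc 1 g, ∑ j ∈ Finset.Icc 1 g,
        if i < j ∧ x.w i ≤ g ∧ ¬ x.w j ≤ g ∧ j < x.w.symm i then (1:ℤ) else 0)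
      = ∑ i ∈ Finset.Icc 1 g, ∑ j ∈ Finset.Icc 1 g,
          if i < j ∧ x.w i ≤ g ∧ ¬ x.w j ≤ g ∧ j < σ i then (1:ℤ) else 0 := by
    calc (∑ i ∈ Finset.Icc 1 g, ∑ j ∈ Finset.Icc 1 g,
        if i < j ∧ x.w i ≤ g ∧ ¬ x.w j ≤ g ∧ j < x.w.symm i then (1:ℤ) else 0)
        = ∑ j ∈ Finset.Icc 1 g, ∑ i ∈ Finset.Icc 1 g,
            if i < j ∧ x.w i ≤ g ∧ ¬ x.w j ≤ g ∧ j < x.w.symm i then (1:ℤ) else 0 :=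
          Finset.sum_comm
      _ = ∑ j ∈ Finset.Icc 1 g, ∑ i ∈ Finset.Icc 1 g,
            if i < j ∧ x.w i ≤ g ∧ ¬ x.w j ≤ g ∧ j < σ i then (1:ℤ) else 0 := by
          refine Finset.sum_congr rfl fun j hj => ?_
          obtain ⟨j1, j2, j3, j4, j5, j6, j7, j8, j9, j10, j11, Dj⟩ := LFA.factsAll x hx σ hσ hj
          by_cases hTj : x.w j ≤ g
          · calc (∑ i ∈ Finset.Icc 1 g,
                if i < j ∧ x.w i ≤ g ∧ ¬ x.w j ≤ g ∧ j < x.w.symm i then (1:ℤ) else 0)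
                = 0 := Finset.sum_eq_zero fun i _ => by
                    rw [if_neg]; rintro ⟨_, _, h, _⟩; exact h hTj
              _ = ∑ i ∈ Finset.Icc 1 g,
                    if i < j ∧ x.w i ≤ g ∧ ¬ x.w j ≤ g ∧ j < σ i then (1:ℤ) else 0 :=
                  (Finset.sum_eq_zero fun i _ => by
                    rw [if_neg]; rintro ⟨_, _, h, _⟩; exact h hTj).symm
          · have hσj : σ j = j := by
              rcases Dj with ⟨c1, _, _, _⟩ | ⟨_, _, c3, _⟩
              · exact absurd c1 hTj
              · exact c3
            calc (∑ i ∈ Finset.Icc 1 g,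
                if i < j ∧ x.w i ≤ g ∧ ¬ x.w j ≤ g ∧ j < x.w.symm i then (1:ℤ) else 0)
                = ∑ i ∈ Finset.Icc 1 g, if i < j ∧ j < σ.symm i then (1:ℤ) else 0 := by
                  refine Finset.sum_congr rfl fun i hi => ?_
                  obtain ⟨i1, i2, i3, i4, i5, i6, i7, i8, i9, i10, i11, Di⟩ :=
                    LFA.factsAll x hx σ hσ hi
                  obtain ⟨a1, a2, a3, a4⟩ | ⟨a1, a2, a3, a4⟩ := Di <;>
                    rw [a4] <;> split_ifs <;> omega
              _ = ∑ i ∈ Finset.Icc 1 g, if i < j ∧ j < σ i then (1:ℤ) else 0 :=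
                  LFA.crossA σ hσ.1 j hσj
              _ = ∑ i ∈ Finset.Icc 1 g,
                    if i < j ∧ x.w i ≤ g ∧ ¬ x.w j ≤ g ∧ j < σ i then (1:ℤ) else 0 := by
                  refine Finset.sum_congr rfl fun i hi => ?_
                  obtain ⟨i1, i2, i3, i4, i5, i6, i7, i8, i9, i10, i11, Di⟩ :=
                    LFA.factsAll x hx σ hσ hi
                  obtain ⟨a1, a2, a3, a4⟩ | ⟨a1, a2, a3, a4⟩ := Di <;>
                    split_ifs <;> omega
      _ = _ := Finset.sum_comm
  have H6 : (∑ i ∈ Finset.Icc 1 g, ∑ j ∈ Finset.Icc 1 g,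
        if i < j ∧ ¬ x.w i ≤ g ∧ x.w j ≤ g ∧ x.w.symm j < i then (1:ℤ) else 0)
      = ∑ i ∈ Finset.Icc 1 g, ∑ j ∈ Finset.Icc 1 g,
          if i < j ∧ ¬ x.w i ≤ g ∧ x.w j ≤ g ∧ σ j < i then (1:ℤ) else 0 := by
    refine Finset.sum_congr rfl fun i hi => ?_
    obtain ⟨i1, i2, i3, i4, i5, i6, i7, i8, i9, i10, i11, Di⟩ := LFA.factsAll x hx σ hσ hi
    by_cases hTi : x.w i ≤ g
    · calc (∑ j ∈ Finset.Icc 1 g,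
          if i < j ∧ ¬ x.w i ≤ g ∧ x.w j ≤ g ∧ x.w.symm j < i then (1:ℤ) else 0)
          = 0 := Finset.sum_eq_zero fun j _ => by
              rw [if_neg]; rintro ⟨_, h, _, _⟩; exact h hTi
        _ = ∑ j ∈ Finset.Icc 1 g,
              if i < j ∧ ¬ x.w i ≤ g ∧ x.w j ≤ g ∧ σ j < i then (1:ℤ) else 0 :=
            (Finset.sum_eq_zero fun j _ => by
              rw [if_neg]; rintro ⟨_, h, _, _⟩; exact h hTi).symm
    · have hσi : σ i = i := by
        rcases Di with ⟨a1, _, _, _⟩ | ⟨_, _, a3, _⟩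
        · exact absurd a1 hTi
        · exact a3
      calc (∑ j ∈ Finset.Icc 1 g,
          if i < j ∧ ¬ x.w i ≤ g ∧ x.w j ≤ g ∧ x.w.symm j < i then (1:ℤ) else 0)
          = ∑ j ∈ Finset.Icc 1 g, if i < j ∧ σ.symm j < i then (1:ℤ) else 0 := by
            refine Finset.sum_congr rfl fun j hj => ?_
            obtain ⟨j1, j2, j3, j4, j5, j6, j7, j8, j9, j10, j11, Dj⟩ :=
              LFA.factsAll x hx σ hσ hj
            obtain ⟨c1, c2, c3, c4⟩ | ⟨c1, c2, c3, c4⟩ := Dj <;>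
              rw [c4] <;> split_ifs <;> omega
        _ = ∑ j ∈ Finset.Icc 1 g, if i < j ∧ σ j < i then (1:ℤ) else 0 :=
            LFA.crossB σ hσ.1 i hσi
        _ = ∑ j ∈ Finset.Icc 1 g,
              if i < j ∧ ¬ x.w i ≤ g ∧ x.w j ≤ g ∧ σ j < i then (1:ℤ) else 0 := by
            refine Finset.sum_congr rfl fun j hj => ?_
            obtain ⟨j1, j2, j3, j4, j5, j6, j7, j8, j9, j10, j11, Dj⟩ :=
              LFA.factsAll x hx σ hσ hj
            obtain ⟨c1, c2, c3, c4⟩ | ⟨c1, c2, c3, c4⟩ := Dj <;>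
              split_ifs <;> omega
  -- partition of inversions
  have H7 : (∑ i ∈ Finset.Icc 1 g, ∑ j ∈ Finset.Icc 1 g,
        if i < j ∧ x.w i ≤ g ∧ x.w j ≤ g ∧ x.w.symm j < x.w.symm i then (1:ℤ) else 0)
      = (∑ i ∈ Finset.Icc 1 g, ∑ j ∈ Finset.Icc 1 g,
          if i < j ∧ x.w i ≤ g ∧ x.w j ≤ g ∧ x.w.symm j < x.w.symm i
              ∧ x.x0 i = 0 ∧ x.x0 j = 1 then (1:ℤ) else 0)
        + (∑ i ∈ Finset.Icc 1 g, ∑ j ∈ Finset.Icc 1 g,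
          if i < j ∧ x.w i ≤ g ∧ x.w j ≤ g ∧ x.w.symm j < x.w.symm i
              ∧ x.w.symm i < i then (1:ℤ) else 0)
        + (∑ i ∈ Finset.Icc 1 g, ∑ j ∈ Finset.Icc 1 g,
          if i < j ∧ x.w i ≤ g ∧ x.w j ≤ g ∧ x.w.symm j < x.w.symm i
              ∧ j < x.w.symm j then (1:ℤ) else 0)
        + (∑ i ∈ Finset.Icc 1 g, ∑ j ∈ Finset.Icc 1 g,
          if i < j ∧ x.w i ≤ g ∧ x.w j ≤ g ∧ x.w.symm j < x.w.symm i
              ∧ x.w.symm i = i ∧ x.x0 i = 1 then (1:ℤ) else 0)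
        + (∑ i ∈ Finset.Icc 1 g, ∑ j ∈ Finset.Icc 1 g,
          if i < j ∧ x.w i ≤ g ∧ x.w j ≤ g ∧ x.w.symm j < x.w.symm i
              ∧ x.w.symm j = j ∧ x.x0 j = 0 then (1:ℤ) else 0) := by
    have h : ∀ i ∈ Finset.Icc 1 g, ∀ j ∈ Finset.Icc 1 g,
        (if i < j ∧ x.w i ≤ g ∧ x.w j ≤ g ∧ x.w.symm j < x.w.symm i then (1:ℤ) else 0)
        = (if i < j ∧ x.w i ≤ g ∧ x.w j ≤ g ∧ x.w.symm j < x.w.symm i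
              ∧ x.x0 i = 0 ∧ x.x0 j = 1 then (1:ℤ) else 0)
          + (if i < j ∧ x.w i ≤ g ∧ x.w j ≤ g ∧ x.w.symm j < x.w.symm i
              ∧ x.w.symm i < i then (1:ℤ) else 0)
          + (if i < j ∧ x.w i ≤ g ∧ x.w j ≤ g ∧ x.w.symm j < x.w.symm i
              ∧ j < x.w.symm j then (1:ℤ) else 0)
          + (if i < j ∧ x.w i ≤ g ∧ x.w j ≤ g ∧ x.w.symm j < x.w.symm i
              ∧ x.w.symm i = i ∧ x.x0 i = 1 then (1:ℤ) else 0)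
          + (if i < j ∧ x.w i ≤ g ∧ x.w j ≤ g ∧ x.w.symm j < x.w.symm i
              ∧ x.w.symm j = j ∧ x.x0 j = 0 then (1:ℤ) else 0) := by
      intro i hi j hj
      obtain ⟨i1, i2, i3, i4, i5, i6, i7, i8, i9, i10, i11, Di⟩ := LFA.factsAll x hx σ hσ hi
      obtain ⟨j1, j2, j3, j4, j5, j6, j7, j8, j9, j10, j11, Dj⟩ := LFA.factsAll x hx σ hσ hj
      split_ifs <;> omega
    calc (∑ i ∈ Finset.Icc 1 g, ∑ j ∈ Finset.Icc 1 g,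
        if i < j ∧ x.w i ≤ g ∧ x.w j ≤ g ∧ x.w.symm j < x.w.symm i then (1:ℤ) else 0)
        = ∑ i ∈ Finset.Icc 1 g, ∑ j ∈ Finset.Icc 1 g,
            ((if i < j ∧ x.w i ≤ g ∧ x.w j ≤ g ∧ x.w.symm j < x.w.symm i
                ∧ x.x0 i = 0 ∧ x.x0 j = 1 then (1:ℤ) else 0)
              + (if i < j ∧ x.w i ≤ g ∧ x.w j ≤ g ∧ x.w.symm j < x.w.symm i
                  ∧ x.w.symm i < i then (1:ℤ) else 0)
              + (if i < j ∧ x.w i ≤ g ∧ x.w j ≤ g ∧ x.w.symm j < x.w.symm i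
                  ∧ j < x.w.symm j then (1:ℤ) else 0)
              + (if i < j ∧ x.w i ≤ g ∧ x.w j ≤ g ∧ x.w.symm j < x.w.symm i
                  ∧ x.w.symm i = i ∧ x.x0 i = 1 then (1:ℤ) else 0)
              + (if i < j ∧ x.w i ≤ g ∧ x.w j ≤ g ∧ x.w.symm j < x.w.symm i
                  ∧ x.w.symm j = j ∧ x.x0 j = 0 then (1:ℤ) else 0)) :=
          Finset.sum_congr rfl fun i hi => Finset.sum_congr rfl (h i hi)
      _ = _ := by simp only [Finset.sum_add_distrib]
  -- Ca = A
  have H8 : (∑ i ∈ Finset.Icc 1 g, ∑ j ∈ Finset.Icc 1 g,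
        if i < j ∧ x.w i ≤ g ∧ x.w j ≤ g ∧ x.w.symm j < x.w.symm i
            ∧ x.w.symm i < i then (1:ℤ) else 0)
      = ∑ i ∈ Finset.Icc 1 g, ∑ j ∈ Finset.Icc 1 g,
          if i < j ∧ j < σ j ∧ σ j < σ i then (1:ℤ) else 0 := by
    rw [← Finset.sum_product', ← Finset.sum_product']
    refine Finset.sum_nbij' (fun p => (σ.symm p.2, σ.symm p.1)) (fun p => (σ p.2, σ p.1))
      ?_ ?_ ?_ ?_ ?_
    · intro p hp
      obtain ⟨h1, h2⟩ := Finset.mem_product.mp hp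
      exact Finset.mem_product.mpr ⟨LFA.sigma_symm_mem x hx σ hσ h2, LFA.sigma_symm_mem x hx σ hσ h1⟩
    · intro p hp
      obtain ⟨h1, h2⟩ := Finset.mem_product.mp hp
      exact Finset.mem_product.mpr ⟨LFA.sigma_mem x hx σ hσ h2, LFA.sigma_mem x hx σ hσ h1⟩
    · intro p _; simp
    · intro p _; simp
    · intro p hp
      obtain ⟨h1, h2⟩ := Finset.mem_product.mp hp
      simp only [Equiv.apply_symm_apply]
      have hwi : x.w (x.w.symm p.1) = p.1 := x.w.apply_symm_apply p.1
      have hwj : x.w (x.w.symm p.2) = p.2 := x.w.apply_symm_apply p.2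
      obtain ⟨i1, i2, i3, i4, i5, i6, i7, i8, i9, i10, i11, Di⟩ := LFA.factsAll x hx σ hσ h1
      obtain ⟨j1, j2, j3, j4, j5, j6, j7, j8, j9, j10, j11, Dj⟩ := LFA.factsAll x hx σ hσ h2
      obtain ⟨a1, a2, a3, a4⟩ | ⟨a1, a2, a3, a4⟩ := Di <;>
        obtain ⟨c1, c2, c3, c4⟩ | ⟨c1, c2, c3, c4⟩ := Dj <;>
        rw [a4, c4] <;> split_ifs <;> omega
  -- Cb = A'
  have H9 : (∑ i ∈ Finset.Icc 1 g, ∑ j ∈ Finset.Icc 1 g,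
        if i < j ∧ x.w i ≤ g ∧ x.w j ≤ g ∧ x.w.symm j < x.w.symm i
            ∧ j < x.w.symm j then (1:ℤ) else 0)
      = ∑ i ∈ Finset.Icc 1 g, ∑ j ∈ Finset.Icc 1 g,
          if i < j ∧ j < σ.symm j ∧ σ.symm j < σ.symm i then (1:ℤ) else 0 := by
    refine Finset.sum_congr rfl fun i hi => Finset.sum_congr rfl fun j hj => ?_
    obtain ⟨i1, i2, i3, i4, i5, i6, i7, i8, i9, i10, i11, Di⟩ := LFA.factsAll x hx σ hσ hi
    obtain ⟨j1, j2, j3, j4, j5, j6, j7, j8, j9, j10, j11, Dj⟩ := LFA.factsAll x hx σ hσ hj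
    obtain ⟨a1, a2, a3, a4⟩ | ⟨a1, a2, a3, a4⟩ := Di <;>
      obtain ⟨c1, c2, c3, c4⟩ | ⟨c1, c2, c3, c4⟩ := Dj <;>
      rw [a4, c4] <;> split_ifs <;> omega
  -- Cc
  have HCc : (∑ i ∈ Finset.Icc 1 g, ∑ j ∈ Finset.Icc 1 g,
        if i < j ∧ x.w i ≤ g ∧ x.w j ≤ g ∧ x.w.symm j < x.w.symm i
            ∧ x.w.symm i = i ∧ x.x0 i = 1 then (1:ℤ) else 0)
      = ∑ f ∈ Finset.Icc 1 g,
          (if x.w f = f ∧ x.x0 f = 1 then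
            (∑ k ∈ Finset.Icc 1 g, if k < f ∧ f < σ k then (1:ℤ) else 0) else 0) := by
    refine Finset.sum_congr rfl fun i hi => ?_
    obtain ⟨i1, i2, i3, i4, i5, i6, i7, i8, i9, i10, i11, Di⟩ := LFA.factsAll x hx σ hσ hi
    by_cases hP : x.w i = i ∧ x.x0 i = 1
    · rw [if_pos hP]
      have hws : x.w.symm i = i := i10 hP.1
      have hσi : σ i = i := by
        rcases Di with ⟨_, _, a3, _⟩ | ⟨a1, _, _, _⟩
        · rw [a3, hP.1]
        · omega
      calc (∑ j ∈ Finset.Icc 1 g,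
          if i < j ∧ x.w i ≤ g ∧ x.w j ≤ g ∧ x.w.symm j < x.w.symm i
              ∧ x.w.symm i = i ∧ x.x0 i = 1 then (1:ℤ) else 0)
          = ∑ j ∈ Finset.Icc 1 g, if i < j ∧ σ.symm j < i then (1:ℤ) else 0 := by
            refine Finset.sum_congr rfl fun j hj => ?_
            obtain ⟨j1, j2, j3, j4, j5, j6, j7, j8, j9, j10, j11, Dj⟩ :=
              LFA.factsAll x hx σ hσ hj
            have hP1 := hP.1
            have hP2 := hP.2
            obtain ⟨c1, c2, c3, c4⟩ | ⟨c1, c2, c3, c4⟩ := Dj <;>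
              rw [c4] <;> split_ifs <;> omega
        _ = ∑ j ∈ Finset.Icc 1 g, if i < σ j ∧ j < i then (1:ℤ) else 0 := by
            have h := LFA.sum_comp_perm (g := g) σ hσ.1
              (fun k => if i < k ∧ σ.symm k < i then (1:ℤ) else 0)
            simp only [Equiv.symm_apply_apply] at h
            exact h.symm
        _ = ∑ k ∈ Finset.Icc 1 g, if k < i ∧ i < σ k then (1:ℤ) else 0 :=
            Finset.sum_congr rfl fun j _ => if_congr and_comm rfl rfl
    · rw [if_neg hP]
      refine Finset.sum_eq_zero fun j _ => ?_
      rw [if_neg]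
      rintro ⟨_, _, _, _, h5, h6⟩
      exact hP ⟨i11 h5, h6⟩
  -- Cd
  have HCd : (∑ i ∈ Finset.Icc 1 g, ∑ j ∈ Finset.Icc 1 g,
        if i < j ∧ x.w i ≤ g ∧ x.w j ≤ g ∧ x.w.symm j < x.w.symm i
            ∧ x.w.symm j = j ∧ x.x0 j = 0 then (1:ℤ) else 0)
      = ∑ f ∈ Finset.Icc 1 g,
          (if x.w f = f ∧ x.x0 f = 0 then
            (∑ k ∈ Finset.Icc 1 g, if k < f ∧ f < σ k then (1:ℤ) else 0) else 0) := by
    rw [Finset.sum_comm]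
    refine Finset.sum_congr rfl fun j hj => ?_
    obtain ⟨j1, j2, j3, j4, j5, j6, j7, j8, j9, j10, j11, Dj⟩ := LFA.factsAll x hx σ hσ hj
    by_cases hP : x.w j = j ∧ x.x0 j = 0
    · rw [if_pos hP]
      have hws : x.w.symm j = j := j10 hP.1
      have hσj : σ j = j := by
        rcases Dj with ⟨_, _, c3, _⟩ | ⟨c1, _, _, _⟩
        · rw [c3, hP.1]
        · omega
      calc (∑ i ∈ Finset.Icc 1 g,
          if i < j ∧ x.w i ≤ g ∧ x.w j ≤ g ∧ x.w.symm j < x.w.symm i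
              ∧ x.w.symm j = j ∧ x.x0 j = 0 then (1:ℤ) else 0)
          = ∑ i ∈ Finset.Icc 1 g, if i < j ∧ j < σ.symm i then (1:ℤ) else 0 := by
            refine Finset.sum_congr rfl fun i hi => ?_
            obtain ⟨i1, i2, i3, i4, i5, i6, i7, i8, i9, i10, i11, Di⟩ :=
              LFA.factsAll x hx σ hσ hi
            have hP1 := hP.1
            have hP2 := hP.2
            obtain ⟨a1, a2, a3, a4⟩ | ⟨a1, a2, a3, a4⟩ := Di <;>
              rw [a4] <;> split_ifs <;> omega
        _ = ∑ i ∈ Finset.Icc 1 g, if i < j ∧ j < σ i then (1:ℤ) else 0 :=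
            LFA.crossA σ hσ.1 j hσj
    · rw [if_neg hP]
      refine Finset.sum_eq_zero fun i _ => ?_
      rw [if_neg]
      rintro ⟨_, _, _, _, h5, h6⟩
      exact hP ⟨j11 h5, h6⟩
  -- E
  have HEE : (∑ i ∈ Finset.Icc 1 g, ∑ j ∈ Finset.Icc 1 g,
        if x.w j = j ∧ (i < j ∧ j < σ i) then (1:ℤ) else 0)
      = ∑ f ∈ Finset.Icc 1 g,
          (if x.w f = f then
            (∑ k ∈ Finset.Icc 1 g, if k < f ∧ f < σ k then (1:ℤ) else 0) else 0) := by
    rw [Finset.sum_comm]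
    refine Finset.sum_congr rfl fun j hj => ?_
    by_cases hP : x.w j = j
    · rw [if_pos hP]
      exact Finset.sum_congr rfl fun i _ =>
        if_congr ⟨fun h => h.2, fun h => ⟨hP, h⟩⟩ rfl rfl
    · rw [if_neg hP]
      refine Finset.sum_eq_zero fun i _ => ?_
      rw [if_neg]
      rintro ⟨h1, _⟩
      exact hP h1
  have HCCD : (∑ f ∈ Finset.Icc 1 g,
          (if x.w f = f ∧ x.x0 f = 1 then
            (∑ k ∈ Finset.Icc 1 g, if k < f ∧ f < σ k then (1:ℤ) else 0) else 0))
      + (∑ f ∈ Finset.Icc 1 g,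
          (if x.w f = f ∧ x.x0 f = 0 then
            (∑ k ∈ Finset.Icc 1 g, if k < f ∧ f < σ k then (1:ℤ) else 0) else 0))
      = ∑ f ∈ Finset.Icc 1 g,
          (if x.w f = f then
            (∑ k ∈ Finset.Icc 1 g, if k < f ∧ f < σ k then (1:ℤ) else 0) else 0) := by
    rw [← Finset.sum_add_distrib]
    refine Finset.sum_congr rfl fun f hf => ?_
    have hf2 : f ∈ Finset.Icc 1 (2*g) := by
      have := Finset.mem_Icc.mp hf
      exact Finset.mem_Icc.mpr (by omega)
    have hx0 := x.x0_mem f hf2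
    split_ifs <;> omega
  -- assembly
  unfold AdmPair.len
  rw [e12, e3, hLenC, hFixC, hPrankC, hAC, hA'C, hEC, H11]
  linarith [H2, H3, H4, H5, H6, H7, H8, H9, HCc, HCd, HEE, HCCD]
end

section
/- Let x = (x_0, w) be a possibly maximal μ-admissible pair with p-rank d(x) = d. Then ℓ(x) ≤ ⌊(g² + d)/2⌋. -/
namespace AdmAux

variable {g : ℕ} (x : AdmPair g)

lemma w_mem {i : ℕ} (hi : i ∈ Finset.Icc 1 (2*g)) : x.w i ∈ Finset.Icc 1 (2*g) := by
  by_contra h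
  have h2 := x.w_fix _ h
  have h3 := x.w.injective h2
  rw [h3] at h
  exact h hi

lemma symm_fix {i : ℕ} (hi : i ∉ Finset.Icc 1 (2*g)) : x.w.symm i = i := by
  have h := x.w_fix i hi
  calc x.w.symm i = x.w.symm (x.w i) := by rw [h]
  _ = i := x.w.symm_apply_apply i

lemma symm_mem {i : ℕ} (hi : i ∈ Finset.Icc 1 (2*g)) : x.w.symm i ∈ Finset.Icc 1 (2*g) := by
  by_contra h
  have h2 : x.w (x.w.symm i) = x.w.symm i := x.w_fix _ h
  rw [x.w.apply_symm_apply] at h2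
  rw [← h2] at h
  exact h hi

lemma symm_symm {i : ℕ} (hi : i ∈ Finset.Icc 1 (2*g)) :
    x.w.symm (2*g+1-i) = 2*g+1 - x.w.symm i := by
  have hj : x.w.symm i ∈ Finset.Icc 1 (2*g) := symm_mem x hi
  have h1 : x.w (2*g+1 - x.w.symm i) = 2*g+1 - i := by
    rw [x.w_symm _ hj, x.w.apply_symm_apply]
  have h2 := congrArg x.w.symm h1
  rw [x.w.symm_apply_apply] at h2
  exact h2.symm

lemma mem_big {i : ℕ} (hi : i ∈ Finset.Icc 1 g) : i ∈ Finset.Icc 1 (2*g) := by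
  simp only [Finset.mem_Icc] at *; omega

variable (hx : x.PossiblyMaximal)
include hx

/-- If `i ≤ g` and `w i ≤ g` then `w⁻¹ i ≤ g`. -/
lemma symm_le (hg : 1 ≤ g) {i : ℕ} (hi : i ∈ Finset.Icc 1 g) (hwi : x.w i ≤ g) :
    x.w.symm i ≤ g := by
  have hig : 1 ≤ i ∧ i ≤ g := Finset.mem_Icc.mp hi
  by_contra h
  push_neg at h
  set k := x.w.symm i with hk
  have hkmem : k ∈ Finset.Icc 1 (2*g) := symm_mem x (mem_big hi)
  have hkb : 1 ≤ k ∧ k ≤ 2*g := Finset.mem_Icc.mp hkmem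
  have hwk : x.w k = i := x.w.apply_symm_apply i
  have hi'mem : 2*g+1-k ∈ Finset.Icc 1 g := by simp only [Finset.mem_Icc]; omega
  have hwi' : x.w (2*g+1-k) = 2*g+1 - i := by
    rw [x.w_symm _ hkmem, hwk]
  have hgt : g < x.w (2*g+1-k) := by omega
  have h2 := hx _ hi'mem hgt
  -- 2g+1-i = 2g+1-(2g+1-k), so k = 2g+1-i
  have hkeq : k = 2*g+1-i := by omega
  -- then w (2g+1-i) = i, so by w_symm at i : i = 2g+1 - w i, so w i = 2g+1-i > g
  have h3 : x.w (2*g+1-i) = i := by rw [← hkeq, hwk]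
  have h4 := x.w_symm _ (mem_big hi)
  have hwib : x.w i ∈ Finset.Icc 1 (2*g) := w_mem x (mem_big hi)
  have hwibb : 1 ≤ x.w i ∧ x.w i ≤ 2*g := Finset.mem_Icc.mp hwib
  omega

/-- If `i ≤ g` and `w⁻¹ i ≤ g` then `w i ≤ g`. -/
lemma w_le (hg : 1 ≤ g) {i : ℕ} (hi : i ∈ Finset.Icc 1 g) (hwi : x.w.symm i ≤ g) :
    x.w i ≤ g := by
  have hig : 1 ≤ i ∧ i ≤ g := Finset.mem_Icc.mp hi
  by_contra h
  push_neg at h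
  have h2 := hx _ hi h
  have h3 : x.w (2*g+1-i) = i := by
    rw [x.w_symm _ (mem_big hi), h2]
    have : 2*g+1-i ∈ Finset.Icc 1 (2*g) := by simp only [Finset.mem_Icc]; omega
    omega
  have h4 : x.w.symm i = 2*g+1-i := by
    calc x.w.symm i = x.w.symm (x.w (2*g+1-i)) := by rw [h3]
    _ = 2*g+1-i := x.w.symm_apply_apply _
  omega

/-- If `i ≤ g < w⁻¹ i` then `w⁻¹ i = 2g+1-i`. -/
lemma symm_T (hg : 1 ≤ g) {i : ℕ} (hi : i ∈ Finset.Icc 1 g) (h : g < x.w.symm i) :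
    x.w.symm i = 2*g+1-i := by
  have hig : 1 ≤ i ∧ i ≤ g := Finset.mem_Icc.mp hi
  have hwgt : g < x.w i := by
    by_contra h2
    push_neg at h2
    have := symm_le x hx hg hi h2
    omega
  have h2 := hx _ hi hwgt
  have h3 : x.w (2*g+1-i) = i := by
    rw [x.w_symm _ (mem_big hi), h2]
    omega
  calc x.w.symm i = x.w.symm (x.w (2*g+1-i)) := by rw [h3]
  _ = 2*g+1-i := x.w.symm_apply_apply _

end AdmAux

namespace AdmAux

variable {g : ℕ} (x : AdmPair g)

/-- abbreviation for `w⁻¹`. -/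
abbrev sp (x : AdmPair g) (i : ℕ) : ℕ := x.w.symm i

/-- the set `S` of non-`T` elements of `{1,…,g}`. -/
def Sf (x : AdmPair g) : Finset ℕ := (Finset.Icc 1 g).filter (fun i => x.w.symm i ≤ g)

variable (hx : x.PossiblyMaximal) (hg : 1 ≤ g)
include hx hg

lemma sp_memS {i : ℕ} (hi : i ∈ Sf x) : x.w.symm i ∈ Sf x := by
  simp only [Sf, Finset.mem_filter, Finset.mem_Icc] at *
  obtain ⟨⟨h1, h2⟩, h3⟩ := hi
  have hmem : i ∈ Finset.Icc 1 (2*g) := by simp only [Finset.mem_Icc]; omega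
  have h4 : x.w.symm i ∈ Finset.Icc 1 (2*g) := symm_mem x hmem
  have h5 : 1 ≤ x.w.symm i ∧ x.w.symm i ≤ 2*g := Finset.mem_Icc.mp h4
  refine ⟨⟨h5.1, h3⟩, ?_⟩
  have hj : x.w.symm i ∈ Finset.Icc 1 g := by simp only [Finset.mem_Icc]; omega
  have hw : x.w (x.w.symm i) = i := x.w.apply_symm_apply i
  exact symm_le x hx hg hj (by omega)

lemma w_memS {i : ℕ} (hi : i ∈ Sf x) : x.w i ∈ Sf x := by
  simp only [Sf, Finset.mem_filter, Finset.mem_Icc] at *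
  obtain ⟨⟨h1, h2⟩, h3⟩ := hi
  have hmem : i ∈ Finset.Icc 1 g := by simp only [Finset.mem_Icc]; omega
  have h4 : x.w i ≤ g := w_le x hx hg hmem h3
  have h5 : x.w i ∈ Finset.Icc 1 (2*g) := w_mem x (mem_big hmem)
  have h6 : 1 ≤ x.w i ∧ x.w i ≤ 2*g := Finset.mem_Icc.mp h5
  refine ⟨⟨h6.1, h4⟩, ?_⟩
  rw [x.w.symm_apply_apply]; omega

/-- the balance lemma: the number of elements of `S` below `k` mapped above `k`
by `w⁻¹` equals the number of elements above `k` mapped below `k`. -/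
lemma balance (k : ℕ) :
    ((Sf x).filter (fun i => i ≤ k ∧ k < x.w.symm i)).card
      = ((Sf x).filter (fun i => k < i ∧ x.w.symm i ≤ k)).card := by
  have hbij : ((Sf x).filter (fun i => x.w.symm i ≤ k)).card
      = ((Sf x).filter (fun i => i ≤ k)).card := by
    apply Finset.card_bij' (fun a _ => x.w.symm a) (fun b _ => x.w b)
    · intro a ha
      simp only [Finset.mem_filter] at ha ⊢
      exact ⟨sp_memS x hx hg ha.1, ha.2⟩
    · intro b hb
      simp only [Finset.mem_filter] at hb ⊢
      refine ⟨w_memS x hx hg hb.1, ?_⟩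
      rw [x.w.symm_apply_apply]; exact hb.2
    · intro a _; exact x.w.apply_symm_apply a
    · intro b _; exact x.w.symm_apply_apply b
  have e1 : ((Sf x).filter (fun i => x.w.symm i ≤ k)).card
      = ((Sf x).filter (fun i => i ≤ k ∧ x.w.symm i ≤ k)).card
        + ((Sf x).filter (fun i => k < i ∧ x.w.symm i ≤ k)).card := by
    rw [← Finset.card_filter_add_card_filter_not
      (s := (Sf x).filter (fun i => x.w.symm i ≤ k)) (p := fun i => i ≤ k)]
    rw [Finset.filter_filter, Finset.filter_filter]
    congr 1
    · apply Finset.card_nbij id (fun a ha => by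
        simp only [Finset.mem_coe, Finset.mem_filter] at *; tauto)
      · intro a ha b hb hab; exact hab
      · intro b hb
        simp only [Set.mem_image, Finset.coe_filter, Set.mem_setOf_eq] at *
        exact ⟨b, by tauto, rfl⟩
    · apply Finset.card_nbij id (fun a ha => by
        simp only [Finset.mem_coe, Finset.mem_filter, not_le] at *; tauto)
      · intro a ha b hb hab; exact hab
      · intro b hb
        simp only [Set.mem_image, Finset.coe_filter, Set.mem_setOf_eq, not_le] at *
        exact ⟨b, by tauto, rfl⟩
  have e2 : ((Sf x).filter (fun i => i ≤ k)).card
      = ((Sf x).filter (fun i => i ≤ k ∧ x.w.symm i ≤ k)).card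
        + ((Sf x).filter (fun i => i ≤ k ∧ k < x.w.symm i)).card := by
    rw [← Finset.card_filter_add_card_filter_not
      (s := (Sf x).filter (fun i => i ≤ k)) (p := fun i => x.w.symm i ≤ k)]
    rw [Finset.filter_filter, Finset.filter_filter]
    congr 1
    apply Finset.card_nbij id (fun a ha => by
      simp only [Finset.mem_coe, Finset.mem_filter, not_le] at *; tauto)
    · intro a ha b hb hab; exact hab
    · intro b hb
      simp only [Set.mem_image, Finset.coe_filter, Set.mem_setOf_eq, not_le] at *
      exact ⟨b, by tauto, rfl⟩
  omega

end AdmAux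

namespace AdmAux

variable {g : ℕ} (x : AdmPair g) (hx : x.PossiblyMaximal) (hg : 1 ≤ g)
include hx hg

lemma spb {i : ℕ} (hi : i ∈ Finset.Icc 1 g) : 1 ≤ x.w.symm i ∧ x.w.symm i ≤ 2*g := by
  exact Finset.mem_Icc.mp (symm_mem x (mem_big hi))

lemma slice1 {u : ℕ} (hu : u ∈ Finset.Icc 1 g) (h1 : u < x.w.symm u) (h2 : x.w.symm u ≤ g) :
    1 + ((Sf x).filter (fun i => i < u ∧ x.w.symm u < x.w.symm i)).card
      ≤ ((Sf x).filter (fun i => u < i ∧ x.w.symm i ≤ u)).card := by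
  rw [← balance x hx hg u]
  have hsub : insert u ((Sf x).filter (fun i => i < u ∧ x.w.symm u < x.w.symm i))
      ⊆ (Sf x).filter (fun i => i ≤ u ∧ u < x.w.symm i) := by
    intro a ha
    rcases Finset.mem_insert.mp ha with h | h
    · subst h
      refine Finset.mem_filter.mpr ⟨?_, le_refl _, h1⟩
      exact Finset.mem_filter.mpr ⟨hu, h2⟩
    · obtain ⟨haS, ha1, ha2⟩ := Finset.mem_filter.mp h
      exact Finset.mem_filter.mpr ⟨haS, by omega, by omega⟩
  have hcard := Finset.card_le_card hsub
  rw [Finset.card_insert_of_notMem (by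
    intro h
    exact absurd (Finset.mem_filter.mp h).2.1 (lt_irrefl u))] at hcard
  omega

lemma slice2 {v : ℕ} (hv : v ∈ Finset.Icc 1 g) (h1 : x.w.symm v < v) :
    ((Sf x).filter (fun j => v < j ∧ x.w.symm j < x.w.symm v)).card
      ≤ ((Sf x).filter (fun i => i < x.w.symm v ∧ x.w.symm v < x.w.symm i)).card := by
  have hb := balance x hx hg (x.w.symm v - 1)
  have hvb := spb x hx hg hv
  have heq : (Sf x).filter (fun i => i ≤ x.w.symm v - 1 ∧ x.w.symm v - 1 < x.w.symm i)
      = (Sf x).filter (fun i => i < x.w.symm v ∧ x.w.symm v < x.w.symm i) := by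
    apply Finset.filter_congr
    intro i _
    have hinj : x.w.symm i = x.w.symm v → i = v := fun h => x.w.symm.injective h
    constructor
    · intro ⟨ha, hb2⟩; exact ⟨by omega, by omega⟩
    · intro ⟨ha, hb2⟩; exact ⟨by omega, by omega⟩
  have hsub : (Sf x).filter (fun j => v < j ∧ x.w.symm j < x.w.symm v)
      ⊆ (Sf x).filter (fun i => x.w.symm v - 1 < i ∧ x.w.symm i ≤ x.w.symm v - 1) := by
    intro a ha
    obtain ⟨haS, ha1, ha2⟩ := Finset.mem_filter.mp ha
    exact Finset.mem_filter.mpr ⟨haS, by omega, by omega⟩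
  have := Finset.card_le_card hsub
  rw [← hb, heq] at this
  exact this

lemma slice1' {v : ℕ} (hv : v ∈ Finset.Icc 1 g) (h1 : x.w.symm v < v) :
    1 + ((Sf x).filter (fun j => v < j ∧ x.w.symm j < x.w.symm v)).card
      ≤ ((Sf x).filter (fun i => i < v ∧ v ≤ x.w.symm i)).card := by
  have hb := balance x hx hg (v - 1)
  have hvg : 1 ≤ v ∧ v ≤ g := Finset.mem_Icc.mp hv
  have heq : (Sf x).filter (fun i => i ≤ v - 1 ∧ v - 1 < x.w.symm i)
      = (Sf x).filter (fun i => i < v ∧ v ≤ x.w.symm i) := by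
    apply Finset.filter_congr
    intro i _
    constructor
    · intro ⟨ha, hb2⟩; exact ⟨by omega, by omega⟩
    · intro ⟨ha, hb2⟩; exact ⟨by omega, by omega⟩
  have hsub : insert v ((Sf x).filter (fun j => v < j ∧ x.w.symm j < x.w.symm v))
      ⊆ (Sf x).filter (fun i => v - 1 < i ∧ x.w.symm i ≤ v - 1) := by
    intro a ha
    rcases Finset.mem_insert.mp ha with h | h
    · subst h
      refine Finset.mem_filter.mpr ⟨?_, by omega, by omega⟩
      exact Finset.mem_filter.mpr ⟨hv, by omega⟩
    · obtain ⟨haS, ha1, ha2⟩ := Finset.mem_filter.mp h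
      exact Finset.mem_filter.mpr ⟨haS, by omega, by omega⟩
  have hcard := Finset.card_le_card hsub
  rw [Finset.card_insert_of_notMem (by
    intro h
    have := (Finset.mem_filter.mp h).2.1
    omega)] at hcard
  rw [← hb, heq] at hcard
  omega

lemma slice2' {u : ℕ} (hu : u ∈ Finset.Icc 1 g) (h1 : u < x.w.symm u) (h2 : x.w.symm u ≤ g) :
    ((Sf x).filter (fun i => i < u ∧ x.w.symm u < x.w.symm i)).card
      ≤ ((Sf x).filter (fun j => x.w.symm u < j ∧ x.w.symm j < x.w.symm u)).card := by
  have hb := balance x hx hg (x.w.symm u)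
  have heq : (Sf x).filter (fun i => x.w.symm u < i ∧ x.w.symm i ≤ x.w.symm u)
      = (Sf x).filter (fun j => x.w.symm u < j ∧ x.w.symm j < x.w.symm u) := by
    apply Finset.filter_congr
    intro i _
    have hinj : x.w.symm i = x.w.symm u → i = u := fun h => x.w.symm.injective h
    constructor
    · intro ⟨ha, hb2⟩; exact ⟨ha, by omega⟩
    · intro ⟨ha, hb2⟩; exact ⟨ha, by omega⟩
  have hsub : (Sf x).filter (fun i => i < u ∧ x.w.symm u < x.w.symm i)
      ⊆ (Sf x).filter (fun i => i ≤ x.w.symm u ∧ x.w.symm u < x.w.symm i) := by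
    intro a ha
    obtain ⟨haS, ha1, ha2⟩ := Finset.mem_filter.mp ha
    exact Finset.mem_filter.mpr ⟨haS, by omega, by omega⟩
  have := Finset.card_le_card hsub
  rw [hb, heq] at this
  exact this

end AdmAux

namespace AdmAux

variable {g : ℕ} (x : AdmPair g)

/-- number of `A`-pairs. -/
def nA (x : AdmPair g) : ℕ := ∑ i ∈ Finset.Icc 1 g, ∑ j ∈ Finset.Icc 1 g,
  if (i < j ∧ x.w.symm j < x.w.symm i ∧ x.w.symm i ≤ g ∧ i < x.w.symm i ∧ j < x.w.symm j)
  then 1 else 0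

/-- number of `A'`-pairs. -/
def nA' (x : AdmPair g) : ℕ := ∑ i ∈ Finset.Icc 1 g, ∑ j ∈ Finset.Icc 1 g,
  if (i < j ∧ x.w.symm j < x.w.symm i ∧ x.w.symm i ≤ g ∧ x.w.symm i < i ∧ x.w.symm j < j)
  then 1 else 0

/-- number of `Γ`-pairs. -/
def nG (x : AdmPair g) : ℕ := ∑ i ∈ Finset.Icc 1 g, ∑ j ∈ Finset.Icc 1 g,
  if (i < j ∧ x.w.symm j < x.w.symm i ∧ x.w.symm i ≤ g ∧ i < x.w.symm i ∧ x.w.symm j < j)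
  then 1 else 0

def nE1 (x : AdmPair g) : ℕ := ∑ u ∈ Finset.Icc 1 g, ∑ v ∈ Finset.Icc 1 g,
  if ((u < x.w.symm u ∧ x.w.symm u ≤ g) ∧ x.w.symm v ≤ u ∧ u < v) then 1 else 0

def nE2 (x : AdmPair g) : ℕ := ∑ u ∈ Finset.Icc 1 g, ∑ v ∈ Finset.Icc 1 g,
  if (x.w.symm v < v ∧ u < x.w.symm v ∧ x.w.symm v < x.w.symm u ∧ x.w.symm u ≤ g)
  then 1 else 0

def nE1' (x : AdmPair g) : ℕ := ∑ u ∈ Finset.Icc 1 g, ∑ v ∈ Finset.Icc 1 g,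
  if (x.w.symm v < v ∧ u < v ∧ v ≤ x.w.symm u ∧ x.w.symm u ≤ g) then 1 else 0

def nE2' (x : AdmPair g) : ℕ := ∑ u ∈ Finset.Icc 1 g, ∑ v ∈ Finset.Icc 1 g,
  if ((u < x.w.symm u ∧ x.w.symm u ≤ g) ∧ x.w.symm u < v ∧ x.w.symm v < x.w.symm u)
  then 1 else 0

def nU (x : AdmPair g) : ℕ := ∑ i ∈ Finset.Icc 1 g,
  if (i < x.w.symm i ∧ x.w.symm i ≤ g) then 1 else 0

def nD (x : AdmPair g) : ℕ := ∑ i ∈ Finset.Icc 1 g, if (x.w.symm i < i) then 1 else 0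

/-- converting a sum of indicators over `{1,…,g}` to the cardinality of a filter of `S`. -/
lemma sum_ite_card (c : ℕ → Prop) [DecidablePred c] (c' : ℕ → Prop) [DecidablePred c']
    (h : ∀ v ∈ Finset.Icc 1 g, c v ↔ (x.w.symm v ≤ g ∧ c' v)) :
    (∑ v ∈ Finset.Icc 1 g, if c v then 1 else 0) = ((Sf x).filter c').card := by
  have h2 : (Sf x).filter c' = (Finset.Icc 1 g).filter (fun v => x.w.symm v ≤ g ∧ c' v) := by
    rw [Sf, Finset.filter_filter]
  rw [h2, Finset.card_filter]
  exact Finset.sum_congr rfl (fun v hv => if_congr (h v hv) rfl rfl)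

variable (hx : x.PossiblyMaximal) (hg : 1 ≤ g)
include hx hg

lemma core1 : nU x + nA x ≤ nE1 x := by
  unfold nU nA nE1
  rw [Finset.sum_comm (s := Finset.Icc 1 g), ← Finset.sum_add_distrib]
  apply Finset.sum_le_sum
  intro u hu
  have hIcc : 1 ≤ u ∧ u ≤ g := Finset.mem_Icc.mp hu
  by_cases hu2 : u < x.w.symm u ∧ x.w.symm u ≤ g
  · rw [if_pos hu2]
    rw [sum_ite_card x _ (fun i => i < u ∧ x.w.symm u < x.w.symm i)
      (fun i hi => by have := Finset.mem_Icc.mp hi; omega)]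
    rw [sum_ite_card x _ (fun v => u < v ∧ x.w.symm v ≤ u)
      (fun v hv => by have := Finset.mem_Icc.mp hv; omega)]
    exact slice1 x hx hg hu hu2.1 hu2.2
  · rw [if_neg hu2]
    have e2 : (∑ i ∈ Finset.Icc 1 g, if (i < u ∧ x.w.symm u < x.w.symm i ∧ x.w.symm i ≤ g
        ∧ i < x.w.symm i ∧ u < x.w.symm u) then 1 else 0) = 0 := by
      apply Finset.sum_eq_zero
      intro i _
      rw [if_neg]
      intro hc
      exact hu2 ⟨hc.2.2.2.2, by omega⟩
    rw [e2]
    exact Nat.zero_le _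

lemma core2 : nA' x ≤ nE2 x := by
  unfold nA' nE2
  rw [Finset.sum_comm (s := Finset.Icc 1 g) (t := Finset.Icc 1 g)
    (f := fun u v => if (x.w.symm v < v ∧ u < x.w.symm v ∧ x.w.symm v < x.w.symm u
      ∧ x.w.symm u ≤ g) then 1 else 0)]
  apply Finset.sum_le_sum
  intro v hv
  have hIcc : 1 ≤ v ∧ v ≤ g := Finset.mem_Icc.mp hv
  by_cases hv2 : x.w.symm v < v
  · rw [sum_ite_card x _ (fun j => v < j ∧ x.w.symm j < x.w.symm v)
      (fun j hj => by have := Finset.mem_Icc.mp hj; omega)]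
    rw [sum_ite_card x _ (fun u => u < x.w.symm v ∧ x.w.symm v < x.w.symm u)
      (fun u hu => by have := Finset.mem_Icc.mp hu; omega)]
    exact slice2 x hx hg hv hv2
  · have e2 : (∑ j ∈ Finset.Icc 1 g, if (v < j ∧ x.w.symm j < x.w.symm v ∧ x.w.symm v ≤ g
        ∧ x.w.symm v < v ∧ x.w.symm j < j) then 1 else 0) = 0 := by
      apply Finset.sum_eq_zero
      intro j _
      rw [if_neg]
      intro hc
      exact hv2 hc.2.2.2.1
    rw [e2]
    exact Nat.zero_le _

lemma core3 : nD x + nA' x ≤ nE1' x := by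
  unfold nD nA' nE1'
  rw [Finset.sum_comm (s := Finset.Icc 1 g) (t := Finset.Icc 1 g)
    (f := fun u v => if (x.w.symm v < v ∧ u < v ∧ v ≤ x.w.symm u ∧ x.w.symm u ≤ g)
      then 1 else 0), ← Finset.sum_add_distrib]
  apply Finset.sum_le_sum
  intro v hv
  have hIcc : 1 ≤ v ∧ v ≤ g := Finset.mem_Icc.mp hv
  by_cases hv2 : x.w.symm v < v
  · rw [if_pos hv2]
    rw [sum_ite_card x _ (fun j => v < j ∧ x.w.symm j < x.w.symm v)
      (fun j hj => by have := Finset.mem_Icc.mp hj; omega)]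
    rw [sum_ite_card x _ (fun u => u < v ∧ v ≤ x.w.symm u)
      (fun u hu => by have := Finset.mem_Icc.mp hu; omega)]
    exact slice1' x hx hg hv hv2
  · rw [if_neg hv2]
    have e2 : (∑ j ∈ Finset.Icc 1 g, if (v < j ∧ x.w.symm j < x.w.symm v ∧ x.w.symm v ≤ g
        ∧ x.w.symm v < v ∧ x.w.symm j < j) then 1 else 0) = 0 := by
      apply Finset.sum_eq_zero
      intro j _
      rw [if_neg]
      intro hc
      exact hv2 hc.2.2.2.1
    rw [e2]
    exact Nat.zero_le _

lemma core4 : nA x ≤ nE2' x := by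
  unfold nA nE2'
  rw [Finset.sum_comm (s := Finset.Icc 1 g) (t := Finset.Icc 1 g)
    (f := fun i j => if (i < j ∧ x.w.symm j < x.w.symm i ∧ x.w.symm i ≤ g ∧ i < x.w.symm i
      ∧ j < x.w.symm j) then 1 else 0)]
  apply Finset.sum_le_sum
  intro u hu
  have hIcc : 1 ≤ u ∧ u ≤ g := Finset.mem_Icc.mp hu
  by_cases hu2 : u < x.w.symm u ∧ x.w.symm u ≤ g
  · rw [sum_ite_card x _ (fun i => i < u ∧ x.w.symm u < x.w.symm i)
      (fun i hi => by have := Finset.mem_Icc.mp hi; omega)]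
    rw [sum_ite_card x _ (fun v => x.w.symm u < v ∧ x.w.symm v < x.w.symm u)
      (fun v hv => by have := Finset.mem_Icc.mp hv; omega)]
    exact slice2' x hx hg hu hu2.1 hu2.2
  · have e2 : (∑ i ∈ Finset.Icc 1 g, if (i < u ∧ x.w.symm u < x.w.symm i ∧ x.w.symm i ≤ g
        ∧ i < x.w.symm i ∧ u < x.w.symm u) then 1 else 0) = 0 := by
      apply Finset.sum_eq_zero
      intro i _
      rw [if_neg]
      intro hc
      exact hu2 ⟨hc.2.2.2.2, by omega⟩
    rw [e2]
    exact Nat.zero_le _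

omit hx hg in
lemma coreE : nE1 x + nE2 x ≤ nG x := by
  unfold nE1 nE2 nG
  rw [← Finset.sum_add_distrib]
  apply Finset.sum_le_sum
  intro u _
  rw [← Finset.sum_add_distrib]
  apply Finset.sum_le_sum
  intro v _
  split_ifs <;> omega

omit hx hg in
lemma coreE' : nE1' x + nE2' x ≤ nG x := by
  unfold nE1' nE2' nG
  rw [← Finset.sum_add_distrib]
  apply Finset.sum_le_sum
  intro u _
  rw [← Finset.sum_add_distrib]
  apply Finset.sum_le_sum
  intro v _
  split_ifs <;> omega

lemma core : 2 * nA x + 2 * nA' x + (nU x + nD x) ≤ 2 * nG x := by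
  have h1 := core1 x hx hg
  have h2 := core2 x hx hg
  have h3 := core3 x hx hg
  have h4 := core4 x hx hg
  have h5 := coreE x
  have h6 := coreE' x
  omega

end AdmAux

namespace AdmAux

variable {g : ℕ} (x : AdmPair g)

def nB (x : AdmPair g) : ℕ := ∑ i ∈ Finset.Icc 1 g, ∑ j ∈ Finset.Icc 1 g,
  if (i < j ∧ x.w.symm j < x.w.symm i ∧ x.w.symm i ≤ g ∧ x.w.symm i = i ∧ x.x0 i = 1)
  then 1 else 0

def nBg (x : AdmPair g) : ℕ := ∑ i ∈ Finset.Icc 1 g, ∑ j ∈ Finset.Icc 1 g,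
  if (i < j ∧ x.w.symm j < x.w.symm i ∧ x.w.symm i ≤ g ∧ x.w.symm i = i ∧ x.x0 i = 0)
  then 1 else 0

def nB' (x : AdmPair g) : ℕ := ∑ i ∈ Finset.Icc 1 g, ∑ j ∈ Finset.Icc 1 g,
  if (i < j ∧ x.w.symm j < x.w.symm i ∧ x.w.symm i ≤ g ∧ x.w.symm j = j ∧ x.x0 j = 0)
  then 1 else 0

def nB'g (x : AdmPair g) : ℕ := ∑ i ∈ Finset.Icc 1 g, ∑ j ∈ Finset.Icc 1 g,
  if (i < j ∧ x.w.symm j < x.w.symm i ∧ x.w.symm i ≤ g ∧ x.w.symm j = j ∧ x.x0 j = 1)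
  then 1 else 0

lemma w_of_symm_fix {f : ℕ} (hfix : x.w.symm f = f) : x.w f = f := by
  have h := x.w.apply_symm_apply f
  rw [hfix] at h
  exact h

variable (hx : x.PossiblyMaximal) (hg : 1 ≤ g)
include hx hg

/-- the two-sided jump counts at a fixed point agree. -/
lemma betaEq {f : ℕ} (hf : f ∈ Finset.Icc 1 g) (hfix : x.w.symm f = f) :
    ((Finset.Icc 1 g).filter (fun j => f < j ∧ x.w.symm j < f)).card
      = ((Finset.Icc 1 g).filter (fun i => i < f ∧ f < x.w.symm i ∧ x.w.symm i ≤ g)).card := by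
  have hb := balance x hx hg f
  have hfg : 1 ≤ f ∧ f ≤ g := Finset.mem_Icc.mp hf
  have hwf : x.w f = f := w_of_symm_fix x hfix
  have e1 : (Finset.Icc 1 g).filter (fun j => f < j ∧ x.w.symm j < f)
      = (Sf x).filter (fun i => f < i ∧ x.w.symm i ≤ f) := by
    rw [Sf, Finset.filter_filter]
    apply Finset.filter_congr
    intro j _
    have hinj : x.w.symm j = f → j = f := by
      intro h
      have h2 := congrArg x.w h
      rw [x.w.apply_symm_apply, hwf] at h2
      exact h2
    constructor
    · intro ⟨h1, h2⟩; exact ⟨by omega, h1, by omega⟩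
    · intro ⟨h1, h2, h3⟩
      refine ⟨h2, ?_⟩
      by_cases h4 : x.w.symm j = f
      · have := hinj h4; omega
      · omega
  have e2 : (Finset.Icc 1 g).filter (fun i => i < f ∧ f < x.w.symm i ∧ x.w.symm i ≤ g)
      = (Sf x).filter (fun i => i ≤ f ∧ f < x.w.symm i) := by
    rw [Sf, Finset.filter_filter]
    apply Finset.filter_congr
    intro i _
    constructor
    · intro ⟨h1, h2, h3⟩; exact ⟨h3, by omega, h2⟩
    · intro ⟨h1, h2, h3⟩
      refine ⟨?_, h3, h1⟩
      by_cases h4 : i = f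
      · subst h4; omega
      · omega
  rw [e1, e2, ← hb]

lemma step8a : nB x = nB'g x := by
  unfold nB nB'g
  rw [Finset.sum_comm (s := Finset.Icc 1 g) (t := Finset.Icc 1 g)
    (f := fun i j => if (i < j ∧ x.w.symm j < x.w.symm i ∧ x.w.symm i ≤ g ∧ x.w.symm j = j
      ∧ x.x0 j = 1) then 1 else 0)]
  apply Finset.sum_congr rfl
  intro f hf
  have hfg : 1 ≤ f ∧ f ≤ g := Finset.mem_Icc.mp hf
  by_cases hc : x.w.symm f = f ∧ x.x0 f = 1
  · have l : (∑ j ∈ Finset.Icc 1 g, if (f < j ∧ x.w.symm j < x.w.symm f ∧ x.w.symm f ≤ g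
        ∧ x.w.symm f = f ∧ x.x0 f = 1) then 1 else 0)
        = ((Finset.Icc 1 g).filter (fun j => f < j ∧ x.w.symm j < f)).card := by
      rw [Finset.card_filter]
      apply Finset.sum_congr rfl
      intro j _
      apply if_congr _ rfl rfl
      constructor
      · intro h; exact ⟨h.1, by omega⟩
      · intro h; exact ⟨h.1, by omega, by omega, hc.1, hc.2⟩
    have r : (∑ i ∈ Finset.Icc 1 g, if (i < f ∧ x.w.symm f < x.w.symm i ∧ x.w.symm i ≤ g
        ∧ x.w.symm f = f ∧ x.x0 f = 1) then 1 else 0)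
        = ((Finset.Icc 1 g).filter (fun i => i < f ∧ f < x.w.symm i ∧ x.w.symm i ≤ g)).card := by
      rw [Finset.card_filter]
      apply Finset.sum_congr rfl
      intro i _
      apply if_congr _ rfl rfl
      constructor
      · intro h; exact ⟨h.1, by omega, h.2.2.1⟩
      · intro h; exact ⟨h.1, by omega, h.2.2, hc.1, hc.2⟩
    rw [l, r]
    exact betaEq x hx hg hf hc.1
  · have l : (∑ j ∈ Finset.Icc 1 g, if (f < j ∧ x.w.symm j < x.w.symm f ∧ x.w.symm f ≤ g
        ∧ x.w.symm f = f ∧ x.x0 f = 1) then 1 else 0) = 0 := by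
      apply Finset.sum_eq_zero
      intro j _
      rw [if_neg]
      intro h
      exact hc ⟨h.2.2.2.1, h.2.2.2.2⟩
    have r : (∑ i ∈ Finset.Icc 1 g, if (i < f ∧ x.w.symm f < x.w.symm i ∧ x.w.symm i ≤ g
        ∧ x.w.symm f = f ∧ x.x0 f = 1) then 1 else 0) = 0 := by
      apply Finset.sum_eq_zero
      intro i _
      rw [if_neg]
      intro h
      exact hc ⟨h.2.2.2.1, h.2.2.2.2⟩
    rw [l, r]

lemma step8b : nB' x = nBg x := by
  unfold nB' nBg
  rw [Finset.sum_comm (s := Finset.Icc 1 g) (t := Finset.Icc 1 g)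
    (f := fun i j => if (i < j ∧ x.w.symm j < x.w.symm i ∧ x.w.symm i ≤ g ∧ x.w.symm j = j
      ∧ x.x0 j = 0) then 1 else 0)]
  apply Finset.sum_congr rfl
  intro f hf
  have hfg : 1 ≤ f ∧ f ≤ g := Finset.mem_Icc.mp hf
  by_cases hc : x.w.symm f = f ∧ x.x0 f = 0
  · have l : (∑ i ∈ Finset.Icc 1 g, if (i < f ∧ x.w.symm f < x.w.symm i ∧ x.w.symm i ≤ g
        ∧ x.w.symm f = f ∧ x.x0 f = 0) then 1 else 0)
        = ((Finset.Icc 1 g).filter (fun i => i < f ∧ f < x.w.symm i ∧ x.w.symm i ≤ g)).card := by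
      rw [Finset.card_filter]
      apply Finset.sum_congr rfl
      intro i _
      apply if_congr _ rfl rfl
      constructor
      · intro h; exact ⟨h.1, by omega, h.2.2.1⟩
      · intro h; exact ⟨h.1, by omega, h.2.2, hc.1, hc.2⟩
    have r : (∑ j ∈ Finset.Icc 1 g, if (f < j ∧ x.w.symm j < x.w.symm f ∧ x.w.symm f ≤ g
        ∧ x.w.symm f = f ∧ x.x0 f = 0) then 1 else 0)
        = ((Finset.Icc 1 g).filter (fun j => f < j ∧ x.w.symm j < f)).card := by
      rw [Finset.card_filter]
      apply Finset.sum_congr rfl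
      intro j _
      apply if_congr _ rfl rfl
      constructor
      · intro h; exact ⟨h.1, by omega⟩
      · intro h; exact ⟨h.1, by omega, by omega, hc.1, hc.2⟩
    rw [l, r]
    exact (betaEq x hx hg hf hc.1).symm
  · have l : (∑ i ∈ Finset.Icc 1 g, if (i < f ∧ x.w.symm f < x.w.symm i ∧ x.w.symm i ≤ g
        ∧ x.w.symm f = f ∧ x.x0 f = 0) then 1 else 0) = 0 := by
      apply Finset.sum_eq_zero
      intro i _
      rw [if_neg]
      intro h
      exact hc ⟨h.2.2.2.1, h.2.2.2.2⟩
    have r : (∑ j ∈ Finset.Icc 1 g, if (f < j ∧ x.w.symm j < x.w.symm f ∧ x.w.symm f ≤ g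
        ∧ x.w.symm f = f ∧ x.x0 f = 0) then 1 else 0) = 0 := by
      apply Finset.sum_eq_zero
      intro j _
      rw [if_neg]
      intro h
      exact hc ⟨h.2.2.2.1, h.2.2.2.2⟩
    rw [l, r]

end AdmAux

namespace AdmAux

variable {g : ℕ} (x : AdmPair g) (hx : x.PossiblyMaximal) (hg : 1 ≤ g)
include hx hg

lemma pairP {i j : ℕ} (hi : i ∈ Finset.Icc 1 g) (hj : j ∈ Finset.Icc 1 g) (hij : i < j) :
    (if x.w.symm i < x.w.symm j then |x.x0 i - x.x0 j| else |x.x0 i - x.x0 j + 1|)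
    + (if x.w.symm i < x.w.symm (2*g+1-j) then |x.x0 i + x.x0 j - 1| else |x.x0 i + x.x0 j|)
    = 1 + (if (i < j ∧ x.w.symm j < x.w.symm i ∧ x.w.symm i ≤ g
            ∧ ¬(x.x0 i = 0 ∧ x.x0 j = 1)) then 1 else 0)
      - (if (i < j ∧ ((x.w.symm j < x.w.symm i ∧ x.w.symm i ≤ g ∧ x.x0 i = 0 ∧ x.x0 j = 1)
            ∨ (x.w.symm i ≤ g ∧ g < x.w.symm j ∧ j < x.w.symm i)
            ∨ (g < x.w.symm i ∧ x.w.symm j ≤ g ∧ x.w.symm j < i))) then 1 else 0) := by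
  have hig : 1 ≤ i ∧ i ≤ g := Finset.mem_Icc.mp hi
  have hjg : 1 ≤ j ∧ j ≤ g := Finset.mem_Icc.mp hj
  have hbi := spb x hx hg hi
  have hbj := spb x hx hg hj
  have hsymj : x.w.symm (2*g+1-j) = 2*g+1 - x.w.symm j := symm_symm x (mem_big hj)
  have hne : x.w.symm i ≠ x.w.symm j := by
    intro h
    have := x.w.symm.injective h
    omega
  have hgi : i < x.w.symm i → x.x0 i = 0 := x.x0_gt i (mem_big hi)
  have hgj : j < x.w.symm j → x.x0 j = 0 := x.x0_gt j (mem_big hj)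
  have hli : x.w.symm i < i → x.x0 i = 1 := x.x0_lt i (mem_big hi)
  have hlj : x.w.symm j < j → x.x0 j = 1 := x.x0_lt j (mem_big hj)
  have hmi : x.x0 i = 0 ∨ x.x0 i = 1 := x.x0_mem i (mem_big hi)
  have hmj : x.x0 j = 0 ∨ x.x0 j = 1 := x.x0_mem j (mem_big hj)
  rw [hsymj]
  rcases le_or_gt (x.w.symm i) g with hSi | hSi <;> rcases le_or_gt (x.w.symm j) g with hSj | hSj
  · -- SS case
    rcases hmi with h0 | h0 <;> rcases hmj with h1 | h1 <;> rw [h0, h1] <;>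
      split_ifs <;> first | (exfalso; omega) | norm_num
  · -- ST case
    have hTj2 := symm_T x hx hg hj hSj
    have haj : x.x0 j = 0 := hgj (by omega)
    have hsij : x.w.symm i ≠ j := by
      intro heq
      have h1 : x.w j = i := by
        have h2 := x.w.apply_symm_apply i
        rw [heq] at h2
        exact h2
      have h3 : x.w (x.w.symm j) = j := x.w.apply_symm_apply j
      rw [hTj2] at h3
      have h4 := x.w_symm j (mem_big hj)
      omega
    rcases hmi with h0 | h0 <;> rw [h0, haj] <;>
      split_ifs <;> first | (exfalso; omega) | norm_num
  · -- TS case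
    have hTi2 := symm_T x hx hg hi hSi
    have hai : x.x0 i = 0 := hgi (by omega)
    have hsji : x.w.symm j ≠ i := by
      intro heq
      have h1 : x.w i = j := by
        have h2 := x.w.apply_symm_apply j
        rw [heq] at h2
        exact h2
      have h3 : x.w (x.w.symm i) = i := x.w.apply_symm_apply i
      rw [hTi2] at h3
      have h4 := x.w_symm i (mem_big hi)
      omega
    rcases hmj with h1 | h1 <;> rw [hai, h1] <;>
      split_ifs <;> first | (exfalso; omega) | norm_num
  · -- TT case
    have hTi2 := symm_T x hx hg hi hSi
    have hTj2 := symm_T x hx hg hj hSj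
    have hai : x.x0 i = 0 := hgi (by omega)
    have haj : x.x0 j = 0 := hgj (by omega)
    rw [hai, haj]
    split_ifs <;> first | (exfalso; omega) | norm_num

end AdmAux

namespace AdmAux

variable {g : ℕ} (x : AdmPair g)

def nBad (x : AdmPair g) : ℕ := ∑ i ∈ Finset.Icc 1 g, ∑ j ∈ Finset.Icc 1 g,
  if (i < j ∧ x.w.symm j < x.w.symm i ∧ x.w.symm i ≤ g ∧ ¬(x.x0 i = 0 ∧ x.x0 j = 1))
  then 1 else 0

def nGood (x : AdmPair g) : ℕ := ∑ i ∈ Finset.Icc 1 g, ∑ j ∈ Finset.Icc 1 g,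
  if (i < j ∧ ((x.w.symm j < x.w.symm i ∧ x.w.symm i ≤ g ∧ x.x0 i = 0 ∧ x.x0 j = 1)
      ∨ (x.w.symm i ≤ g ∧ g < x.w.symm j ∧ j < x.w.symm i)
      ∨ (g < x.w.symm i ∧ x.w.symm j ≤ g ∧ x.w.symm j < i))) then 1 else 0

def nT (x : AdmPair g) : ℕ := ∑ i ∈ Finset.Icc 1 g, if g < x.w.symm i then 1 else 0

def nFx (x : AdmPair g) : ℕ := ∑ i ∈ Finset.Icc 1 g, if x.w.symm i = i then 1 else 0

def nN2 (g : ℕ) : ℕ := ∑ i ∈ Finset.Icc 1 g, ∑ j ∈ Finset.Icc 1 g, if i < j then 1 else 0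

lemma step6 : nBad x ≤ nA x + nA' x + nB x + nB' x := by
  unfold nBad nA nA' nB nB'
  rw [← Finset.sum_add_distrib, ← Finset.sum_add_distrib, ← Finset.sum_add_distrib]
  apply Finset.sum_le_sum
  intro i hi
  rw [← Finset.sum_add_distrib, ← Finset.sum_add_distrib, ← Finset.sum_add_distrib]
  apply Finset.sum_le_sum
  intro j hj
  have hgi : i < x.w.symm i → x.x0 i = 0 := x.x0_gt i (mem_big hi)
  have hgj : j < x.w.symm j → x.x0 j = 0 := x.x0_gt j (mem_big hj)
  have hli : x.w.symm i < i → x.x0 i = 1 := x.x0_lt i (mem_big hi)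
  have hlj : x.w.symm j < j → x.x0 j = 1 := x.x0_lt j (mem_big hj)
  have hmi : x.x0 i = 0 ∨ x.x0 i = 1 := x.x0_mem i (mem_big hi)
  have hmj : x.x0 j = 0 ∨ x.x0 j = 1 := x.x0_mem j (mem_big hj)
  split_ifs <;> omega

lemma step7 : nG x + nBg x + nB'g x ≤ nGood x := by
  unfold nG nBg nB'g nGood
  rw [← Finset.sum_add_distrib, ← Finset.sum_add_distrib]
  apply Finset.sum_le_sum
  intro i hi
  rw [← Finset.sum_add_distrib, ← Finset.sum_add_distrib]
  apply Finset.sum_le_sum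
  intro j hj
  have hgi : i < x.w.symm i → x.x0 i = 0 := x.x0_gt i (mem_big hi)
  have hgj : j < x.w.symm j → x.x0 j = 0 := x.x0_gt j (mem_big hj)
  have hli : x.w.symm i < i → x.x0 i = 1 := x.x0_lt i (mem_big hi)
  have hlj : x.w.symm j < j → x.x0 j = 1 := x.x0_lt j (mem_big hj)
  have hmi : x.x0 i = 0 ∨ x.x0 i = 1 := x.x0_mem i (mem_big hi)
  have hmj : x.x0 j = 0 ∨ x.x0 j = 1 := x.x0_mem j (mem_big hj)
  split_ifs <;> omega

lemma partition : nT x + nFx x + nU x + nD x = g := by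
  unfold nT nFx nU nD
  rw [← Finset.sum_add_distrib, ← Finset.sum_add_distrib, ← Finset.sum_add_distrib]
  have h1 : ∀ i ∈ Finset.Icc 1 g,
      ((if g < x.w.symm i then 1 else 0) + (if x.w.symm i = i then 1 else 0)
      + (if i < x.w.symm i ∧ x.w.symm i ≤ g then 1 else 0)
      + (if x.w.symm i < i then 1 else 0) : ℕ) = 1 := by
    intro i hi
    have := Finset.mem_Icc.mp hi
    split_ifs <;> omega
  rw [Finset.sum_congr rfl h1, Finset.sum_const, Nat.card_Icc, smul_eq_mul]
  omega

lemma fxEq : nFx x = x.prank := by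
  unfold nFx AdmPair.prank
  rw [Finset.card_filter]
  apply Finset.sum_congr rfl
  intro i _
  apply if_congr _ rfl rfl
  constructor
  · intro h
    exact w_of_symm_fix x h
  · intro h
    have h2 := x.w.symm_apply_apply i
    rw [h] at h2
    exact h2

lemma n2Eq : 2 * nN2 g + g = g * g := by
  have hcard : (Finset.Icc 1 g).card = g := by
    rw [Nat.card_Icc]; omega
  have htot : ∑ i ∈ Finset.Icc 1 g, ∑ j ∈ Finset.Icc 1 g,
      ((if i < j then 1 else 0) + (if j < i then 1 else 0) + (if i = j then 1 else 0) : ℕ)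
      = g * g := by
    have h1 : ∀ i ∈ Finset.Icc 1 g, ∀ j ∈ Finset.Icc 1 g,
        ((if i < j then 1 else 0) + (if j < i then 1 else 0) + (if i = j then 1 else 0) : ℕ)
        = 1 := by
      intro i _ j _
      split_ifs <;> omega
    calc ∑ i ∈ Finset.Icc 1 g, ∑ j ∈ Finset.Icc 1 g,
        ((if i < j then 1 else 0) + (if j < i then 1 else 0) + (if i = j then 1 else 0) : ℕ)
        = ∑ i ∈ Finset.Icc 1 g, ∑ j ∈ Finset.Icc 1 g, (1 : ℕ) := by
          apply Finset.sum_congr rfl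
          intro i hi
          exact Finset.sum_congr rfl (h1 i hi)
    _ = g * g := by
          rw [Finset.sum_const, Finset.sum_const, hcard, smul_eq_mul, smul_eq_mul, mul_one]
  have hswap : (∑ i ∈ Finset.Icc 1 g, ∑ j ∈ Finset.Icc 1 g, if j < i then (1:ℕ) else 0)
      = nN2 g := by
    rw [Finset.sum_comm]
    rfl
  have hdiag : (∑ i ∈ Finset.Icc 1 g, ∑ j ∈ Finset.Icc 1 g, if i = j then (1:ℕ) else 0)
      = g := by
    have h2 : ∀ i ∈ Finset.Icc 1 g,
        (∑ j ∈ Finset.Icc 1 g, if i = j then (1:ℕ) else 0) = 1 := by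
      intro i hi
      rw [Finset.sum_ite_eq]
      exact if_pos hi
    rw [Finset.sum_congr rfl h2, Finset.sum_const, hcard, smul_eq_mul, mul_one]
  have hsplit : ∑ i ∈ Finset.Icc 1 g, ∑ j ∈ Finset.Icc 1 g,
      ((if i < j then 1 else 0) + (if j < i then 1 else 0) + (if i = j then 1 else 0) : ℕ)
      = nN2 g + (∑ i ∈ Finset.Icc 1 g, ∑ j ∈ Finset.Icc 1 g, if j < i then (1:ℕ) else 0)
        + (∑ i ∈ Finset.Icc 1 g, ∑ j ∈ Finset.Icc 1 g, if i = j then (1:ℕ) else 0) := by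
    unfold nN2
    rw [← Finset.sum_add_distrib, ← Finset.sum_add_distrib]
    apply Finset.sum_congr rfl
    intro i _
    rw [← Finset.sum_add_distrib, ← Finset.sum_add_distrib]
  rw [hsplit, hswap, hdiag] at htot
  omega

lemma cast2 (c : ℕ → ℕ → Prop) [∀ i j, Decidable (c i j)] :
    (∑ i ∈ Finset.Icc 1 g, ∑ j ∈ Finset.Icc 1 g, if c i j then (1:ℤ) else 0)
      = ((∑ i ∈ Finset.Icc 1 g, ∑ j ∈ Finset.Icc 1 g, if c i j then 1 else 0 : ℕ) : ℤ) := by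
  push_cast
  apply Finset.sum_congr rfl
  intro i _
  apply Finset.sum_congr rfl
  intro j _
  split_ifs <;> simp

variable (hx : x.PossiblyMaximal) (hg : 1 ≤ g)
include hx hg

lemma thirdSum :
    (∑ i ∈ Finset.Icc 1 g, if x.w.symm i < x.w.symm (2*g+1-i) then |2 * x.x0 i - 1|
      else |2 * x.x0 i|) = (g : ℤ) - (nT x : ℤ) := by
  have hmain : (∑ i ∈ Finset.Icc 1 g, if x.w.symm i < x.w.symm (2*g+1-i) then |2 * x.x0 i - 1|
      else |2 * x.x0 i|) = ∑ i ∈ Finset.Icc 1 g, ((1:ℤ) - if g < x.w.symm i then 1 else 0) := by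
    apply Finset.sum_congr rfl
    intro i hi
    have hig := Finset.mem_Icc.mp hi
    have hbi := spb x hx hg hi
    have hsym : x.w.symm (2*g+1-i) = 2*g+1 - x.w.symm i := symm_symm x (mem_big hi)
    have hgi : i < x.w.symm i → x.x0 i = 0 := x.x0_gt i (mem_big hi)
    have hmi : x.x0 i = 0 ∨ x.x0 i = 1 := x.x0_mem i (mem_big hi)
    rw [hsym]
    by_cases hc : g < x.w.symm i
    · rw [if_neg (by omega), if_pos hc, hgi (by omega)]
      norm_num
    · rw [if_pos (by omega), if_neg hc]
      rcases hmi with h | h <;> rw [h] <;> norm_num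
  rw [hmain, Finset.sum_sub_distrib]
  have h1 : (∑ _i ∈ Finset.Icc 1 g, (1:ℤ)) = (g : ℤ) := by
    rw [Finset.sum_const, Nat.card_Icc, nsmul_eq_mul, mul_one]
    have h : g + 1 - 1 = g := by omega
    rw [h]
  have h2 : (∑ i ∈ Finset.Icc 1 g, if g < x.w.symm i then (1:ℤ) else 0) = (nT x : ℤ) := by
    unfold nT
    push_cast
    apply Finset.sum_congr rfl
    intro i _
    split_ifs <;> simp
  rw [h1, h2]

lemma lenEq : x.len = ((nN2 g : ℕ) : ℤ) + (nBad x : ℤ) - (nGood x : ℤ)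
    + (g : ℤ) - (nT x : ℤ) := by
  unfold AdmPair.len
  rw [thirdSum x hx hg]
  have hAB : (∑ i ∈ Finset.Icc 1 g, ∑ j ∈ Finset.Icc 1 g,
      if i < j then
        (if x.w.symm i < x.w.symm j then |x.x0 i - x.x0 j|
         else |x.x0 i - x.x0 j + 1|)
      else 0)
    + (∑ i ∈ Finset.Icc 1 g, ∑ j ∈ Finset.Icc 1 g,
      if i < j then
        (if x.w.symm i < x.w.symm (2*g+1-j) then |x.x0 i + x.x0 j - 1|
         else |x.x0 i + x.x0 j|)
      else 0)
    = ((nN2 g : ℕ) : ℤ) + (nBad x : ℤ) - (nGood x : ℤ) := by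
    simp only [← Finset.sum_add_distrib]
    have hptw : ∀ i ∈ Finset.Icc 1 g, ∀ j ∈ Finset.Icc 1 g,
        ((if i < j then
          (if x.w.symm i < x.w.symm j then |x.x0 i - x.x0 j|
           else |x.x0 i - x.x0 j + 1|)
        else 0)
        + (if i < j then
          (if x.w.symm i < x.w.symm (2*g+1-j) then |x.x0 i + x.x0 j - 1|
           else |x.x0 i + x.x0 j|)
        else 0))
        = (if i < j then (1:ℤ) else 0)
          + (if (i < j ∧ x.w.symm j < x.w.symm i ∧ x.w.symm i ≤ g
              ∧ ¬(x.x0 i = 0 ∧ x.x0 j = 1)) then (1:ℤ) else 0)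
          - (if (i < j ∧ ((x.w.symm j < x.w.symm i ∧ x.w.symm i ≤ g ∧ x.x0 i = 0 ∧ x.x0 j = 1)
              ∨ (x.w.symm i ≤ g ∧ g < x.w.symm j ∧ j < x.w.symm i)
              ∨ (g < x.w.symm i ∧ x.w.symm j ≤ g ∧ x.w.symm j < i))) then (1:ℤ) else 0) := by
      intro i hi j hj
      by_cases hij : i < j
      · rw [if_pos hij, if_pos hij, if_pos hij]
        exact pairP x hx hg hi hj hij
      · rw [if_neg hij, if_neg hij, if_neg hij,
          if_neg (fun h => hij h.1), if_neg (fun h => hij h.1)]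
        ring
    have hsum : (∑ i ∈ Finset.Icc 1 g, ∑ j ∈ Finset.Icc 1 g,
        ((if i < j then
          (if x.w.symm i < x.w.symm j then |x.x0 i - x.x0 j|
           else |x.x0 i - x.x0 j + 1|)
        else 0)
        + (if i < j then
          (if x.w.symm i < x.w.symm (2*g+1-j) then |x.x0 i + x.x0 j - 1|
           else |x.x0 i + x.x0 j|)
        else 0)))
        = ∑ i ∈ Finset.Icc 1 g, ∑ j ∈ Finset.Icc 1 g,
          ((if i < j then (1:ℤ) else 0)
          + (if (i < j ∧ x.w.symm j < x.w.symm i ∧ x.w.symm i ≤ g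
              ∧ ¬(x.x0 i = 0 ∧ x.x0 j = 1)) then (1:ℤ) else 0)
          - (if (i < j ∧ ((x.w.symm j < x.w.symm i ∧ x.w.symm i ≤ g ∧ x.x0 i = 0 ∧ x.x0 j = 1)
              ∨ (x.w.symm i ≤ g ∧ g < x.w.symm j ∧ j < x.w.symm i)
              ∨ (g < x.w.symm i ∧ x.w.symm j ≤ g ∧ x.w.symm j < i))) then (1:ℤ) else 0)) := by
      apply Finset.sum_congr rfl
      intro i hi
      apply Finset.sum_congr rfl
      intro j hj
      exact hptw i hi j hj
    rw [hsum]
    simp only [Finset.sum_sub_distrib, Finset.sum_add_distrib]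
    rw [cast2 (fun i j => i < j), cast2, cast2]
    rfl
  rw [hAB]
  ring

theorem main_bound : 2 * x.len ≤ (g:ℤ)^2 + (x.prank : ℤ) := by
  have hlen := lenEq x hx hg
  have h6 := step6 x
  have h7 := step7 x
  have h8a := step8a x hx hg
  have h8b := step8b x hx hg
  have hcore := core x hx hg
  have hpart := partition x
  have hfx := fxEq x
  have hn2 := n2Eq (g := g)
  have hsq : ((g:ℤ))^2 = ((g*g : ℕ) : ℤ) := by push_cast; ring
  rw [hlen, hsq, ← hfx]
  omega

end AdmAux
/-- A possibly maximal μ-admissible pair `x` of p-rank `d`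
satisfies `ℓ(x) ≤ ⌊(g² + d)/2⌋`. -/
theorem len_le_of_possiblyMaximal (g : ℕ) (hg : 1 ≤ g) (x : AdmPair g)
    (hx : x.PossiblyMaximal) :
    x.len ≤ ((g : ℤ)^2 + (x.prank : ℤ)) / 2 := by
  rw [Int.le_ediv_iff_mul_le (by norm_num : (0:ℤ) < 2)]
  have h := AdmAux.main_bound x hx hg
  linarith
end

section
/- Let g ≥ 1, let 0 ≤ d ≤ g and set m = ⌊(g−d)/2⌋. Define w ∈ W as follows on {1,…,g}: w(2k−1) = 2k and w(2k) = 2k−1 for 1 ≤ k ≤ m; if g − d is odd then w(g−d) = g+d+1 (= 2g+1−(g−d)); w(i) = i for g−d < i ≤ g; and w is extended to {g+1,…,2g} by w(2g+1−i) = 2g+1−w(i). Then every μ-admissible pair x = (x_0, w) with this w satisfies ℓ(x) = ⌊(g² + d)/2⌋ (and such x_0 exist). -/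
set_option maxHeartbeats 1000000

lemma swl_sum_pairs (f : ℕ → ℤ) (m : ℕ) :
    ∑ i ∈ Finset.Icc 1 (2*m), f i = ∑ k ∈ Finset.Icc 1 m, (f (2*k-1) + f (2*k)) := by
  induction m with
  | zero => simp
  | succ m ih =>
    rw [show 2*(m+1) = (2*m+1)+1 from by ring]
    rw [Finset.sum_Icc_succ_top (by omega : 1 ≤ (2*m+1)+1), Finset.sum_Icc_succ_top (by omega : 1 ≤ 2*m+1), ih,
        Finset.sum_Icc_succ_top (by omega : 1 ≤ m+1)]
    rw [show 2*(m+1)-1 = 2*m+1 from by omega, show 2*(m+1) = (2*m+1)+1 from by ring]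
    ring

lemma swl_strict_pairs_sum (c : ℤ) (s : Finset ℕ) :
    2 * ∑ i ∈ s, ∑ j ∈ s, (if i < j then c else 0) = c * ((s.card : ℤ) * s.card - s.card) := by
  have hs : (∑ i ∈ s, ∑ j ∈ s, (if i < j then c else 0))
      = ∑ i ∈ s, ∑ j ∈ s, (if j < i then c else 0) := Finset.sum_comm
  rw [two_mul]
  nth_rewrite 2 [hs]
  rw [← Finset.sum_add_distrib]
  have h2 : ∀ i ∈ s, ((∑ j ∈ s, (if i < j then c else 0)) + (∑ j ∈ s, (if j < i then c else 0)))
      = ∑ j ∈ s, (c - (if j = i then c else 0)) := by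
    intro i _
    rw [← Finset.sum_add_distrib]
    refine Finset.sum_congr rfl fun j _ => ?_
    rcases lt_trichotomy i j with h|h|h
    · simp [h, not_lt.mpr h.le, h.ne']
    · simp [h]
    · simp [h, not_lt.mpr h.le, h.ne]
  rw [Finset.sum_congr rfl h2]
  rw [Finset.sum_congr rfl (fun i hi => by
    rw [Finset.sum_sub_distrib, Finset.sum_const, Finset.sum_ite_eq' s i (fun _ => c), if_pos hi])]
  rw [Finset.sum_const]
  simp only [nsmul_eq_mul]
  ring

lemma swl_sum_block_zero (s t : Finset ℕ) (F : ℕ → ℕ → ℤ) (h : ∀ i ∈ s, ∀ j ∈ t, ¬ i < j) :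
    ∑ i ∈ s, ∑ j ∈ t, (if i < j then F i j else 0) = 0 :=
  Finset.sum_eq_zero fun i hi => Finset.sum_eq_zero fun j hj => if_neg (h i hi j hj)
/-- The condition on the `W`-component `w` of Statement 7: on `{1,…,g}`,
`w` interchanges `2k−1` and `2k` for `1 ≤ k ≤ ⌊(g−d)/2⌋`, sends `g−d` to
`g+d+1 = 2g+1−(g−d)` if `g − d` is odd, and fixes `i` for `g−d < i ≤ g`. -/
def SpecialW (g d : ℕ) (x : AdmPair g) : Prop :=
  (∀ k ∈ Finset.Icc 1 ((g - d) / 2), x.w (2*k-1) = 2*k ∧ x.w (2*k) = 2*k-1) ∧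
  (Odd (g - d) → x.w (g - d) = g + d + 1) ∧
  (∀ i ∈ Finset.Icc 1 g, g - d < i → x.w i = i)

def swlW (g r : ℕ) : ℕ → ℕ := fun i =>
  if (1 ≤ i ∧ i ≤ 2*(r/2)) ∨ (2*g+1-2*(r/2) ≤ i ∧ i ≤ 2*g) then (if i % 2 = 1 then i+1 else i-1)
  else if r % 2 = 1 ∧ i = r then 2*g+1-r
  else if r % 2 = 1 ∧ i = 2*g+1-r then r
  else i

def swlX (g r : ℕ) : ℕ → ℤ := fun i =>
  if (1 ≤ i ∧ i ≤ 2*(r/2)) ∨ (2*g+1-2*(r/2) ≤ i ∧ i ≤ 2*g) then (if i % 2 = 1 then 0 else 1)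
  else if r % 2 = 1 ∧ i = r then 0
  else if r % 2 = 1 ∧ i = 2*g+1-r then 1
  else if r < i ∧ i ≤ g then 0
  else if g+1 ≤ i ∧ i ≤ 2*g - r then 1
  else 0

lemma swlW_invol (g r : ℕ) (hr : r ≤ g) : Function.Involutive (swlW g r) := by
  intro i
  simp only [swlW]
  split_ifs <;> (try simp only [and_true] at *) <;> omega

def specPair (g d : ℕ) (hg : 1 ≤ g) (hd : d ≤ g) : AdmPair g where
  w := Function.Involutive.toPerm (swlW g (g-d)) (swlW_invol g (g-d) (by omega))
  x0 := swlX g (g-d)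
  w_fix := by
    intro i hi
    simp only [Finset.mem_Icc, not_and, not_le] at hi
    show swlW g (g-d) i = i
    simp only [swlW]; split_ifs <;> (try simp only [and_true] at *) <;> omega
  w_symm := by
    intro i hi
    simp only [Finset.mem_Icc] at hi
    show swlW g (g-d) (2*g+1-i) = 2*g+1 - swlW g (g-d) i
    simp only [swlW]; split_ifs <;> (try simp only [and_true] at *) <;> omega
  x0_mem := by
    intro i _
    simp only [swlX]; split_ifs <;> simp
  x0_out := by
    intro i hi
    simp only [Finset.mem_Icc, not_and, not_le] at hi
    simp only [swlX]; split_ifs <;> (try simp only [and_true] at *) <;> omega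
  x0_sum := by
    intro i hi
    simp only [Finset.mem_Icc] at hi
    simp only [swlX]; split_ifs <;> (try simp only [and_true] at *) <;> omega
  x0_gt := by
    intro i hi
    simp only [Finset.mem_Icc] at hi
    rw [Function.Involutive.toPerm_symm]
    intro hlt
    rw [show ((swlW_invol g (g-d) (by omega)).toPerm (swlW g (g-d))) i = swlW g (g-d) i from rfl] at hlt
    simp only [swlW] at hlt
    simp only [swlX]
    split_ifs at hlt ⊢ <;> (try simp only [and_true] at *) <;> omega
  x0_lt := by
    intro i hi
    simp only [Finset.mem_Icc] at hi
    rw [Function.Involutive.toPerm_symm]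
    intro hlt
    rw [show ((swlW_invol g (g-d) (by omega)).toPerm (swlW g (g-d))) i = swlW g (g-d) i from rfl] at hlt
    simp only [swlW] at hlt
    simp only [swlX]
    split_ifs at hlt ⊢ <;> (try simp only [and_true] at *) <;> omega

lemma specPair_special (g d : ℕ) (hg : 1 ≤ g) (hd : d ≤ g) : SpecialW g d (specPair g d hg hd) := by
  refine ⟨?_, ?_, ?_⟩
  · intro k hk
    simp only [Finset.mem_Icc] at hk
    constructor
    · show swlW g (g-d) (2*k-1) = 2*k
      simp only [swlW]; split_ifs <;> (try simp only [and_true] at *) <;> omega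
    · show swlW g (g-d) (2*k) = 2*k-1
      simp only [swlW]; split_ifs <;> (try simp only [and_true] at *) <;> omega
  · intro hodd
    rw [Nat.odd_iff] at hodd
    show swlW g (g-d) (g-d) = g+d+1
    simp only [swlW]; split_ifs <;> (try simp only [and_true] at *) <;> omega
  · intro i hi hlt
    simp only [Finset.mem_Icc] at hi
    show swlW g (g-d) i = i
    simp only [swlW]; split_ifs <;> (try simp only [and_true] at *) <;> omega

/-- Every μ-admissible pair with the explicit `W`-component
above has length `⌊(g² + d)/2⌋`, and such pairs exist. -/
theorem special_w_len (g d : ℕ) (hg : 1 ≤ g) (hd : d ≤ g) :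
    (∃ x : AdmPair g, SpecialW g d x) ∧
    (∀ x : AdmPair g, SpecialW g d x →
      x.len = ((g : ℤ)^2 + (d : ℤ)) / 2) := by
  constructor
  · exact ⟨specPair g d hg hd, specPair_special g d hg hd⟩

  · intro x hx
    obtain ⟨hw1, hw2, hw3⟩ := hx
    have hsymm_mem : ∀ i, i ∈ Finset.Icc 1 (2*g) → x.w.symm i ∈ Finset.Icc 1 (2*g) := by
      intro i hi
      by_contra h
      have h1 : x.w (x.w.symm i) = x.w.symm i := x.w_fix _ h
      rw [Equiv.apply_symm_apply] at h1
      rw [← h1] at h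
      exact h hi
    have hmirror : ∀ j ∈ Finset.Icc 1 (2*g), x.w.symm (2*g+1-j) = 2*g+1 - x.w.symm j := by
      intro j hj
      have h1 := hsymm_mem j hj
      simp only [Finset.mem_Icc] at h1
      have h2 := x.w_symm (x.w.symm j) (by simp only [Finset.mem_Icc]; omega)
      rw [Equiv.apply_symm_apply] at h2
      exact (Equiv.symm_apply_eq x.w).2 h2.symm
    have hτo : ∀ k, 1 ≤ k → k ≤ (g-d)/2 → x.w.symm (2*k-1) = 2*k := by
      intro k h1 h2
      rw [Equiv.symm_apply_eq]
      exact ((hw1 k (by simp only [Finset.mem_Icc]; omega)).2).symm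
    have hτe : ∀ k, 1 ≤ k → k ≤ (g-d)/2 → x.w.symm (2*k) = 2*k-1 := by
      intro k h1 h2
      rw [Equiv.symm_apply_eq]
      exact ((hw1 k (by simp only [Finset.mem_Icc]; omega)).1).symm
    have hτf : ∀ j, g-d < j → j ≤ g → x.w.symm j = j := by
      intro j h1 h2
      rw [Equiv.symm_apply_eq]
      exact (hw3 j (by simp only [Finset.mem_Icc]; omega) h1).symm
    have hx0o : ∀ k, 1 ≤ k → k ≤ (g-d)/2 → x.x0 (2*k-1) = 0 := by
      intro k h1 h2
      exact x.x0_gt _ (by simp only [Finset.mem_Icc]; omega) (by rw [hτo k h1 h2]; omega)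
    have hx0e : ∀ k, 1 ≤ k → k ≤ (g-d)/2 → x.x0 (2*k) = 1 := by
      intro k h1 h2
      exact x.x0_lt _ (by simp only [Finset.mem_Icc]; omega) (by rw [hτe k h1 h2]; omega)
    have hx0c : ∀ j, g-d < j → j ≤ g → x.x0 j = 0 ∨ x.x0 j = 1 := by
      intro j h1 h2; exact x.x0_mem j (by simp only [Finset.mem_Icc]; omega)
    have hsplitF : ∀ f : ℕ → ℤ, ∑ i ∈ Finset.Icc 1 g, f i
        = (∑ i ∈ Finset.Icc 1 (2*((g-d)/2)), f i)
          + (∑ i ∈ Finset.Icc (2*((g-d)/2)+1) (g-d), f i)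
          + (∑ i ∈ Finset.Icc ((g-d)+1) g, f i) := by
      intro f
      have e1 : Finset.Icc 1 g
          = (Finset.Icc 1 (2*((g-d)/2)) ∪ Finset.Icc (2*((g-d)/2)+1) (g-d)) ∪ Finset.Icc ((g-d)+1) g := by
        ext t; simp only [Finset.mem_union, Finset.mem_Icc]; omega
      rw [e1, Finset.sum_union (by
          rw [Finset.disjoint_left]; intro a ha hb
          simp only [Finset.mem_union, Finset.mem_Icc] at ha hb; omega),
        Finset.sum_union (by
          rw [Finset.disjoint_left]; intro a ha hb
          simp only [Finset.mem_Icc] at ha hb; omega)]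
    have hAA1 : (∑ i ∈ Finset.Icc 1 (2*((g-d)/2)), ∑ j ∈ Finset.Icc 1 (2*((g-d)/2)),
          if i < j then
            (if x.w.symm i < x.w.symm j then |x.x0 i - x.x0 j|
             else |x.x0 i - x.x0 j + 1|)
          else 0)
        = ∑ k ∈ Finset.Icc 1 ((g-d)/2), ∑ l ∈ Finset.Icc 1 ((g-d)/2), (if k < l then (2:ℤ) else 0) := by
      simp only [swl_sum_pairs]
      simp only [← Finset.sum_add_distrib]
      refine Finset.sum_congr rfl fun k hk => Finset.sum_congr rfl fun l hl => ?_
      simp only [Finset.mem_Icc] at hk hl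
      rw [hτo k hk.1 hk.2, hτe k hk.1 hk.2, hτo l hl.1 hl.2, hτe l hl.1 hl.2,
          hx0o k hk.1 hk.2, hx0e k hk.1 hk.2, hx0o l hl.1 hl.2, hx0e l hl.1 hl.2]
      rcases lt_trichotomy k l with h|h|h
      · simp only [if_pos (show 2*k-1 < 2*l-1 by omega), if_pos (show 2*k-1 < 2*l by omega),
          if_pos (show 2*k < 2*l-1 by omega), if_pos (show 2*k < 2*l by omega), if_pos h]
        norm_num
      · subst h
        simp only [if_neg (show ¬(2*k-1 < 2*k-1) by omega), if_neg (show ¬(2*k < 2*k) by omega),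
          if_pos (show 2*k-1 < 2*k by omega), if_neg (show ¬(2*k < 2*k-1) by omega),
          if_neg (lt_irrefl k)]
        norm_num
      · simp only [if_neg (show ¬(2*k-1 < 2*l-1) by omega), if_neg (show ¬(2*k-1 < 2*l) by omega),
          if_neg (show ¬(2*k < 2*l-1) by omega), if_neg (show ¬(2*k < 2*l) by omega),
          if_neg (show ¬(k < l) by omega)]
        norm_num
    have hAA2 : (∑ i ∈ Finset.Icc 1 (2*((g-d)/2)), ∑ j ∈ Finset.Icc 1 (2*((g-d)/2)),
          if i < j then
            (if x.w.symm i < x.w.symm (2*g+1-j) then |x.x0 i + x.x0 j - 1|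
             else |x.x0 i + x.x0 j|)
          else 0)
        = ∑ k ∈ Finset.Icc 1 ((g-d)/2), ∑ l ∈ Finset.Icc 1 ((g-d)/2), (if k < l then (2:ℤ) else 0) := by
      simp only [swl_sum_pairs]
      simp only [← Finset.sum_add_distrib]
      refine Finset.sum_congr rfl fun k hk => Finset.sum_congr rfl fun l hl => ?_
      simp only [Finset.mem_Icc] at hk hl
      rw [hmirror (2*l-1) (by simp only [Finset.mem_Icc]; omega),
          hmirror (2*l) (by simp only [Finset.mem_Icc]; omega),
          hτo k hk.1 hk.2, hτe k hk.1 hk.2, hτo l hl.1 hl.2, hτe l hl.1 hl.2,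
          hx0o k hk.1 hk.2, hx0e k hk.1 hk.2, hx0o l hl.1 hl.2, hx0e l hl.1 hl.2]
      rcases lt_trichotomy k l with h|h|h
      · simp only [if_pos (show 2*k-1 < 2*l-1 by omega), if_pos (show 2*k-1 < 2*l by omega),
          if_pos (show 2*k < 2*l-1 by omega), if_pos (show 2*k < 2*l by omega),
          if_pos (show 2*k < 2*g+1-(2*l) by omega), if_pos (show 2*k < 2*g+1-(2*l-1) by omega),
          if_pos (show 2*k-1 < 2*g+1-(2*l) by omega), if_pos (show 2*k-1 < 2*g+1-(2*l-1) by omega),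
          if_pos h]
        norm_num
      · subst h
        simp only [if_neg (show ¬(2*k-1 < 2*k-1) by omega), if_neg (show ¬(2*k < 2*k) by omega),
          if_pos (show 2*k-1 < 2*k by omega), if_neg (show ¬(2*k < 2*k-1) by omega),
          if_pos (show 2*k < 2*g+1-(2*k) by omega), if_pos (show 2*k < 2*g+1-(2*k-1) by omega),
          if_pos (show 2*k-1 < 2*g+1-(2*k) by omega), if_pos (show 2*k-1 < 2*g+1-(2*k-1) by omega),
          if_neg (lt_irrefl k)]
        norm_num
      · simp only [if_neg (show ¬(2*k-1 < 2*l-1) by omega), if_neg (show ¬(2*k-1 < 2*l) by omega),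
          if_neg (show ¬(2*k < 2*l-1) by omega), if_neg (show ¬(2*k < 2*l) by omega),
          if_neg (show ¬(k < l) by omega)]
        norm_num
    have hAC1 : (∑ i ∈ Finset.Icc 1 (2*((g-d)/2)), ∑ j ∈ Finset.Icc ((g-d)+1) g,
          if i < j then
            (if x.w.symm i < x.w.symm j then |x.x0 i - x.x0 j|
             else |x.x0 i - x.x0 j + 1|)
          else 0)
        = (((g-d)/2 : ℕ) : ℤ) * (d : ℤ) := by
      simp only [swl_sum_pairs]
      simp only [← Finset.sum_add_distrib]
      trans (∑ k ∈ Finset.Icc 1 ((g-d)/2), ∑ j ∈ Finset.Icc ((g-d)+1) g, (1:ℤ))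
      · refine Finset.sum_congr rfl fun k hk => Finset.sum_congr rfl fun j hj => ?_
        simp only [Finset.mem_Icc] at hk hj
        rw [hτo k hk.1 hk.2, hτe k hk.1 hk.2, hτf j (by omega) hj.2,
            hx0o k hk.1 hk.2, hx0e k hk.1 hk.2]
        rcases hx0c j (by omega) hj.2 with he|he <;> rw [he] <;>
          simp only [if_pos (show 2*k-1 < j by omega), if_pos (show 2*k < j by omega)] <;>
          norm_num
      · simp only [Finset.sum_const, nsmul_eq_mul, mul_one, Nat.card_Icc]
        rw [show g+1-((g-d)+1) = d from by omega, show (g-d)/2+1-1 = (g-d)/2 from by omega]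
    have hAC2 : (∑ i ∈ Finset.Icc 1 (2*((g-d)/2)), ∑ j ∈ Finset.Icc ((g-d)+1) g,
          if i < j then
            (if x.w.symm i < x.w.symm (2*g+1-j) then |x.x0 i + x.x0 j - 1|
             else |x.x0 i + x.x0 j|)
          else 0)
        = (((g-d)/2 : ℕ) : ℤ) * (d : ℤ) := by
      simp only [swl_sum_pairs]
      simp only [← Finset.sum_add_distrib]
      trans (∑ k ∈ Finset.Icc 1 ((g-d)/2), ∑ j ∈ Finset.Icc ((g-d)+1) g, (1:ℤ))
      · refine Finset.sum_congr rfl fun k hk => Finset.sum_congr rfl fun j hj => ?_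
        simp only [Finset.mem_Icc] at hk hj
        rw [hmirror j (by simp only [Finset.mem_Icc]; omega),
            hτo k hk.1 hk.2, hτe k hk.1 hk.2, hτf j (by omega) hj.2,
            hx0o k hk.1 hk.2, hx0e k hk.1 hk.2]
        rcases hx0c j (by omega) hj.2 with he|he <;> rw [he] <;>
          simp only [if_pos (show 2*k-1 < j by omega), if_pos (show 2*k < j by omega),
            if_pos (show 2*k < 2*g+1-j by omega), if_pos (show 2*k-1 < 2*g+1-j by omega)] <;>
          norm_num
      · simp only [Finset.sum_const, nsmul_eq_mul, mul_one, Nat.card_Icc]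
        rw [show g+1-((g-d)+1) = d from by omega, show (g-d)/2+1-1 = (g-d)/2 from by omega]
    have hCC1 : (∑ i ∈ Finset.Icc ((g-d)+1) g, ∑ j ∈ Finset.Icc ((g-d)+1) g,
          if i < j then
            (if x.w.symm i < x.w.symm j then |x.x0 i - x.x0 j|
             else |x.x0 i - x.x0 j + 1|)
          else 0)
        = ∑ i ∈ Finset.Icc ((g-d)+1) g, ∑ j ∈ Finset.Icc ((g-d)+1) g,
            (if i < j then |x.x0 i - x.x0 j| else 0) := by
      refine Finset.sum_congr rfl fun i hi => Finset.sum_congr rfl fun j hj => ?_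
      simp only [Finset.mem_Icc] at hi hj
      rw [hτf i (by omega) hi.2, hτf j (by omega) hj.2]
      rcases Nat.lt_or_ge i j with h|h
      · simp only [if_pos h]
      · simp only [if_neg (show ¬ i < j by omega)]
    have hCC2 : (∑ i ∈ Finset.Icc ((g-d)+1) g, ∑ j ∈ Finset.Icc ((g-d)+1) g,
          if i < j then
            (if x.w.symm i < x.w.symm (2*g+1-j) then |x.x0 i + x.x0 j - 1|
             else |x.x0 i + x.x0 j|)
          else 0)
        = (∑ i ∈ Finset.Icc ((g-d)+1) g, ∑ j ∈ Finset.Icc ((g-d)+1) g, (if i < j then (1:ℤ) else 0))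
          - ∑ i ∈ Finset.Icc ((g-d)+1) g, ∑ j ∈ Finset.Icc ((g-d)+1) g,
              (if i < j then |x.x0 i - x.x0 j| else 0) := by
      rw [← Finset.sum_sub_distrib]
      refine Finset.sum_congr rfl fun i hi => ?_
      rw [← Finset.sum_sub_distrib]
      refine Finset.sum_congr rfl fun j hj => ?_
      simp only [Finset.mem_Icc] at hi hj
      rw [hmirror j (by simp only [Finset.mem_Icc]; omega),
          hτf i (by omega) hi.2, hτf j (by omega) hj.2]
      rcases Nat.lt_or_ge i j with h|h
      · rcases hx0c i (by omega) hi.2 with hei|hei <;>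
          rcases hx0c j (by omega) hj.2 with hej|hej <;>
          rw [hei, hej] <;>
          simp only [if_pos h, if_pos (show i < 2*g+1-j by omega)] <;>
          norm_num
      · simp only [if_neg (show ¬ i < j by omega)]
        norm_num
    have hT3A : (∑ i ∈ Finset.Icc 1 (2*((g-d)/2)),
          if x.w.symm i < x.w.symm (2*g+1-i) then |2 * x.x0 i - 1| else |2 * x.x0 i|)
        = (((g-d)/2 : ℕ) : ℤ) * 2 := by
      rw [swl_sum_pairs]
      trans (∑ k ∈ Finset.Icc 1 ((g-d)/2), (2:ℤ))
      · refine Finset.sum_congr rfl fun k hk => ?_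
        simp only [Finset.mem_Icc] at hk
        rw [hmirror (2*k-1) (by simp only [Finset.mem_Icc]; omega),
            hmirror (2*k) (by simp only [Finset.mem_Icc]; omega),
            hτo k hk.1 hk.2, hτe k hk.1 hk.2, hx0o k hk.1 hk.2, hx0e k hk.1 hk.2]
        simp only [if_pos (show 2*k < 2*g+1-(2*k) by omega),
          if_pos (show 2*k-1 < 2*g+1-(2*k-1) by omega)]
        norm_num
      · simp only [Finset.sum_const, nsmul_eq_mul, Nat.card_Icc]
        rw [show (g-d)/2+1-1 = (g-d)/2 from by omega]
    have hT3C : (∑ i ∈ Finset.Icc ((g-d)+1) g,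
          if x.w.symm i < x.w.symm (2*g+1-i) then |2 * x.x0 i - 1| else |2 * x.x0 i|)
        = (d : ℤ) := by
      trans (∑ i ∈ Finset.Icc ((g-d)+1) g, (1:ℤ))
      · refine Finset.sum_congr rfl fun i hi => ?_
        simp only [Finset.mem_Icc] at hi
        rw [hmirror i (by simp only [Finset.mem_Icc]; omega), hτf i (by omega) hi.2]
        rcases hx0c i (by omega) hi.2 with he|he <;> rw [he] <;>
          simp only [if_pos (show i < 2*g+1-i by omega)] <;> norm_num
      · simp only [Finset.sum_const, nsmul_eq_mul, mul_one, Nat.card_Icc]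
        rw [show g+1-((g-d)+1) = d from by omega]
    have hS2 := swl_strict_pairs_sum 2 (Finset.Icc 1 ((g-d)/2))
    have hSC := swl_strict_pairs_sum 1 (Finset.Icc ((g-d)+1) g)
    rw [Nat.card_Icc, show (g-d)/2+1-1 = (g-d)/2 from by omega] at hS2
    rw [Nat.card_Icc, show g+1-((g-d)+1) = d from by omega] at hSC
    rcases Nat.mod_two_eq_zero_or_one (g-d) with hpar|hpar
    · -- even case
      have hBe : Finset.Icc (2*((g-d)/2)+1) (g-d) = ∅ := Finset.Icc_eq_empty (by omega)
      have hgZ : (g:ℤ) = 2*(((g-d)/2 : ℕ):ℤ) + (d:ℤ) := by omega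
      have key : 2 * x.len = (g:ℤ)^2 + (d:ℤ) := by
        simp only [AdmPair.len]
        simp only [hsplitF]
        simp only [Finset.sum_add_distrib]
        rw [hBe]
        simp only [Finset.sum_empty, Finset.sum_const_zero]
        rw [swl_sum_block_zero (Finset.Icc ((g-d)+1) g) (Finset.Icc 1 (2*((g-d)/2))) _ (by
            intro i hi j hj; simp only [Finset.mem_Icc] at hi hj; omega)]
        rw [swl_sum_block_zero (Finset.Icc ((g-d)+1) g) (Finset.Icc 1 (2*((g-d)/2))) _ (by
            intro i hi j hj; simp only [Finset.mem_Icc] at hi hj; omega)]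
        rw [hgZ]
        linear_combination 2*hAA1 + 2*hAA2 + 2*hAC1 + 2*hAC2 + 2*hCC1 + 2*hCC2
          + 2*hT3A + 2*hT3C + 2*hS2 + hSC
      generalize hL : x.len = L at key ⊢
      generalize hG : (g:ℤ)^2 = G at key ⊢
      omega
    · -- odd case
      have hBs : Finset.Icc (2*((g-d)/2)+1) (g-d) = {g-d} := by
        rw [show 2*((g-d)/2)+1 = g-d from by omega]
        exact Finset.Icc_self _
      have hτr : x.w.symm (g-d) = 2*g+1-(g-d) := by
        have hw2' := hw2 (Nat.odd_iff.mpr hpar)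
        have hws := x.w_symm (g-d) (by simp only [Finset.mem_Icc]; omega)
        rw [hw2'] at hws
        rw [Equiv.symm_apply_eq, hws]
        omega
      have hx0r : x.x0 (g-d) = 0 :=
        x.x0_gt _ (by simp only [Finset.mem_Icc]; omega) (by rw [hτr]; omega)
      have hAB1 : (∑ i ∈ Finset.Icc 1 (2*((g-d)/2)), ∑ j ∈ ({g-d} : Finset ℕ),
            if i < j then
              (if x.w.symm i < x.w.symm j then |x.x0 i - x.x0 j|
               else |x.x0 i - x.x0 j + 1|)
            else 0)
          = (((g-d)/2 : ℕ) : ℤ) := by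
        simp only [Finset.sum_singleton]
        rw [swl_sum_pairs]
        trans (∑ k ∈ Finset.Icc 1 ((g-d)/2), (1:ℤ))
        · refine Finset.sum_congr rfl fun k hk => ?_
          simp only [Finset.mem_Icc] at hk
          rw [hτo k hk.1 hk.2, hτe k hk.1 hk.2, hτr, hx0o k hk.1 hk.2, hx0e k hk.1 hk.2, hx0r]
          simp only [if_pos (show 2*k-1 < g-d by omega), if_pos (show 2*k < g-d by omega),
            if_pos (show 2*k < 2*g+1-(g-d) by omega), if_pos (show 2*k-1 < 2*g+1-(g-d) by omega)]
          norm_num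
        · simp only [Finset.sum_const, nsmul_eq_mul, mul_one, Nat.card_Icc]
          rw [show (g-d)/2+1-1 = (g-d)/2 from by omega]
      have hAB2 : (∑ i ∈ Finset.Icc 1 (2*((g-d)/2)), ∑ j ∈ ({g-d} : Finset ℕ),
            if i < j then
              (if x.w.symm i < x.w.symm (2*g+1-j) then |x.x0 i + x.x0 j - 1|
               else |x.x0 i + x.x0 j|)
            else 0)
          = (((g-d)/2 : ℕ) : ℤ) := by
        simp only [Finset.sum_singleton]
        rw [swl_sum_pairs]
        trans (∑ k ∈ Finset.Icc 1 ((g-d)/2), (1:ℤ))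
        · refine Finset.sum_congr rfl fun k hk => ?_
          simp only [Finset.mem_Icc] at hk
          rw [hmirror (g-d) (by simp only [Finset.mem_Icc]; omega), hτr,
            hτo k hk.1 hk.2, hτe k hk.1 hk.2, hx0o k hk.1 hk.2, hx0e k hk.1 hk.2, hx0r]
          simp only [if_pos (show 2*k-1 < g-d by omega), if_pos (show 2*k < g-d by omega),
            if_pos (show 2*k < 2*g+1-(2*g+1-(g-d)) by omega),
            if_pos (show 2*k-1 < 2*g+1-(2*g+1-(g-d)) by omega)]
          norm_num
        · simp only [Finset.sum_const, nsmul_eq_mul, mul_one, Nat.card_Icc]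
          rw [show (g-d)/2+1-1 = (g-d)/2 from by omega]
      have hBC1 : (∑ i ∈ ({g-d} : Finset ℕ), ∑ j ∈ Finset.Icc ((g-d)+1) g,
            if i < j then
              (if x.w.symm i < x.w.symm j then |x.x0 i - x.x0 j|
               else |x.x0 i - x.x0 j + 1|)
            else 0)
          = (d:ℤ) - ∑ j ∈ Finset.Icc ((g-d)+1) g, x.x0 j := by
        simp only [Finset.sum_singleton]
        trans (∑ j ∈ Finset.Icc ((g-d)+1) g, (1 - x.x0 j))
        · refine Finset.sum_congr rfl fun j hj => ?_
          simp only [Finset.mem_Icc] at hj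
          rw [hτr, hτf j (by omega) hj.2, hx0r]
          rcases hx0c j (by omega) hj.2 with he|he <;> rw [he] <;>
            simp only [if_pos (show g-d < j by omega),
              if_neg (show ¬(2*g+1-(g-d) < j) by omega)] <;>
            norm_num
        · rw [Finset.sum_sub_distrib, Finset.sum_const, Nat.card_Icc,
            show g+1-((g-d)+1) = d from by omega, nsmul_eq_mul, mul_one]
      have hBC2 : (∑ i ∈ ({g-d} : Finset ℕ), ∑ j ∈ Finset.Icc ((g-d)+1) g,
            if i < j then
              (if x.w.symm i < x.w.symm (2*g+1-j) then |x.x0 i + x.x0 j - 1|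
               else |x.x0 i + x.x0 j|)
            else 0)
          = ∑ j ∈ Finset.Icc ((g-d)+1) g, x.x0 j := by
        simp only [Finset.sum_singleton]
        refine Finset.sum_congr rfl fun j hj => ?_
        simp only [Finset.mem_Icc] at hj
        rw [hmirror j (by simp only [Finset.mem_Icc]; omega), hτr, hτf j (by omega) hj.2, hx0r]
        rcases hx0c j (by omega) hj.2 with he|he <;> rw [he] <;>
          simp only [if_pos (show g-d < j by omega),
            if_neg (show ¬(2*g+1-(g-d) < 2*g+1-j) by omega)] <;>
          norm_num
      have hT3B : (∑ i ∈ ({g-d} : Finset ℕ),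
            if x.w.symm i < x.w.symm (2*g+1-i) then |2 * x.x0 i - 1| else |2 * x.x0 i|)
          = 0 := by
        simp only [Finset.sum_singleton]
        rw [hmirror (g-d) (by simp only [Finset.mem_Icc]; omega), hτr, hx0r]
        simp only [if_neg (show ¬(2*g+1-(g-d) < 2*g+1-(2*g+1-(g-d))) by omega)]
        norm_num
      have hgZ : (g:ℤ) = 2*(((g-d)/2 : ℕ):ℤ) + (d:ℤ) + 1 := by omega
      have key : 2 * x.len = (g:ℤ)^2 + (d:ℤ) - 1 := by
        simp only [AdmPair.len]
        simp only [hsplitF]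
        simp only [Finset.sum_add_distrib]
        rw [hBs]
        rw [swl_sum_block_zero ({g-d} : Finset ℕ) (Finset.Icc 1 (2*((g-d)/2))) _ (by
            intro i hi j hj; simp only [Finset.mem_singleton] at hi
            simp only [Finset.mem_Icc] at hj; omega)]
        rw [swl_sum_block_zero ({g-d} : Finset ℕ) (Finset.Icc 1 (2*((g-d)/2))) _ (by
            intro i hi j hj; simp only [Finset.mem_singleton] at hi
            simp only [Finset.mem_Icc] at hj; omega)]
        rw [swl_sum_block_zero ({g-d} : Finset ℕ) ({g-d} : Finset ℕ) _ (by
            intro i hi j hj; simp only [Finset.mem_singleton] at hi hj; omega)]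
        rw [swl_sum_block_zero ({g-d} : Finset ℕ) ({g-d} : Finset ℕ) _ (by
            intro i hi j hj; simp only [Finset.mem_singleton] at hi hj; omega)]
        rw [swl_sum_block_zero (Finset.Icc ((g-d)+1) g) (Finset.Icc 1 (2*((g-d)/2))) _ (by
            intro i hi j hj; simp only [Finset.mem_Icc] at hi hj; omega)]
        rw [swl_sum_block_zero (Finset.Icc ((g-d)+1) g) (Finset.Icc 1 (2*((g-d)/2))) _ (by
            intro i hi j hj; simp only [Finset.mem_Icc] at hi hj; omega)]
        rw [swl_sum_block_zero (Finset.Icc ((g-d)+1) g) ({g-d} : Finset ℕ) _ (by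
            intro i hi j hj; simp only [Finset.mem_Icc] at hi
            simp only [Finset.mem_singleton] at hj; omega)]
        rw [swl_sum_block_zero (Finset.Icc ((g-d)+1) g) ({g-d} : Finset ℕ) _ (by
            intro i hi j hj; simp only [Finset.mem_Icc] at hi
            simp only [Finset.mem_singleton] at hj; omega)]
        rw [hgZ]
        linear_combination 2*hAA1 + 2*hAA2 + 2*hAB1 + 2*hAB2 + 2*hAC1 + 2*hAC2
          + 2*hBC1 + 2*hBC2 + 2*hCC1 + 2*hCC2 + 2*hT3A + 2*hT3B + 2*hT3C + 2*hS2 + hSC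
      generalize hL : x.len = L at key ⊢
      generalize hG : (g:ℤ)^2 = G at key ⊢
      omega
end

section
/- For every positive integer g and every permutation σ of {1,…,g}, ℓ(σ) = 2·(A_σ + A_{σ⁻¹} + B_σ) + C_σ + C_{σ⁻¹} + #{i ∈ {1,…,g} : i < σ(i)} + #{i ∈ {1,…,g} : σ(σ(i)) < σ(i) < i}. -/
/-- `A_σ = #{(i,j) : i < j < σ(j) < σ(i)}` for a permutation `σ` of `Fin n`
(encoding a permutation of `{1,…,n}`). -/
def Acnt {n : ℕ} (σ : Equiv.Perm (Fin n)) : ℕ :=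
  (Finset.univ.filter (fun p : Fin n × Fin n =>
    p.1 < p.2 ∧ p.2 < σ p.2 ∧ σ p.2 < σ p.1)).card

/-- `B_σ = #{(i,j) : i < j = σ(j) < σ(i)}`. -/
def Bcnt {n : ℕ} (σ : Equiv.Perm (Fin n)) : ℕ :=
  (Finset.univ.filter (fun p : Fin n × Fin n =>
    p.1 < p.2 ∧ σ p.2 = p.2 ∧ p.2 < σ p.1)).card

/-- `C_σ = #{(i,j) : i < j < σ(i) < σ(j)}`. -/
def Ccnt {n : ℕ} (σ : Equiv.Perm (Fin n)) : ℕ :=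
  (Finset.univ.filter (fun p : Fin n × Fin n =>
    p.1 < p.2 ∧ p.2 < σ p.1 ∧ σ p.1 < σ p.2)).card

/-- The number of inversions of `σ` (its Coxeter length in `S_n`). -/
def invCnt {n : ℕ} (σ : Equiv.Perm (Fin n)) : ℕ :=
  (Finset.univ.filter (fun p : Fin n × Fin n =>
    p.1 < p.2 ∧ σ p.2 < σ p.1)).card



open Finset

/-! ### Auxiliary machinery for the Clarke–Steingrímsson–Zeng identity -/

/-- Telescoping core: if `U 0 = U n = 0`, `U k = X k + A k`, `U (k+1) = X k + B k`
with `A`, `B` 0/1-valued, then `∑ A·X = ∑ B·X`. -/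
theorem csz_core (X U A B : ℕ → ℤ) (n : ℕ) (hU0 : U 0 = 0) (hUn : U n = 0)
    (hA : ∀ k, U k = X k + A k) (hB : ∀ k, U (k+1) = X k + B k)
    (hA01 : ∀ k, A k = 0 ∨ A k = 1) (hB01 : ∀ k, B k = 0 ∨ B k = 1) :
    ∑ k ∈ range n, A k * X k = ∑ k ∈ range n, B k * X k := by
  have key : ∀ m : ℕ, 2 * ((∑ k ∈ range m, B k * X k) - ∑ k ∈ range m, A k * X k)
      = U m ^ 2 - U m - (U 0 ^2 - U 0) := by
    intro m
    induction m with
    | zero => simp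
    | succ m ih =>
      rw [Finset.sum_range_succ, Finset.sum_range_succ]
      have h1 : U m = X m + A m := hA m
      have h2 : U (m+1) = X m + B m := hB m
      rcases hA01 m with ha | ha <;> rcases hB01 m with hb | hb <;>
        · simp only [ha, hb] at h1 h2 ⊢
          rw [h2]; rw [h1] at ih
          ring_nf at ih ⊢; linarith
  have h := key n
  rw [hU0, hUn] at h
  linarith

/-! Pointwise indicator identities over `ℕ`. -/

theorem csz_pw1 (i j a b : ℕ) (hd : a ≠ b ∨ i = j) :
    (if i < j ∧ b < a then (1:ℕ) else 0)
      = ((if i < j ∧ j < b ∧ b < a then (1:ℕ) else 0)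
      + (if i < j ∧ b = j ∧ j < a then 1 else 0)
      + (if i < j ∧ b < a ∧ a < i then 1 else 0)
      + (if i < j ∧ j < a ∧ b < j then 1 else 0)
      + (if i < j ∧ a = j ∧ b < j then 1 else 0)
      + (if i < j ∧ b < a ∧ a < j ∧ i ≤ a then 1 else 0)) := by
  split_ifs <;> omega

theorem csz_pw2 (i j a b : ℕ) (hd : a ≠ b ∨ i = j) :
    (if i < j ∧ j < b ∧ j ≤ a then (1:ℕ) else 0)
      = ((if i < j ∧ j < b ∧ b < a then (1:ℕ) else 0)
      + (if i < j ∧ j < a ∧ a < b then 1 else 0)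
      + (if i < j ∧ a = j ∧ j < b then 1 else 0)) := by
  split_ifs <;> omega

theorem csz_pw3 (i j a b : ℕ) (hd : a ≠ b ∨ i = j) :
    (if i < j ∧ a < i ∧ b ≤ i then (1:ℕ) else 0)
      = ((if i < j ∧ b < a ∧ a < i then (1:ℕ) else 0)
      + (if i < j ∧ a < b ∧ b < i then 1 else 0)
      + (if i < j ∧ b = i ∧ a < i then 1 else 0)) := by
  split_ifs <;> omega

theorem csz_pw5 (i j a b : ℕ) (hd : a ≠ b ∨ i = j) :
    (if i < j ∧ a = j then (1:ℕ) else 0)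
      = ((if i < j ∧ a = j ∧ b < j then (1:ℕ) else 0)
      + (if i < j ∧ a = j ∧ j < b then 1 else 0)) := by
  split_ifs <;> omega

section Counts
variable {g : ℕ} (σ : Equiv.Perm (Fin g))

/-- `#{i : i < k ∧ k < σ i}`. -/
def Xc (k : ℕ) : ℕ := (univ.filter (fun i : Fin g => (i:ℕ) < k ∧ k < (σ i:ℕ))).card
/-- `#{i : i < k ∧ k ≤ σ i}`. -/
def Uc (k : ℕ) : ℕ := (univ.filter (fun i : Fin g => (i:ℕ) < k ∧ k ≤ (σ i:ℕ))).card
/-- `#{i : i < k ∧ σ i = k}`. -/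
def ac (k : ℕ) : ℕ := (univ.filter (fun i : Fin g => (i:ℕ) < k ∧ (σ i:ℕ) = k)).card
/-- `#{i : i = k ∧ k < σ i}`. -/
def bc (k : ℕ) : ℕ := (univ.filter (fun i : Fin g => (i:ℕ) = k ∧ k < (σ i:ℕ))).card

lemma Uc0 : Uc σ 0 = 0 := by simp [Uc]

lemma Ucg : Uc σ g = 0 := by
  rw [Uc, Finset.card_eq_zero, Finset.filter_eq_empty_iff]
  intro i _
  have := (σ i).isLt
  omega

lemma UXa (k : ℕ) : Uc σ k = Xc σ k + ac σ k := by
  rw [Uc, Xc, ac, Finset.card_filter, Finset.card_filter, Finset.card_filter,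
    ← Finset.sum_add_distrib]
  apply Finset.sum_congr rfl
  intro i _
  split_ifs <;> omega

lemma UXb (k : ℕ) : Uc σ (k+1) = Xc σ k + bc σ k := by
  rw [Uc, Xc, bc, Finset.card_filter, Finset.card_filter, Finset.card_filter,
    ← Finset.sum_add_distrib]
  apply Finset.sum_congr rfl
  intro i _
  split_ifs <;> omega

lemma ac01 (k : ℕ) : ac σ k ≤ 1 := by
  rw [ac]
  apply Finset.card_le_one.mpr
  intro a ha b hb
  simp only [Finset.mem_filter] at ha hb
  have : σ a = σ b := Fin.ext (by omega)
  exact σ.injective this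

lemma bc01 (k : ℕ) : bc σ k ≤ 1 := by
  rw [bc]
  apply Finset.card_le_one.mpr
  intro a ha b hb
  simp only [Finset.mem_filter] at ha hb
  exact Fin.ext (by omega)

lemma card_le_k (k : Fin g) :
    (univ.filter (fun j : Fin g => (j:ℕ) ≤ (k:ℕ))).card = (k:ℕ) + 1 := by
  rw [← Finset.card_range ((k:ℕ)+1)]
  refine Finset.card_bij' (fun j _ => (j:ℕ))
    (fun m hm => (⟨m, by have h1 := Finset.mem_range.mp hm; have h2 := k.isLt; omega⟩ : Fin g))
    ?_ ?_ ?_ ?_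
  · intro a ha
    simp only [Finset.mem_filter] at ha
    simp only [Finset.mem_range]
    omega
  · intro m hm
    simp only [Finset.mem_filter, Finset.mem_univ, true_and]
    have := Finset.mem_range.mp hm
    simp
    omega
  · intro a _; simp
  · intro m _; simp

lemma card_sig_le (k : Fin g) :
    (univ.filter (fun j : Fin g => (σ j:ℕ) ≤ (k:ℕ))).card
      = (univ.filter (fun j : Fin g => (j:ℕ) ≤ (k:ℕ))).card := by
  refine Finset.card_bij' (fun j _ => σ j) (fun j _ => σ⁻¹ j) ?_ ?_ ?_ ?_
  · intro a ha; simp only [Finset.mem_filter, Finset.mem_univ, true_and] at ha ⊢; exact ha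
  · intro a ha; simp only [Finset.mem_filter, Finset.mem_univ, true_and] at ha ⊢
    simpa using ha
  · intro a _; simp
  · intro a _; simp

lemma Lcompl (k : Fin g) :
    (univ.filter (fun j : Fin g => (k:ℕ) < (j:ℕ) ∧ (σ j:ℕ) ≤ (k:ℕ))).card
      = Uc σ ((k:ℕ)+1) := by
  have h1 : (univ.filter (fun j : Fin g => (j:ℕ) ≤ (k:ℕ) ∧ (σ j:ℕ) ≤ (k:ℕ))).card
      + (univ.filter (fun j : Fin g => (k:ℕ) < (j:ℕ) ∧ (σ j:ℕ) ≤ (k:ℕ))).card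
      = (univ.filter (fun j : Fin g => (σ j:ℕ) ≤ (k:ℕ))).card := by
    rw [Finset.card_filter, Finset.card_filter, Finset.card_filter, ← Finset.sum_add_distrib]
    apply Finset.sum_congr rfl
    intro i _; split_ifs <;> omega
  have h2 : (univ.filter (fun j : Fin g => (j:ℕ) ≤ (k:ℕ) ∧ (σ j:ℕ) ≤ (k:ℕ))).card
      + Uc σ ((k:ℕ)+1)
      = (univ.filter (fun j : Fin g => (j:ℕ) ≤ (k:ℕ))).card := by
    rw [Uc, Finset.card_filter, Finset.card_filter, Finset.card_filter,
      ← Finset.sum_add_distrib]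
    apply Finset.sum_congr rfl
    intro i _; split_ifs <;> omega
  have h3 := card_sig_le σ k
  omega

lemma ac_eq (k : Fin g) : ac σ (k:ℕ) = if (σ⁻¹ k : ℕ) < (k:ℕ) then 1 else 0 := by
  rw [ac]
  split_ifs with h
  · rw [Finset.card_eq_one]
    refine ⟨σ⁻¹ k, ?_⟩
    ext x
    simp only [Finset.mem_filter, Finset.mem_univ, true_and, Finset.mem_singleton]
    constructor
    · rintro ⟨h1, h2⟩
      have hx : σ x = k := Fin.ext h2
      rw [← hx, Equiv.Perm.inv_def, Equiv.symm_apply_apply]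
    · rintro rfl
      refine ⟨h, ?_⟩
      simp
  · rw [Finset.card_eq_zero, Finset.filter_eq_empty_iff]
    intro x _
    rintro ⟨h1, h2⟩
    apply h
    have hx : σ x = k := Fin.ext h2
    have hxx : x = σ⁻¹ k := by rw [← hx, Equiv.Perm.inv_def, Equiv.symm_apply_apply]
    rw [← hxx]
    exact h1

lemma bc_eq (k : Fin g) : bc σ (k:ℕ) = if (k:ℕ) < (σ k:ℕ) then 1 else 0 := by
  rw [bc]
  split_ifs with h
  · rw [Finset.card_eq_one]
    refine ⟨k, ?_⟩
    ext x
    simp only [Finset.mem_filter, Finset.mem_univ, true_and, Finset.mem_singleton]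
    constructor
    · rintro ⟨h1, h2⟩
      exact Fin.ext h1
    · rintro rfl
      exact ⟨rfl, h⟩
  · rw [Finset.card_eq_zero, Finset.filter_eq_empty_iff]
    intro x _
    rintro ⟨h1, h2⟩
    apply h
    have : x = k := Fin.ext h1
    rw [← this]
    omega

lemma acXc_eq_bcXc : ∑ k : Fin g, ac σ (k:ℕ) * Xc σ (k:ℕ)
    = ∑ k : Fin g, bc σ (k:ℕ) * Xc σ (k:ℕ) := by
  rw [Fin.sum_univ_eq_sum_range (fun k => ac σ k * Xc σ k) g,
      Fin.sum_univ_eq_sum_range (fun k => bc σ k * Xc σ k) g]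
  have h := csz_core (fun k => (Xc σ k : ℤ)) (fun k => (Uc σ k : ℤ))
    (fun k => (ac σ k : ℤ)) (fun k => (bc σ k : ℤ)) g
    (by show ((Uc σ 0 : ℕ) : ℤ) = 0; rw [Uc0]; simp)
    (by show ((Uc σ g : ℕ) : ℤ) = 0; rw [Ucg]; simp)
    (fun k => by
      show ((Uc σ k : ℕ) : ℤ) = ((Xc σ k : ℕ) : ℤ) + ((ac σ k : ℕ) : ℤ)
      have := UXa σ k; omega)
    (fun k => by
      show ((Uc σ (k+1) : ℕ) : ℤ) = ((Xc σ k : ℕ) : ℤ) + ((bc σ k : ℕ) : ℤ)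
      have := UXb σ k; omega)
    (fun k => by
      show ((ac σ k : ℕ) : ℤ) = 0 ∨ ((ac σ k : ℕ) : ℤ) = 1
      have := ac01 σ k; omega)
    (fun k => by
      show ((bc σ k : ℕ) : ℤ) = 0 ∨ ((bc σ k : ℕ) : ℤ) = 1
      have := bc01 σ k; omega)
  have h2 : ((∑ k ∈ range g, ac σ k * Xc σ k : ℕ) : ℤ)
      = ((∑ k ∈ range g, bc σ k * Xc σ k : ℕ) : ℤ) := by
    push_cast
    simpa using h
  exact_mod_cast h2

/-! Inner-sum evaluations. -/

lemma inner_p1 (j : Fin g) :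
    (∑ i : Fin g, if (i:ℕ) < (j:ℕ) ∧ (j:ℕ) < (σ i:ℕ) ∧ (σ j:ℕ) < (j:ℕ) then 1 else 0)
      = if (σ j:ℕ) < (j:ℕ) then Xc σ (j:ℕ) else 0 := by
  by_cases h : (σ j:ℕ) < (j:ℕ)
  · simp only [h, and_true, if_true]
    rw [Xc, Finset.card_filter]
  · simp [h]

lemma inner_n3 (j : Fin g) :
    (∑ i : Fin g, if (i:ℕ) < (j:ℕ) ∧ (σ j:ℕ) = (j:ℕ) ∧ (j:ℕ) < (σ i:ℕ) then 1 else 0)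
      = if (σ j:ℕ) = (j:ℕ) then Xc σ (j:ℕ) else 0 := by
  by_cases h : (σ j:ℕ) = (j:ℕ)
  · simp only [h, true_and, and_true, if_true, eq_self_iff_true]
    rw [Xc, Finset.card_filter]
  · simp [h]

lemma inner_n1 (j : Fin g) :
    (∑ i : Fin g, if (i:ℕ) < (j:ℕ) ∧ (j:ℕ) < (σ j:ℕ) ∧ (j:ℕ) ≤ (σ i:ℕ) then 1 else 0)
      = if (j:ℕ) < (σ j:ℕ) then Xc σ (j:ℕ) + ac σ (j:ℕ) else 0 := by
  by_cases h : (j:ℕ) < (σ j:ℕ)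
  · simp only [h, true_and, if_true]
    rw [Xc, ac, Finset.card_filter, Finset.card_filter, ← Finset.sum_add_distrib]
    apply Finset.sum_congr rfl
    intro i _
    split_ifs <;> omega
  · simp [h]

lemma inner_n2 (i : Fin g) :
    (∑ j : Fin g, if (i:ℕ) < (j:ℕ) ∧ (σ i:ℕ) < (i:ℕ) ∧ (σ j:ℕ) ≤ (i:ℕ) then 1 else 0)
      = if (σ i:ℕ) < (i:ℕ) then Xc σ (i:ℕ) else 0 := by
  by_cases h : (σ i:ℕ) < (i:ℕ)
  · simp only [h, true_and, if_true]
    have h1 : (∑ j : Fin g, if (i:ℕ) < (j:ℕ) ∧ (σ j:ℕ) ≤ (i:ℕ) then 1 else 0)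
        = Uc σ ((i:ℕ)+1) := by
      rw [← Lcompl σ i, Finset.card_filter]
    rw [h1, UXb]
    have h2 : bc σ (i:ℕ) = 0 := by
      rw [bc_eq]
      exact if_neg (by omega)
    omega
  · simp [h]

lemma inner_p2 (i : Fin g) :
    (∑ j : Fin g, if (i:ℕ) < (j:ℕ) ∧ (σ j:ℕ) < (σ i:ℕ) ∧ (σ i:ℕ) < (j:ℕ) ∧ (i:ℕ) ≤ (σ i:ℕ)
        then 1 else 0)
      = if (i:ℕ) ≤ (σ i:ℕ) then Uc σ ((σ i:ℕ)+1) else 0 := by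
  by_cases h : (i:ℕ) ≤ (σ i:ℕ)
  · rw [if_pos h]
    have hstep : ∀ j : Fin g,
        (if (i:ℕ) < (j:ℕ) ∧ (σ j:ℕ) < (σ i:ℕ) ∧ (σ i:ℕ) < (j:ℕ) ∧ (i:ℕ) ≤ (σ i:ℕ)
          then (1:ℕ) else 0)
        = (if (σ i:ℕ) < (j:ℕ) ∧ (σ j:ℕ) ≤ (σ i:ℕ) then (1:ℕ) else 0) := by
      intro j
      have hd : (σ j:ℕ) ≠ (σ i:ℕ) ∨ (j:ℕ) = (i:ℕ) := by
        rcases eq_or_ne j i with rfl | hne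
        · right; rfl
        · left; intro hh; exact hne (σ.injective (Fin.ext hh))
      split_ifs <;> omega
    rw [Finset.sum_congr rfl (fun j _ => hstep j)]
    rw [← Lcompl σ (σ i), Finset.card_filter]
  · simp [h]

/-- The `(⋆)` identity: `∑ p1 + ∑ p2 = ∑ n1 + ∑ n2 + ∑ n3`. -/
lemma csz_star :
    ((∑ i : Fin g, ∑ j : Fin g,
        if (i:ℕ) < (j:ℕ) ∧ (j:ℕ) < (σ i:ℕ) ∧ (σ j:ℕ) < (j:ℕ) then 1 else 0)
      + ∑ i : Fin g, ∑ j : Fin g,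
        if (i:ℕ) < (j:ℕ) ∧ (σ j:ℕ) < (σ i:ℕ) ∧ (σ i:ℕ) < (j:ℕ) ∧ (i:ℕ) ≤ (σ i:ℕ)
          then 1 else 0)
    = ((∑ i : Fin g, ∑ j : Fin g,
        if (i:ℕ) < (j:ℕ) ∧ (j:ℕ) < (σ j:ℕ) ∧ (j:ℕ) ≤ (σ i:ℕ) then 1 else 0)
      + (∑ i : Fin g, ∑ j : Fin g,
        if (i:ℕ) < (j:ℕ) ∧ (σ i:ℕ) < (i:ℕ) ∧ (σ j:ℕ) ≤ (i:ℕ) then 1 else 0)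
      + ∑ i : Fin g, ∑ j : Fin g,
        if (i:ℕ) < (j:ℕ) ∧ (σ j:ℕ) = (j:ℕ) ∧ (j:ℕ) < (σ i:ℕ) then 1 else 0) := by
  have h1 : (∑ i : Fin g, ∑ j : Fin g,
      if (i:ℕ) < (j:ℕ) ∧ (j:ℕ) < (σ i:ℕ) ∧ (σ j:ℕ) < (j:ℕ) then 1 else 0)
      = ∑ j : Fin g, if (σ j:ℕ) < (j:ℕ) then Xc σ (j:ℕ) else 0 := by
    rw [Finset.sum_comm]
    exact Finset.sum_congr rfl fun j _ => inner_p1 σ j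
  have h2 : (∑ i : Fin g, ∑ j : Fin g,
      if (i:ℕ) < (j:ℕ) ∧ (σ j:ℕ) < (σ i:ℕ) ∧ (σ i:ℕ) < (j:ℕ) ∧ (i:ℕ) ≤ (σ i:ℕ)
        then 1 else 0)
      = ∑ i : Fin g, if (i:ℕ) ≤ (σ i:ℕ) then Uc σ ((σ i:ℕ)+1) else 0 :=
    Finset.sum_congr rfl fun i _ => inner_p2 σ i
  have h3 : (∑ i : Fin g, ∑ j : Fin g,
      if (i:ℕ) < (j:ℕ) ∧ (j:ℕ) < (σ j:ℕ) ∧ (j:ℕ) ≤ (σ i:ℕ) then 1 else 0)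
      = ∑ j : Fin g, if (j:ℕ) < (σ j:ℕ) then Xc σ (j:ℕ) + ac σ (j:ℕ) else 0 := by
    rw [Finset.sum_comm]
    exact Finset.sum_congr rfl fun j _ => inner_n1 σ j
  have h4 : (∑ i : Fin g, ∑ j : Fin g,
      if (i:ℕ) < (j:ℕ) ∧ (σ i:ℕ) < (i:ℕ) ∧ (σ j:ℕ) ≤ (i:ℕ) then 1 else 0)
      = ∑ i : Fin g, if (σ i:ℕ) < (i:ℕ) then Xc σ (i:ℕ) else 0 :=
    Finset.sum_congr rfl fun i _ => inner_n2 σ i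
  have h5 : (∑ i : Fin g, ∑ j : Fin g,
      if (i:ℕ) < (j:ℕ) ∧ (σ j:ℕ) = (j:ℕ) ∧ (j:ℕ) < (σ i:ℕ) then 1 else 0)
      = ∑ j : Fin g, if (σ j:ℕ) = (j:ℕ) then Xc σ (j:ℕ) else 0 := by
    rw [Finset.sum_comm]
    exact Finset.sum_congr rfl fun j _ => inner_n3 σ j
  have h6 : (∑ i : Fin g, if (i:ℕ) ≤ (σ i:ℕ) then Uc σ ((σ i:ℕ)+1) else 0)
      = ∑ k : Fin g, if (σ⁻¹ k:ℕ) ≤ (k:ℕ) then Uc σ ((k:ℕ)+1) else 0 := by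
    rw [← Equiv.sum_comp σ (fun k => if (σ⁻¹ k:ℕ) ≤ (k:ℕ) then Uc σ ((k:ℕ)+1) else 0)]
    exact Finset.sum_congr rfl fun i _ => by simp
  have h7 : ∀ k : Fin g,
      (if (σ⁻¹ k:ℕ) ≤ (k:ℕ) then Uc σ ((k:ℕ)+1) else 0) + bc σ (k:ℕ) * Xc σ (k:ℕ)
      = ((if (k:ℕ) < (σ k:ℕ) then Xc σ (k:ℕ) + ac σ (k:ℕ) else 0)
        + (if (σ k:ℕ) = (k:ℕ) then Xc σ (k:ℕ) else 0)
        + ac σ (k:ℕ) * Xc σ (k:ℕ)) := by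
    intro k
    have hfix : ((σ⁻¹ k:ℕ) = (k:ℕ) ∧ (σ k:ℕ) = (k:ℕ))
        ∨ ((σ⁻¹ k:ℕ) ≠ (k:ℕ) ∧ (σ k:ℕ) ≠ (k:ℕ)) := by
      rcases eq_or_ne (σ k) k with hh | hh
      · left
        have h2 : σ⁻¹ k = k := Equiv.Perm.inv_eq_iff_eq.mpr hh.symm
        exact ⟨by rw [h2], by rw [hh]⟩
      · right
        constructor
        · intro hcon
          have h2 : σ⁻¹ k = k := Fin.ext hcon
          have h3 := congrArg σ h2
          rw [Equiv.Perm.inv_def, Equiv.apply_symm_apply] at h3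
          exact hh h3.symm
        · intro hcon
          exact hh (Fin.ext hcon)
    rw [UXb, ac_eq, bc_eq]
    split_ifs <;> omega
  have h8 : (∑ k : Fin g, ((if (σ⁻¹ k:ℕ) ≤ (k:ℕ) then Uc σ ((k:ℕ)+1) else 0)
        + bc σ (k:ℕ) * Xc σ (k:ℕ)))
      = ∑ k : Fin g, ((if (k:ℕ) < (σ k:ℕ) then Xc σ (k:ℕ) + ac σ (k:ℕ) else 0)
        + (if (σ k:ℕ) = (k:ℕ) then Xc σ (k:ℕ) else 0)
        + ac σ (k:ℕ) * Xc σ (k:ℕ)) :=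
    Finset.sum_congr rfl fun k _ => h7 k
  rw [Finset.sum_add_distrib] at h8
  have h9 : (∑ k : Fin g, ((if (k:ℕ) < (σ k:ℕ) then Xc σ (k:ℕ) + ac σ (k:ℕ) else 0)
        + (if (σ k:ℕ) = (k:ℕ) then Xc σ (k:ℕ) else 0)
        + ac σ (k:ℕ) * Xc σ (k:ℕ)))
      = (∑ k : Fin g, if (k:ℕ) < (σ k:ℕ) then Xc σ (k:ℕ) + ac σ (k:ℕ) else 0)
        + (∑ k : Fin g, if (σ k:ℕ) = (k:ℕ) then Xc σ (k:ℕ) else 0)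
        + ∑ k : Fin g, ac σ (k:ℕ) * Xc σ (k:ℕ) := by
    rw [Finset.sum_add_distrib, Finset.sum_add_distrib]
  rw [h9] at h8
  have h10 := acXc_eq_bcXc σ
  omega

end Counts


/-- (Clarke–Steingrímsson–Zeng)
`ℓ(σ) = 2(A_σ + A_{σ⁻¹} + B_σ) + C_σ + C_{σ⁻¹} + #{i : i < σ(i)}
 + #{i : σ(σ(i)) < σ(i) < i}`. -/
theorem inv_eq_invMT (g : ℕ) (hg : 1 ≤ g) (σ : Equiv.Perm (Fin g)) :
    invCnt σ = 2 * (Acnt σ + Acnt σ⁻¹ + Bcnt σ) + Ccnt σ + Ccnt σ⁻¹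
      + (Finset.univ.filter (fun i : Fin g => i < σ i)).card
      + (Finset.univ.filter (fun i : Fin g => σ (σ i) < σ i ∧ σ i < i)).card := by
  have hd : ∀ i j : Fin g, (σ i:ℕ) ≠ (σ j:ℕ) ∨ (i:ℕ) = (j:ℕ) := by
    intro i j
    rcases eq_or_ne i j with rfl | hne
    · right; rfl
    · left; intro hh; exact hne (σ.injective (Fin.ext hh))
  have hL : invCnt σ = ∑ i : Fin g, ∑ j : Fin g, (if (i:ℕ) < (j:ℕ) ∧ (σ j:ℕ) < (σ i:ℕ) then 1 else 0) := by
    rw [invCnt, Finset.card_filter, Fintype.sum_prod_type]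
    exact Finset.sum_congr rfl fun i _ => Finset.sum_congr rfl fun j _ =>
      if_congr (by simp only [Fin.lt_def, Fin.ext_iff]) rfl rfl

  have hA : Acnt σ = ∑ i : Fin g, ∑ j : Fin g, (if (i:ℕ) < (j:ℕ) ∧ (j:ℕ) < (σ j:ℕ) ∧ (σ j:ℕ) < (σ i:ℕ) then 1 else 0) := by
    rw [Acnt, Finset.card_filter, Fintype.sum_prod_type]
    exact Finset.sum_congr rfl fun i _ => Finset.sum_congr rfl fun j _ =>
      if_congr (by simp only [Fin.lt_def, Fin.ext_iff]) rfl rfl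

  have hB : Bcnt σ = ∑ i : Fin g, ∑ j : Fin g, (if (i:ℕ) < (j:ℕ) ∧ (σ j:ℕ) = (j:ℕ) ∧ (j:ℕ) < (σ i:ℕ) then 1 else 0) := by
    rw [Bcnt, Finset.card_filter, Fintype.sum_prod_type]
    exact Finset.sum_congr rfl fun i _ => Finset.sum_congr rfl fun j _ =>
      if_congr (by simp only [Fin.lt_def, Fin.ext_iff]) rfl rfl

  have hC : Ccnt σ = ∑ i : Fin g, ∑ j : Fin g, (if (i:ℕ) < (j:ℕ) ∧ (j:ℕ) < (σ i:ℕ) ∧ (σ i:ℕ) < (σ j:ℕ) then 1 else 0) := by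
    rw [Ccnt, Finset.card_filter, Fintype.sum_prod_type]
    exact Finset.sum_congr rfl fun i _ => Finset.sum_congr rfl fun j _ =>
      if_congr (by simp only [Fin.lt_def, Fin.ext_iff]) rfl rfl

  have hbijA : (univ.filter (fun p : Fin g × Fin g =>
        p.1 < p.2 ∧ p.2 < σ⁻¹ p.2 ∧ σ⁻¹ p.2 < σ⁻¹ p.1)).card
      = (univ.filter (fun p : Fin g × Fin g =>
        p.1 < p.2 ∧ σ p.2 < σ p.1 ∧ σ p.1 < p.1)).card := by
    refine Finset.card_bij' (fun p _ => (σ⁻¹ p.2, σ⁻¹ p.1)) (fun p _ => (σ p.2, σ p.1))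
      ?_ ?_ ?_ ?_
    · intro p hp
      simp only [Finset.mem_filter, Finset.mem_univ, true_and] at hp ⊢
      simp only [Equiv.Perm.inv_def, Equiv.apply_symm_apply]
      exact ⟨hp.2.2, hp.1, hp.2.1⟩
    · intro p hp
      simp only [Finset.mem_filter, Finset.mem_univ, true_and] at hp ⊢
      simp only [Equiv.Perm.inv_def, Equiv.symm_apply_apply]
      exact ⟨hp.2.1, hp.2.2, hp.1⟩
    · intro p _; simp
    · intro p _; simp
  have hA' : Acnt σ⁻¹ = ∑ i : Fin g, ∑ j : Fin g, (if (i:ℕ) < (j:ℕ) ∧ (σ j:ℕ) < (σ i:ℕ) ∧ (σ i:ℕ) < (i:ℕ) then 1 else 0) := by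
    rw [Acnt, hbijA, Finset.card_filter, Fintype.sum_prod_type]
    exact Finset.sum_congr rfl fun i _ => Finset.sum_congr rfl fun j _ =>
      if_congr (by simp only [Fin.lt_def, Fin.ext_iff]) rfl rfl
  have hbijC : (univ.filter (fun p : Fin g × Fin g =>
        p.1 < p.2 ∧ p.2 < σ⁻¹ p.1 ∧ σ⁻¹ p.1 < σ⁻¹ p.2)).card
      = (univ.filter (fun p : Fin g × Fin g =>
        p.1 < p.2 ∧ σ p.1 < σ p.2 ∧ σ p.2 < p.1)).card := by
    refine Finset.card_bij' (fun p _ => (σ⁻¹ p.1, σ⁻¹ p.2)) (fun p _ => (σ p.1, σ p.2))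
      ?_ ?_ ?_ ?_
    · intro p hp
      simp only [Finset.mem_filter, Finset.mem_univ, true_and] at hp ⊢
      simp only [Equiv.Perm.inv_def, Equiv.apply_symm_apply]
      exact ⟨hp.2.2, hp.1, hp.2.1⟩
    · intro p hp
      simp only [Finset.mem_filter, Finset.mem_univ, true_and] at hp ⊢
      simp only [Equiv.Perm.inv_def, Equiv.symm_apply_apply]
      exact ⟨hp.2.1, hp.2.2, hp.1⟩
    · intro p _; simp
    · intro p _; simp
  have hC' : Ccnt σ⁻¹ = ∑ i : Fin g, ∑ j : Fin g, (if (i:ℕ) < (j:ℕ) ∧ (σ i:ℕ) < (σ j:ℕ) ∧ (σ j:ℕ) < (i:ℕ) then 1 else 0) := by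
    rw [Ccnt, hbijC, Finset.card_filter, Fintype.sum_prod_type]
    exact Finset.sum_congr rfl fun i _ => Finset.sum_congr rfl fun j _ =>
      if_congr (by simp only [Fin.lt_def, Fin.ext_iff]) rfl rfl
  have hexc : (Finset.univ.filter (fun i : Fin g => i < σ i)).card = ∑ i : Fin g, ∑ j : Fin g, (if (i:ℕ) < (j:ℕ) ∧ (σ i:ℕ) = (j:ℕ) then 1 else 0) := by
    rw [Finset.card_filter]
    refine Finset.sum_congr rfl fun i _ => ?_
    rw [Finset.sum_eq_single (σ i)]
    · exact if_congr (by simp only [Fin.lt_def, and_true]) rfl rfl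
    · intro b _ hb
      apply if_neg
      rintro ⟨-, h2⟩
      exact hb (Fin.ext h2).symm
    · intro h; exact absurd (Finset.mem_univ _) h
  have hdd : (Finset.univ.filter (fun i : Fin g => σ (σ i) < σ i ∧ σ i < i)).card
      = ∑ i : Fin g, ∑ j : Fin g, (if (i:ℕ) < (j:ℕ) ∧ (σ j:ℕ) = (i:ℕ) ∧ (σ i:ℕ) < (i:ℕ) then 1 else 0) := by
    rw [Finset.card_filter, Finset.sum_comm]
    refine Finset.sum_congr rfl fun j _ => ?_
    rw [Finset.sum_eq_single (σ j)]
    · refine if_congr ?_ rfl rfl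
      simp only [Fin.lt_def, and_true, true_and]
      omega
    · intro b _ hb
      apply if_neg
      rintro ⟨-, h2, -⟩
      exact hb (Fin.ext h2).symm
    · intro h; exact absurd (Finset.mem_univ _) h
  have hPW1 : (∑ i : Fin g, ∑ j : Fin g, (if (i:ℕ) < (j:ℕ) ∧ (σ j:ℕ) < (σ i:ℕ) then 1 else 0))
      = (∑ i : Fin g, ∑ j : Fin g, (if (i:ℕ) < (j:ℕ) ∧ (j:ℕ) < (σ j:ℕ) ∧ (σ j:ℕ) < (σ i:ℕ) then 1 else 0))
      + (∑ i : Fin g, ∑ j : Fin g, (if (i:ℕ) < (j:ℕ) ∧ (σ j:ℕ) = (j:ℕ) ∧ (j:ℕ) < (σ i:ℕ) then 1 else 0))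
      + (∑ i : Fin g, ∑ j : Fin g, (if (i:ℕ) < (j:ℕ) ∧ (σ j:ℕ) < (σ i:ℕ) ∧ (σ i:ℕ) < (i:ℕ) then 1 else 0))
      + (∑ i : Fin g, ∑ j : Fin g, (if (i:ℕ) < (j:ℕ) ∧ (j:ℕ) < (σ i:ℕ) ∧ (σ j:ℕ) < (j:ℕ) then 1 else 0))
      + (∑ i : Fin g, ∑ j : Fin g, (if (i:ℕ) < (j:ℕ) ∧ (σ i:ℕ) = (j:ℕ) ∧ (σ j:ℕ) < (j:ℕ) then 1 else 0))
      + (∑ i : Fin g, ∑ j : Fin g, (if (i:ℕ) < (j:ℕ) ∧ (σ j:ℕ) < (σ i:ℕ) ∧ (σ i:ℕ) < (j:ℕ) ∧ (i:ℕ) ≤ (σ i:ℕ) then 1 else 0)) := by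
    calc (∑ i : Fin g, ∑ j : Fin g, (if (i:ℕ) < (j:ℕ) ∧ (σ j:ℕ) < (σ i:ℕ) then 1 else 0))
        = ∑ i : Fin g, ∑ j : Fin g, ((if (i:ℕ) < (j:ℕ) ∧ (j:ℕ) < (σ j:ℕ) ∧ (σ j:ℕ) < (σ i:ℕ) then 1 else 0) + (if (i:ℕ) < (j:ℕ) ∧ (σ j:ℕ) = (j:ℕ) ∧ (j:ℕ) < (σ i:ℕ) then 1 else 0) + (if (i:ℕ) < (j:ℕ) ∧ (σ j:ℕ) < (σ i:ℕ) ∧ (σ i:ℕ) < (i:ℕ) then 1 else 0) + (if (i:ℕ) < (j:ℕ) ∧ (j:ℕ) < (σ i:ℕ) ∧ (σ j:ℕ) < (j:ℕ) then 1 else 0) + (if (i:ℕ) < (j:ℕ) ∧ (σ i:ℕ) = (j:ℕ) ∧ (σ j:ℕ) < (j:ℕ) then 1 else 0) + (if (i:ℕ) < (j:ℕ) ∧ (σ j:ℕ) < (σ i:ℕ) ∧ (σ i:ℕ) < (j:ℕ) ∧ (i:ℕ) ≤ (σ i:ℕ) then 1 else 0)) :=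
          Finset.sum_congr rfl fun i _ => Finset.sum_congr rfl fun j _ =>
            csz_pw1 (i:ℕ) (j:ℕ) (σ i:ℕ) (σ j:ℕ) (hd i j)
      _ = _ := by simp only [Finset.sum_add_distrib]

  have hPW2 : (∑ i : Fin g, ∑ j : Fin g, (if (i:ℕ) < (j:ℕ) ∧ (j:ℕ) < (σ j:ℕ) ∧ (j:ℕ) ≤ (σ i:ℕ) then 1 else 0))
      = (∑ i : Fin g, ∑ j : Fin g, (if (i:ℕ) < (j:ℕ) ∧ (j:ℕ) < (σ j:ℕ) ∧ (σ j:ℕ) < (σ i:ℕ) then 1 else 0))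
      + (∑ i : Fin g, ∑ j : Fin g, (if (i:ℕ) < (j:ℕ) ∧ (j:ℕ) < (σ i:ℕ) ∧ (σ i:ℕ) < (σ j:ℕ) then 1 else 0))
      + (∑ i : Fin g, ∑ j : Fin g, (if (i:ℕ) < (j:ℕ) ∧ (σ i:ℕ) = (j:ℕ) ∧ (j:ℕ) < (σ j:ℕ) then 1 else 0)) := by
    calc (∑ i : Fin g, ∑ j : Fin g, (if (i:ℕ) < (j:ℕ) ∧ (j:ℕ) < (σ j:ℕ) ∧ (j:ℕ) ≤ (σ i:ℕ) then 1 else 0))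
        = ∑ i : Fin g, ∑ j : Fin g, ((if (i:ℕ) < (j:ℕ) ∧ (j:ℕ) < (σ j:ℕ) ∧ (σ j:ℕ) < (σ i:ℕ) then 1 else 0) + (if (i:ℕ) < (j:ℕ) ∧ (j:ℕ) < (σ i:ℕ) ∧ (σ i:ℕ) < (σ j:ℕ) then 1 else 0) + (if (i:ℕ) < (j:ℕ) ∧ (σ i:ℕ) = (j:ℕ) ∧ (j:ℕ) < (σ j:ℕ) then 1 else 0)) :=
          Finset.sum_congr rfl fun i _ => Finset.sum_congr rfl fun j _ =>
            csz_pw2 (i:ℕ) (j:ℕ) (σ i:ℕ) (σ j:ℕ) (hd i j)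
      _ = _ := by simp only [Finset.sum_add_distrib]

  have hPW3 : (∑ i : Fin g, ∑ j : Fin g, (if (i:ℕ) < (j:ℕ) ∧ (σ i:ℕ) < (i:ℕ) ∧ (σ j:ℕ) ≤ (i:ℕ) then 1 else 0))
      = (∑ i : Fin g, ∑ j : Fin g, (if (i:ℕ) < (j:ℕ) ∧ (σ j:ℕ) < (σ i:ℕ) ∧ (σ i:ℕ) < (i:ℕ) then 1 else 0))
      + (∑ i : Fin g, ∑ j : Fin g, (if (i:ℕ) < (j:ℕ) ∧ (σ i:ℕ) < (σ j:ℕ) ∧ (σ j:ℕ) < (i:ℕ) then 1 else 0))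
      + (∑ i : Fin g, ∑ j : Fin g, (if (i:ℕ) < (j:ℕ) ∧ (σ j:ℕ) = (i:ℕ) ∧ (σ i:ℕ) < (i:ℕ) then 1 else 0)) := by
    calc (∑ i : Fin g, ∑ j : Fin g, (if (i:ℕ) < (j:ℕ) ∧ (σ i:ℕ) < (i:ℕ) ∧ (σ j:ℕ) ≤ (i:ℕ) then 1 else 0))
        = ∑ i : Fin g, ∑ j : Fin g, ((if (i:ℕ) < (j:ℕ) ∧ (σ j:ℕ) < (σ i:ℕ) ∧ (σ i:ℕ) < (i:ℕ) then 1 else 0) + (if (i:ℕ) < (j:ℕ) ∧ (σ i:ℕ) < (σ j:ℕ) ∧ (σ j:ℕ) < (i:ℕ) then 1 else 0) + (if (i:ℕ) < (j:ℕ) ∧ (σ j:ℕ) = (i:ℕ) ∧ (σ i:ℕ) < (i:ℕ) then 1 else 0)) :=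
          Finset.sum_congr rfl fun i _ => Finset.sum_congr rfl fun j _ =>
            csz_pw3 (i:ℕ) (j:ℕ) (σ i:ℕ) (σ j:ℕ) (hd i j)
      _ = _ := by simp only [Finset.sum_add_distrib]

  have hPW5 : (∑ i : Fin g, ∑ j : Fin g, (if (i:ℕ) < (j:ℕ) ∧ (σ i:ℕ) = (j:ℕ) then 1 else 0))
      = (∑ i : Fin g, ∑ j : Fin g, (if (i:ℕ) < (j:ℕ) ∧ (σ i:ℕ) = (j:ℕ) ∧ (σ j:ℕ) < (j:ℕ) then 1 else 0))
      + (∑ i : Fin g, ∑ j : Fin g, (if (i:ℕ) < (j:ℕ) ∧ (σ i:ℕ) = (j:ℕ) ∧ (j:ℕ) < (σ j:ℕ) then 1 else 0)) := by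
    calc (∑ i : Fin g, ∑ j : Fin g, (if (i:ℕ) < (j:ℕ) ∧ (σ i:ℕ) = (j:ℕ) then 1 else 0))
        = ∑ i : Fin g, ∑ j : Fin g, ((if (i:ℕ) < (j:ℕ) ∧ (σ i:ℕ) = (j:ℕ) ∧ (σ j:ℕ) < (j:ℕ) then 1 else 0) + (if (i:ℕ) < (j:ℕ) ∧ (σ i:ℕ) = (j:ℕ) ∧ (j:ℕ) < (σ j:ℕ) then 1 else 0)) :=
          Finset.sum_congr rfl fun i _ => Finset.sum_congr rfl fun j _ =>
            csz_pw5 (i:ℕ) (j:ℕ) (σ i:ℕ) (σ j:ℕ) (hd i j)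
      _ = _ := by simp only [Finset.sum_add_distrib]

  have hstar := csz_star σ
  rw [hL, hA, hB, hC, hA', hC', hexc, hdd]
  omega
end

section
/- For every positive integer g and every permutation σ of {1,…,g}, 2·ℓ(σ) ≥ 4·(A_σ + A_{σ⁻¹} + B_σ) + #{i ∈ {1,…,g} : σ(i) ≠ i}. -/
open Finset

section Aux
variable {g : ℕ}

private def cardP (P : Fin g × Fin g → Prop) [DecidablePred P] : ℕ :=
  (Finset.univ.filter P).card

private lemma cardP_sum (P : Fin g × Fin g → Prop) [DecidablePred P] :
    cardP P = ∑ p : Fin g × Fin g, if P p then 1 else 0 :=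
  Finset.card_filter _ _

private lemma cardP_fst (P : Fin g × Fin g → Prop) [DecidablePred P] :
    cardP P = ∑ a : Fin g, (Finset.univ.filter fun b => P (a, b)).card := by
  rw [cardP_sum, ← Finset.univ_product_univ, Finset.sum_product]
  exact Finset.sum_congr rfl fun a _ => (Finset.card_filter _ _).symm

private lemma cardP_snd (P : Fin g × Fin g → Prop) [DecidablePred P] :
    cardP P = ∑ b : Fin g, (Finset.univ.filter fun a => P (a, b)).card := by
  rw [cardP_sum, ← Finset.univ_product_univ, Finset.sum_product_right]
  exact Finset.sum_congr rfl fun a _ => (Finset.card_filter _ _).symm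

/-- The key "gap counting" lemma: for any `f`, the number of `x ≤ f` with `σ x > f`
equals the number of `x > f` with `σ x ≤ f`. -/
private lemma gap (σ : Equiv.Perm (Fin g)) (f : Fin g) :
    (Finset.univ.filter fun x => x ≤ f ∧ f < σ x).card
      = (Finset.univ.filter fun x => f < x ∧ σ x ≤ f).card := by
  have h1 : ∑ x : Fin g, (if σ x ≤ f then (1:ℕ) else 0)
      = ∑ x : Fin g, (if x ≤ f then (1:ℕ) else 0) :=
    Equiv.sum_comp σ (fun y => if y ≤ f then (1:ℕ) else 0)
  have e1 : ∑ x : Fin g, (if x ≤ f then (1:ℕ) else 0)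
      = ∑ x : Fin g, ((if x ≤ f ∧ f < σ x then (1:ℕ) else 0)
          + (if x ≤ f ∧ σ x ≤ f then (1:ℕ) else 0)) := by
    refine Finset.sum_congr rfl fun x _ => ?_
    simp only [Fin.le_def, Fin.lt_def]
    split_ifs <;> omega
  have e2 : ∑ x : Fin g, (if σ x ≤ f then (1:ℕ) else 0)
      = ∑ x : Fin g, ((if f < x ∧ σ x ≤ f then (1:ℕ) else 0)
          + (if x ≤ f ∧ σ x ≤ f then (1:ℕ) else 0)) := by
    refine Finset.sum_congr rfl fun x _ => ?_
    simp only [Fin.le_def, Fin.lt_def]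
    split_ifs <;> omega
  rw [Finset.sum_add_distrib] at e1 e2
  rw [Finset.card_filter, Finset.card_filter]
  omega

end Aux

section Main
variable {g : ℕ} (σ : Equiv.Perm (Fin g))

private lemma invCnt_eq : invCnt σ = cardP (fun p => p.1 < p.2 ∧ σ p.2 < σ p.1) := rfl

private lemma Acnt_eq : Acnt σ = cardP (fun p => p.1 < p.2 ∧ p.2 < σ p.2 ∧ σ p.2 < σ p.1) := rfl

private lemma Bcnt_eq : Bcnt σ = cardP (fun p => p.1 < p.2 ∧ σ p.2 = p.2 ∧ p.2 < σ p.1) := rfl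

/-- E1 : partition of inversions by the trichotomy on the first coordinate. -/
private lemma E1 :
    invCnt σ
      = cardP (fun p => (p.1 < p.2 ∧ σ p.2 < σ p.1) ∧ p.1 < σ p.1)
        + cardP (fun p => (p.1 < p.2 ∧ σ p.2 < σ p.1) ∧ σ p.1 < p.1)
        + cardP (fun p => (p.1 < p.2 ∧ σ p.2 < σ p.1) ∧ σ p.1 = p.1) := by
  rw [invCnt_eq]
  simp only [cardP_sum]
  rw [← Finset.sum_add_distrib, ← Finset.sum_add_distrib]
  refine Finset.sum_congr rfl fun p _ => ?_
  simp only [Fin.lt_def, Fin.ext_iff]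
  split_ifs <;> omega

/-- E2 : inversions with first coordinate a left-mover are the `A`-pairs of `σ⁻¹`. -/
private lemma E2 :
    cardP (fun p => (p.1 < p.2 ∧ σ p.2 < σ p.1) ∧ σ p.1 < p.1) = Acnt σ⁻¹ := by
  rw [cardP, Acnt]
  refine Finset.card_nbij' (fun p => (σ p.2, σ p.1)) (fun q => (σ⁻¹ q.2, σ⁻¹ q.1)) ?_ ?_ ?_ ?_ <;>
    intro p hp <;>
    simp only [Finset.mem_filter, Finset.mem_univ, true_and, Finset.mem_coe, Equiv.Perm.coe_inv,
      Equiv.symm_apply_apply, Equiv.apply_symm_apply] at hp ⊢ <;>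
    first
      | rfl
      | tauto
      | simp [Prod.ext_iff]

/-- E3 : inversions with fixed first coordinate are counted by `Bcnt`. -/
private lemma E3 :
    cardP (fun p => (p.1 < p.2 ∧ σ p.2 < σ p.1) ∧ σ p.1 = p.1) = Bcnt σ := by
  rw [Bcnt_eq, cardP_fst, cardP_snd]
  refine Finset.sum_congr rfl fun f _ => ?_
  by_cases hf : σ f = f
  · have l1 : (Finset.univ.filter fun b => (f < b ∧ σ b < σ f) ∧ σ f = f)
        = Finset.univ.filter fun x => f < x ∧ σ x ≤ f := by
      refine Finset.filter_congr fun b _ => ?_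
      constructor
      · rintro ⟨⟨h1, h2⟩, -⟩
        exact ⟨h1, le_of_lt (by rwa [hf] at h2)⟩
      · rintro ⟨h1, h2⟩
        refine ⟨⟨h1, ?_⟩, hf⟩
        rcases lt_or_eq_of_le h2 with h | h
        · rwa [hf]
        · exact absurd (σ.injective (h.trans hf.symm)) (ne_of_gt h1)
    have l2 : (Finset.univ.filter fun a => a < f ∧ σ f = f ∧ f < σ a)
        = Finset.univ.filter fun x => x ≤ f ∧ f < σ x := by
      refine Finset.filter_congr fun a _ => ?_
      constructor
      · rintro ⟨h1, -, h3⟩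
        exact ⟨le_of_lt h1, h3⟩
      · rintro ⟨h1, h2⟩
        refine ⟨h1.lt_of_ne fun h => ?_, hf, h2⟩
        rw [h, hf] at h2
        exact lt_irrefl f h2
    rw [l1, l2, gap]
  · have l1 : (Finset.univ.filter fun b => (f < b ∧ σ b < σ f) ∧ σ f = f) = ∅ := by
      refine Finset.filter_eq_empty_iff.2 fun b _ => ?_
      rintro ⟨-, h⟩; exact hf h
    have l2 : (Finset.univ.filter fun a => a < f ∧ σ f = f ∧ f < σ a) = ∅ := by
      refine Finset.filter_eq_empty_iff.2 fun a _ => ?_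
      rintro ⟨-, h, -⟩; exact hf h
    rw [l1, l2]

/-- pw1 : the basic double-counting identity (per first coordinate `r ∈ R`). -/
private lemma pw1 :
    cardP (fun p => p.1 < σ p.1 ∧ σ p.2 < σ p.1)
      + cardP (fun p => p.1 < σ p.1 ∧ p.2 < p.1 ∧ σ p.1 < σ p.2)
    = cardP (fun p => p.1 < σ p.1 ∧ p.2 < p.1)
      + cardP (fun p : Fin g × Fin g => (p.1 < p.2 ∧ σ p.2 < σ p.1) ∧ p.1 < σ p.1) := by
  simp only [cardP_sum]
  rw [← Finset.sum_add_distrib, ← Finset.sum_add_distrib]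
  refine Finset.sum_congr rfl fun p _ => ?_
  have hinj : σ p.2 = σ p.1 ↔ p.2 = p.1 := σ.injective.eq_iff
  simp only [Fin.lt_def, Fin.ext_iff] at hinj ⊢
  split_ifs <;> omega

/-- bijV : replace `σ p.2 < σ p.1` by `p.2 < σ p.1` via the bijection `p ↦ (p.1, σ p.2)`. -/
private lemma bijV :
    cardP (fun p => p.1 < σ p.1 ∧ σ p.2 < σ p.1)
      = cardP (fun p => p.1 < σ p.1 ∧ p.2 < σ p.1) := by
  rw [cardP, cardP]
  refine Finset.card_nbij' (fun p => (p.1, σ p.2)) (fun q => (q.1, σ⁻¹ q.2)) ?_ ?_ ?_ ?_ <;>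
    intro p hp <;>
    simp only [Finset.mem_filter, Finset.mem_univ, true_and, Finset.mem_coe, Equiv.Perm.coe_inv,
      Equiv.symm_apply_apply, Equiv.apply_symm_apply] at hp ⊢ <;>
    first
      | rfl
      | tauto
      | simp [Prod.ext_iff]

/-- pw2 : `{x < σ r} = {x < r} ⊔ {r ≤ x < σ r}` fiberwise. -/
private lemma pw2 :
    cardP (fun p => p.1 < σ p.1 ∧ p.2 < σ p.1)
      = cardP (fun p => p.1 < σ p.1 ∧ p.2 < p.1)
        + cardP (fun p : Fin g × Fin g => p.1 ≤ p.2 ∧ p.2 < σ p.1) := by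
  simp only [cardP_sum]
  rw [← Finset.sum_add_distrib]
  refine Finset.sum_congr rfl fun p _ => ?_
  simp only [Fin.lt_def, Fin.le_def]
  split_ifs <;> omega

/-- bijS2 : `S2` is `Acnt` with the two coordinates swapped. -/
private lemma bijS2 :
    cardP (fun p => p.1 < σ p.1 ∧ p.2 < p.1 ∧ σ p.1 < σ p.2) = Acnt σ := by
  rw [cardP, Acnt]
  refine Finset.card_nbij' (fun p => (p.2, p.1)) (fun q => (q.2, q.1)) ?_ ?_ ?_ ?_ <;>
    intro p hp <;>
    simp only [Finset.mem_filter, Finset.mem_univ, true_and, Finset.mem_coe] at hp ⊢ <;>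
    first
      | rfl
      | tauto
      | simp [Prod.ext_iff]

/-- M1 : `ℓ(σ) = D + A + A' + B`. -/
private lemma M1 :
    invCnt σ = cardP (fun p : Fin g × Fin g => p.1 ≤ p.2 ∧ p.2 < σ p.1)
      + Acnt σ + Acnt σ⁻¹ + Bcnt σ := by
  have h1 := E1 σ
  have h2 := E2 σ
  have h3 := E3 σ
  have h4 := pw1 σ
  have h5 := bijV σ
  have h6 := pw2 σ
  have h7 := bijS2 σ
  omega

/-- pw3 : fiberwise, the interval `[r, σ r)` contains `r`, the inner `A`-points,
the `B`-fixed points and the left-movers of `L`, all disjoint. -/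
private lemma pw3 :
    cardP (fun p => p.1 < σ p.1 ∧ p.2 = p.1)
      + Acnt σ + Bcnt σ
      + cardP (fun p => (p.1 < p.2 ∧ p.2 < σ p.1) ∧ σ p.2 < p.2)
    ≤ cardP (fun p : Fin g × Fin g => p.1 ≤ p.2 ∧ p.2 < σ p.1) := by
  rw [Acnt_eq, Bcnt_eq]
  simp only [cardP_sum]
  rw [← Finset.sum_add_distrib, ← Finset.sum_add_distrib, ← Finset.sum_add_distrib]
  refine Finset.sum_le_sum fun p _ => ?_
  simp only [Fin.lt_def, Fin.le_def, Fin.ext_iff]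
  split_ifs <;> omega

/-- bijdiag : the diagonal pairs are in bijection with `R`. -/
private lemma bijdiag :
    cardP (fun p => p.1 < σ p.1 ∧ p.2 = p.1)
      = (Finset.univ.filter fun i : Fin g => i < σ i).card := by
  rw [cardP]
  refine Finset.card_nbij' Prod.fst (fun i => (i, i)) ?_ ?_ ?_ ?_
  · intro p hp
    simp only [Finset.mem_filter, Finset.mem_univ, true_and, Finset.mem_coe] at hp ⊢
    exact hp.1
  · intro i hi
    simp only [Finset.mem_filter, Finset.mem_univ, true_and, Finset.mem_coe] at hi ⊢
    simp [hi]
  · intro p hp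
    simp only [Finset.mem_filter, Finset.mem_univ, true_and, Finset.mem_coe] at hp
    simp [Prod.ext_iff, hp.2]
  · intro i _
    rfl

/-- E6 : the `A'`-pairs inject into the left-mover pairs of `D`. -/
private lemma E6 :
    Acnt σ⁻¹ ≤ cardP (fun p => (p.1 < p.2 ∧ p.2 < σ p.1) ∧ σ p.2 < p.2) := by
  rw [← E2 σ, cardP_fst, cardP_snd]
  refine Finset.sum_le_sum fun e _ => ?_
  by_cases he : σ e < e
  · have s1 : (Finset.univ.filter fun b => (e < b ∧ σ b < σ e) ∧ σ e < e).card
        ≤ (Finset.univ.filter fun x => e < x ∧ σ x ≤ e).card := by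
      refine Finset.card_le_card fun b hb => ?_
      simp only [Finset.mem_filter, Finset.mem_univ, true_and] at hb ⊢
      exact ⟨hb.1.1, le_of_lt (hb.1.2.trans he)⟩
    have s2 : (Finset.univ.filter fun x => x ≤ e ∧ e < σ x)
        = Finset.univ.filter fun a => (a < e ∧ e < σ a) ∧ σ e < e := by
      refine Finset.filter_congr fun x _ => ?_
      constructor
      · rintro ⟨h1, h2⟩
        rcases lt_or_eq_of_le h1 with h | h
        · exact ⟨⟨h, h2⟩, he⟩
        · exact absurd (h ▸ h2) (not_lt_of_gt (h ▸ he))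
      · rintro ⟨⟨h1, h2⟩, -⟩
        exact ⟨le_of_lt h1, h2⟩
    calc (Finset.univ.filter fun b => (e < b ∧ σ b < σ e) ∧ σ e < e).card
        ≤ (Finset.univ.filter fun x => e < x ∧ σ x ≤ e).card := s1
      _ = (Finset.univ.filter fun x => x ≤ e ∧ e < σ x).card := (gap σ e).symm
      _ = (Finset.univ.filter fun a => (a < e ∧ e < σ a) ∧ σ e < e).card := by rw [s2]
  · have l1 : (Finset.univ.filter fun b => (e < b ∧ σ b < σ e) ∧ σ e < e) = ∅ := by
      refine Finset.filter_eq_empty_iff.2 fun b _ => ?_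
      rintro ⟨-, h⟩; exact he h
    rw [l1]
    exact Nat.zero_le _

/-- M2 : `D ≥ |R| + A + B + A'`. -/
private lemma M2 :
    (Finset.univ.filter fun i : Fin g => i < σ i).card + Acnt σ + Bcnt σ + Acnt σ⁻¹
      ≤ cardP (fun p : Fin g × Fin g => p.1 ≤ p.2 ∧ p.2 < σ p.1) := by
  have h1 := pw3 σ
  have h2 := bijdiag σ
  have h3 := E6 σ
  omega

/-- symmetry: `ℓ(σ⁻¹) = ℓ(σ)`. -/
private lemma inv_symm : invCnt σ⁻¹ = invCnt σ := by
  rw [invCnt, invCnt]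
  refine (Finset.card_nbij' (fun p : Fin g × Fin g => (σ p.2, σ p.1))
    (fun q => (σ⁻¹ q.2, σ⁻¹ q.1)) ?_ ?_ ?_ ?_).symm <;>
    intro p hp <;>
    simp only [Finset.mem_filter, Finset.mem_univ, true_and, Finset.mem_coe, Equiv.Perm.coe_inv,
      Equiv.symm_apply_apply, Equiv.apply_symm_apply] at hp ⊢ <;>
    first
      | rfl
      | tauto
      | simp [Prod.ext_iff]

/-- symmetry: `B(σ⁻¹) = B(σ)`. -/
private lemma B_symm : Bcnt σ⁻¹ = Bcnt σ := by
  rw [← E3 σ, Bcnt, cardP]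
  refine Finset.card_nbij' (fun p : Fin g × Fin g => (p.2, σ⁻¹ p.1)) (fun q => (σ q.2, q.1))
    ?_ ?_ ?_ ?_
  · intro p hp
    simp only [Finset.mem_filter, Finset.mem_univ, true_and, Finset.mem_coe, Equiv.Perm.coe_inv,
      Equiv.apply_symm_apply] at hp ⊢
    obtain ⟨h1, h2, h3⟩ := hp
    have h2' : σ p.2 = p.2 := by
      conv_lhs => rw [← h2]
      simp
    exact ⟨⟨h3, by rwa [h2']⟩, h2'⟩
  · intro q hq
    simp only [Finset.mem_filter, Finset.mem_univ, true_and, Finset.mem_coe, Equiv.Perm.coe_inv,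
      Equiv.symm_apply_apply] at hq ⊢
    obtain ⟨⟨h1, h2⟩, h3⟩ := hq
    have h3' : σ⁻¹ q.1 = q.1 := by
      conv_lhs => rw [← h3]
      simp
    exact ⟨by rwa [h3] at h2, h3', h1⟩
  · intro p _
    simp [Prod.ext_iff]
  · intro q _
    simp [Prod.ext_iff]

/-- symmetry: `|R(σ⁻¹)| = |L(σ)|`. -/
private lemma R_symm :
    (Finset.univ.filter fun i : Fin g => i < σ⁻¹ i).card
      = (Finset.univ.filter fun i : Fin g => σ i < i).card := by
  refine Finset.card_nbij' (fun i => σ⁻¹ i) (fun i => σ i) ?_ ?_ ?_ ?_ <;>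
    intro i hi <;>
    simp only [Finset.mem_filter, Finset.mem_univ, true_and, Finset.mem_coe, Equiv.Perm.coe_inv,
      Equiv.symm_apply_apply, Equiv.apply_symm_apply] at hi ⊢ <;>
    first
      | rfl
      | exact hi

/-- support splits into right- and left-movers. -/
private lemma supp_split :
    (Finset.univ.filter fun i : Fin g => σ i ≠ i).card
      = (Finset.univ.filter fun i : Fin g => i < σ i).card
        + (Finset.univ.filter fun i : Fin g => σ i < i).card := by
  rw [Finset.card_filter, Finset.card_filter, Finset.card_filter, ← Finset.sum_add_distrib]
  refine Finset.sum_congr rfl fun i _ => ?_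
  simp only [ne_eq, Fin.lt_def, Fin.ext_iff]
  split_ifs <;> omega

end Main

/-- `2ℓ(σ) ≥ 4(A_σ + A_{σ⁻¹} + B_σ) + #{i : σ(i) ≠ i}`. -/
theorem two_inv_ge (g : ℕ) (hg : 1 ≤ g) (σ : Equiv.Perm (Fin g)) :
    2 * invCnt σ ≥ 4 * (Acnt σ + Acnt σ⁻¹ + Bcnt σ)
      + (Finset.univ.filter (fun i : Fin g => σ i ≠ i)).card := by
  have m1 := M1 σ
  have m2 := M2 σ
  have m1' := M1 σ⁻¹
  have m2' := M2 σ⁻¹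
  rw [inv_inv] at m1' m2'
  rw [inv_symm σ, B_symm σ] at m1'
  rw [B_symm σ, R_symm σ] at m2'
  have hs := supp_split σ
  omega
end
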